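/- arXiv:2403.14907 — 9 statements merged into one kernel-verified Lean document; each statement's English description precedes it below -/
import Mathlib

section
/- Fix a, μ, L > 0, let χ_k* = ((μL² + k²π²)/(k²π²L²))·((k²π² + aL²)/μ) for each integer k ≥ 1, and let χ* = inf_{k ≥ 1} χ_k*. Then (1 + √(a/μ))² ≤ χ* ≤ (1 + √(a/μ))² + π²/(μL²) + aL²/π². -/
open Real Set

/-- The critical chemotaxis value `χ_k*`. -/
noncomputable def chiStar (a μ L : ℝ) (k : ℕ) : ℝ :=
  ((μ * L^2 + (k : ℝ)^2 * π^2) / ((k : ℝ)^2 * π^2 * L^2)) * (((k : ℝ)^2 * π^2 + a * L^2) / μ)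

theorem stmt_3 (a μ L : ℝ) (ha : 0 < a) (hμ : 0 < μ) (hL : 0 < L) :
    (1 + Real.sqrt (a / μ))^2 ≤ sInf {x : ℝ | ∃ k : ℕ, 1 ≤ k ∧ x = chiStar a μ L k} ∧
    sInf {x : ℝ | ∃ k : ℕ, 1 ≤ k ∧ x = chiStar a μ L k}
      ≤ (1 + Real.sqrt (a / μ))^2 + π^2 / (μ * L^2) + a * L^2 / π^2 := by
  have hπ := Real.pi_pos
  set s := Real.sqrt (a / μ) with hs
  have hs0 : 0 ≤ s := Real.sqrt_nonneg _
  have hs2 : s ^ 2 = a / μ := Real.sq_sqrt (by positivity)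
  have ha' : a = s ^ 2 * μ := by rw [hs2]; field_simp
  set S := {x : ℝ | ∃ k : ℕ, 1 ≤ k ∧ x = chiStar a μ L k} with hS
  have hmem : chiStar a μ L 1 ∈ S := ⟨1, le_refl 1, rfl⟩
  have hlb : ∀ x ∈ S, (1 + s) ^ 2 ≤ x := by
    rintro x ⟨k, hk, rfl⟩
    have hk' : (1 : ℝ) ≤ (k : ℝ) := by exact_mod_cast hk
    unfold chiStar
    rw [div_mul_div_comm, le_div_iff₀ (by positivity)]
    rw [ha']
    nlinarith [sq_nonneg ((k : ℝ) ^ 2 * π ^ 2 - s * μ * L ^ 2), sq_nonneg s,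
      mul_pos hμ (mul_pos (pow_pos hL 2) (pow_pos hπ 2)), sq_nonneg ((k:ℝ) - 1),
      mul_pos (pow_pos hπ 2) (pow_pos hL 2)]
  have hbdd : BddBelow S := ⟨(1 + s) ^ 2, hlb⟩
  refine ⟨le_csInf ⟨_, hmem⟩ hlb, ?_⟩
  have h1 : sInf S ≤ chiStar a μ L 1 := csInf_le hbdd hmem
  have hchi1 : chiStar a μ L 1 = 1 + a / μ + π ^ 2 / (μ * L ^ 2) + a * L ^ 2 / π ^ 2 := by
    unfold chiStar
    field_simp
    ring
  have h2 : 1 + a / μ ≤ (1 + s) ^ 2 := by nlinarith [hs2, hs0]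
  linarith
end

section
/- Fix a, μ, L > 0, let χ_k* = ((μL² + k²π²)/(k²π²L²))·((k²π² + aL²)/μ) for each integer k ≥ 1, let χ* = inf_{k ≥ 1} χ_k*, and let k_* = ⌊(L/π)(aμ)^{1/4}⌋. Then: if k_* = 0 then χ* = χ_1*; if k_* ≥ 1 and k_* = (L/π)(aμ)^{1/4} then χ* = χ_{k_*}*; and if k_* ≥ 1 and k_* ≠ (L/π)(aμ)^{1/4} then χ* = min(χ_{k_*}*, χ_{k_*+1}*). In particular the infimum χ* is attained at some positive integer. -/
open Real Set

lemma core_le (T s t : ℝ) (hs : 0 < s) (ht : 0 < t) (hst : s ≤ t) (hc : T^2 ≤ s*t) :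
    s + T^2/s ≤ t + T^2/t := by
  have hid : t + T^2/t - (s + T^2/s) = (t-s)*(s*t-T^2)/(s*t) := by
    field_simp; ring
  have h0 : 0 ≤ (t-s)*(s*t-T^2)/(s*t) :=
    div_nonneg (mul_nonneg (by linarith) (by linarith)) (by positivity)
  linarith

lemma core_ge (T s t : ℝ) (hs : 0 < s) (ht : 0 < t) (hst : s ≤ t) (hc : s*t ≤ T^2) :
    t + T^2/t ≤ s + T^2/s := by
  have hid : t + T^2/t - (s + T^2/s) = (t-s)*(s*t-T^2)/(s*t) := by
    field_simp; ring
  have h0 : (t-s)*(s*t-T^2)/(s*t) ≤ 0 :=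
    div_nonpos_of_nonpos_of_nonneg (mul_nonpos_of_nonneg_of_nonpos (by linarith) (by linarith)) (by positivity)
  linarith

lemma chi_eq (a μ L : ℝ) (ha : 0 < a) (hμ : 0 < μ) (hL : 0 < L) (k : ℕ) (hk : 1 ≤ k) :
    chiStar a μ L k =
      ((k:ℝ)^2*π^2 + (Real.sqrt (a*μ)*L^2)^2/((k:ℝ)^2*π^2) + (a+μ)*L^2)/(μ*L^2) := by
  have hk0 : (k:ℝ) ≠ 0 := by exact_mod_cast Nat.one_le_iff_ne_zero.mp hk
  have hπ : π ≠ 0 := Real.pi_ne_zero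
  have hT : (Real.sqrt (a*μ)*L^2)^2 = a*μ*L^4 := by
    rw [mul_pow, Real.sq_sqrt (by positivity)]; ring
  unfold chiStar
  rw [hT]
  field_simp
  ring

lemma chi_le (a μ L : ℝ) (ha : 0 < a) (hμ : 0 < μ) (hL : 0 < L) (k l : ℕ)
    (hk : 1 ≤ k) (hl : 1 ≤ l)
    (h : (k:ℝ)^2*π^2 + (Real.sqrt (a*μ)*L^2)^2/((k:ℝ)^2*π^2)
        ≤ (l:ℝ)^2*π^2 + (Real.sqrt (a*μ)*L^2)^2/((l:ℝ)^2*π^2)) :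
    chiStar a μ L k ≤ chiStar a μ L l := by
  rw [chi_eq a μ L ha hμ hL k hk, chi_eq a μ L ha hμ hL l hl]
  gcongr

lemma sq_pos_of_nat (k : ℕ) (hk : 1 ≤ k) : (0:ℝ) < (k:ℝ)^2*π^2 := by
  have hk0 : (0:ℝ) < (k:ℝ) := by exact_mod_cast hk
  positivity

theorem stmt_4 (a μ L : ℝ) (ha : 0 < a) (hμ : 0 < μ) (hL : 0 < L) :
    (Nat.floor ((L / π) * (a * μ) ^ ((1 : ℝ) / 4)) = 0 →
      sInf {x : ℝ | ∃ k : ℕ, 1 ≤ k ∧ x = chiStar a μ L k} = chiStar a μ L 1) ∧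
    (1 ≤ Nat.floor ((L / π) * (a * μ) ^ ((1 : ℝ) / 4)) →
      ((Nat.floor ((L / π) * (a * μ) ^ ((1 : ℝ) / 4)) : ℝ) = (L / π) * (a * μ) ^ ((1 : ℝ) / 4)) →
      sInf {x : ℝ | ∃ k : ℕ, 1 ≤ k ∧ x = chiStar a μ L k}
        = chiStar a μ L (Nat.floor ((L / π) * (a * μ) ^ ((1 : ℝ) / 4)))) ∧
    (1 ≤ Nat.floor ((L / π) * (a * μ) ^ ((1 : ℝ) / 4)) →
      ((Nat.floor ((L / π) * (a * μ) ^ ((1 : ℝ) / 4)) : ℝ) ≠ (L / π) * (a * μ) ^ ((1 : ℝ) / 4)) →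
      sInf {x : ℝ | ∃ k : ℕ, 1 ≤ k ∧ x = chiStar a μ L k}
        = min (chiStar a μ L (Nat.floor ((L / π) * (a * μ) ^ ((1 : ℝ) / 4))))
              (chiStar a μ L (Nat.floor ((L / π) * (a * μ) ^ ((1 : ℝ) / 4)) + 1))) ∧
    (∃ k : ℕ, 1 ≤ k ∧
      sInf {x : ℝ | ∃ k' : ℕ, 1 ≤ k' ∧ x = chiStar a μ L k'} = chiStar a μ L k) := by
  set r : ℝ := (L / π) * (a * μ) ^ ((1 : ℝ) / 4) with hr_def
  set T : ℝ := Real.sqrt (a*μ) * L^2 with hT_def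
  have hπ : (0:ℝ) < π := Real.pi_pos
  have hr0 : 0 ≤ r := by
    have : (0:ℝ) ≤ (a*μ) ^ ((1:ℝ)/4) := Real.rpow_nonneg (by positivity) _
    positivity
  have hrT : (r*π)^2 = T := by
    have h1 : r * π = L * (a*μ) ^ ((1:ℝ)/4) := by
      rw [hr_def]; field_simp
    rw [h1, mul_pow]
    have h2 : ((a*μ) ^ ((1:ℝ)/4))^2 = Real.sqrt (a*μ) := by
      rw [← Real.rpow_natCast ((a*μ) ^ ((1:ℝ)/4)) 2, ← Real.rpow_mul (by positivity)]
      rw [Real.sqrt_eq_rpow]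
      norm_num
    rw [h2, hT_def]; ring
  -- monotone: if r ≤ k ≤ l then chi k ≤ chi l
  have mono : ∀ k l : ℕ, 1 ≤ k → k ≤ l → r ≤ (k:ℝ) → chiStar a μ L k ≤ chiStar a μ L l := by
    intro k l hk hkl hrk
    have hl : 1 ≤ l := hk.trans hkl
    apply chi_le a μ L ha hμ hL k l hk hl
    have hs := sq_pos_of_nat k hk
    have ht := sq_pos_of_nat l hl
    have hst : (k:ℝ)^2*π^2 ≤ (l:ℝ)^2*π^2 := by
      have hkl' : (k:ℝ) ≤ l := by exact_mod_cast hkl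
      have hk0 : (0:ℝ) ≤ (k:ℝ) := by positivity
      exact mul_le_mul_of_nonneg_right (pow_le_pow_left₀ hk0 hkl' 2) (sq_nonneg π)
    have hTk : T ≤ (k:ℝ)^2*π^2 := by
      rw [← hrT]
      have hrk' : r*π ≤ (k:ℝ)*π := mul_le_mul_of_nonneg_right hrk hπ.le
      calc (r*π)^2 ≤ ((k:ℝ)*π)^2 := pow_le_pow_left₀ (by positivity) hrk' 2
        _ = (k:ℝ)^2*π^2 := by ring
    have hc : T^2 ≤ ((k:ℝ)^2*π^2) * ((l:ℝ)^2*π^2) := by nlinarith [hrT ▸ sq_nonneg (r*π)]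
    exact core_le T _ _ hs ht hst hc
  -- antitone: if k ≤ l ≤ r then chi l ≤ chi k
  have anti : ∀ k l : ℕ, 1 ≤ k → k ≤ l → (l:ℝ) ≤ r → chiStar a μ L l ≤ chiStar a μ L k := by
    intro k l hk hkl hlr
    have hl : 1 ≤ l := hk.trans hkl
    apply chi_le a μ L ha hμ hL l k hl hk
    have hs := sq_pos_of_nat k hk
    have ht := sq_pos_of_nat l hl
    have hst : (k:ℝ)^2*π^2 ≤ (l:ℝ)^2*π^2 := by
      have hkl' : (k:ℝ) ≤ l := by exact_mod_cast hkl
      have hk0 : (0:ℝ) ≤ (k:ℝ) := by positivity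
      exact mul_le_mul_of_nonneg_right (pow_le_pow_left₀ hk0 hkl' 2) (sq_nonneg π)
    have hTl : (l:ℝ)^2*π^2 ≤ T := by
      rw [← hrT]
      have hl0 : (0:ℝ) ≤ (l:ℝ) := by positivity
      have hlr' : (l:ℝ)*π ≤ r*π := mul_le_mul_of_nonneg_right hlr hπ.le
      calc (l:ℝ)^2*π^2 = ((l:ℝ)*π)^2 := by ring
        _ ≤ (r*π)^2 := pow_le_pow_left₀ (by positivity) hlr' 2
    have hc : ((k:ℝ)^2*π^2) * ((l:ℝ)^2*π^2) ≤ T^2 := by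
      nlinarith
    exact core_ge T _ _ hs ht hst hc
  -- sInf characterization
  have sInf_eq : ∀ v : ℝ, (∃ k : ℕ, 1 ≤ k ∧ v = chiStar a μ L k) →
      (∀ k : ℕ, 1 ≤ k → v ≤ chiStar a μ L k) →
      sInf {x : ℝ | ∃ k : ℕ, 1 ≤ k ∧ x = chiStar a μ L k} = v := by
    intro v hv hmin
    apply le_antisymm
    · apply csInf_le
      · exact ⟨v, fun x ⟨k, hk, hx⟩ => hx ▸ hmin k hk⟩
      · exact hv
    · apply le_csInf ⟨v, hv⟩
      rintro x ⟨k, hk, rfl⟩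
      exact hmin k hk
  have hfloor_le : (Nat.floor r : ℝ) ≤ r := Nat.floor_le hr0
  have hlt_floor : r < (Nat.floor r : ℝ) + 1 := Nat.lt_floor_add_one r
  refine ⟨?_, ?_, ?_, ?_⟩
  · -- case floor = 0
    intro h0
    apply sInf_eq _ ⟨1, le_refl 1, rfl⟩
    intro k hk
    have hr1 : r < 1 := by
      have := hlt_floor; rw [h0] at this; simpa using this
    apply mono 1 k (le_refl 1) hk
    simp; linarith
  · -- case floor ≥ 1 and floor = r
    intro h1 heq
    apply sInf_eq _ ⟨Nat.floor r, h1, rfl⟩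
    intro k hk
    rcases le_or_gt k (Nat.floor r) with hle | hgt
    · exact anti k (Nat.floor r) hk hle heq.le
    · exact mono (Nat.floor r) k h1 hgt.le heq.ge
  · -- case floor ≥ 1 and floor ≠ r
    intro h1 _
    apply sInf_eq
    · rcases le_total (chiStar a μ L (Nat.floor r)) (chiStar a μ L (Nat.floor r + 1)) with h | h
      · exact ⟨Nat.floor r, h1, min_eq_left h⟩
      · exact ⟨Nat.floor r + 1, by omega, min_eq_right h⟩
    · intro k hk
      rcases le_or_gt k (Nat.floor r) with hle | hgt
      · exact (min_le_left _ _).trans (anti k (Nat.floor r) hk hle hfloor_le)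
      · refine (min_le_right _ _).trans (mono (Nat.floor r + 1) k (by omega) hgt ?_)
        push_cast
        linarith
  · -- existence
    rcases Nat.eq_zero_or_pos (Nat.floor r) with h0 | h1
    · refine ⟨1, le_refl 1, ?_⟩
      apply sInf_eq _ ⟨1, le_refl 1, rfl⟩
      intro k hk
      have hr1 : r < 1 := by
        have := hlt_floor; rw [h0] at this; simpa using this
      apply mono 1 k (le_refl 1) hk
      simp; linarith
    · have hlb : ∀ k : ℕ, 1 ≤ k →
          min (chiStar a μ L (Nat.floor r)) (chiStar a μ L (Nat.floor r + 1)) ≤ chiStar a μ L k := by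
        intro k hk
        rcases le_or_gt k (Nat.floor r) with hle | hgt
        · exact (min_le_left _ _).trans (anti k (Nat.floor r) hk hle hfloor_le)
        · refine (min_le_right _ _).trans (mono (Nat.floor r + 1) k (by omega) hgt ?_)
          push_cast
          linarith
      rcases le_total (chiStar a μ L (Nat.floor r)) (chiStar a μ L (Nat.floor r + 1)) with h | h
      · refine ⟨Nat.floor r, h1, ?_⟩
        apply sInf_eq _ ⟨Nat.floor r, h1, rfl⟩
        intro k hk
        have := hlb k hk
        rw [min_eq_left h] at this
        exact this
      · refine ⟨Nat.floor r + 1, by omega, ?_⟩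
        apply sInf_eq _ ⟨Nat.floor r + 1, by omega, rfl⟩
        intro k hk
        have := hlb k hk
        rw [min_eq_right h] at this
        exact this
end

section
/- Let (u, v) be a non-constant positive stationary solution of the chemotaxis system. Then |v'(x)| ≤ √μ · v(x) for all x ∈ [0, L]. -/
open Real Set MeasureTheory Filter

/-- `(u, v)` is a positive stationary solution of the parabolic-elliptic chemotaxis system
with singular sensitivity and logistic source on `[0, L]`, with Neumann boundary
conditions. -/
def IsStatSol (χ a b μ ν L : ℝ) (u v : ℝ → ℝ) : Prop :=
  ContDiff ℝ 2 u ∧ ContDiff ℝ 2 v ∧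
  (∀ x ∈ Icc (0 : ℝ) L, 0 < u x) ∧ (∀ x ∈ Icc (0 : ℝ) L, 0 < v x) ∧
  (∀ x ∈ Ioo (0 : ℝ) L,
    deriv (deriv u) x - χ * deriv (fun y => u y * deriv v y / v y) x
      + u x * (a - b * u x) = 0) ∧
  (∀ x ∈ Ioo (0 : ℝ) L, deriv (deriv v) x - μ * v x + ν * u x = 0) ∧
  deriv u 0 = 0 ∧ deriv u L = 0 ∧ deriv v 0 = 0 ∧ deriv v L = 0

/-- `u` is non-constant on `[0, L]`. -/
def NonConst (L : ℝ) (u : ℝ → ℝ) : Prop :=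
  ¬ ∃ c : ℝ, ∀ x ∈ Icc (0 : ℝ) L, u x = c

theorem stmt_5 (χ a b μ ν L : ℝ) (hχ : 0 < χ) (ha : 0 < a) (hb : 0 < b)
    (hμ : 0 < μ) (hν : 0 < ν) (hL : 0 < L)
    (u v : ℝ → ℝ) (hsol : IsStatSol χ a b μ ν L u v) (hnc : NonConst L u) :
    ∀ x ∈ Icc (0 : ℝ) L, |deriv v x| ≤ Real.sqrt μ * v x := by
  obtain ⟨hu, hv, hupos, hvpos, _, hveq, _, _, hv0, hvL⟩ := hsol
  set c := Real.sqrt μ with hc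
  have hc0 : 0 ≤ c := Real.sqrt_nonneg μ
  have hc2 : c * c = μ := Real.mul_self_sqrt hμ.le
  have hvd : Differentiable ℝ v := hv.differentiable (by norm_num)
  have hv' : ContDiff ℝ 1 (deriv v) := by
    have h2 : ContDiff ℝ (1 + 1) v := by norm_num; exact hv
    exact (contDiff_succ_iff_deriv.mp h2).2.2
  have hv'd : Differentiable ℝ (deriv v) := hv'.differentiable one_ne_zero
  -- second derivative identity on the interior
  have key : ∀ x ∈ Ioo (0 : ℝ) L, deriv (deriv v) x - μ * v x ≤ 0 := by
    intro x hx
    have := hveq x hx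
    have hu' : 0 < u x := hupos x (Ioo_subset_Icc_self hx)
    nlinarith
  -- F x = exp (c * x) * (deriv v x - c * v x)
  have hFderiv : ∀ x : ℝ, HasDerivAt (fun y => Real.exp (c * y) * (deriv v y - c * v y))
      (Real.exp (c * x) * (deriv (deriv v) x - μ * v x)) x := by
    intro x
    have h1 : HasDerivAt (fun y => Real.exp (c * y)) (Real.exp (c * x) * c) x := by
      simpa using ((hasDerivAt_id x).const_mul c).exp
    have h2 : HasDerivAt (fun y => deriv v y - c * v y)
        (deriv (deriv v) x - c * deriv v x) x :=
      ((hv'd x).hasDerivAt).sub ((hvd x).hasDerivAt.const_mul c)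
    have := h1.mul h2
    refine this.congr_deriv ?_
    rw [← hc2]; ring
  -- G x = exp (-c * x) * (deriv v x + c * v x)
  have hGderiv : ∀ x : ℝ, HasDerivAt (fun y => Real.exp (-c * y) * (deriv v y + c * v y))
      (Real.exp (-c * x) * (deriv (deriv v) x - μ * v x)) x := by
    intro x
    have h1 : HasDerivAt (fun y => Real.exp (-c * y)) (Real.exp (-c * x) * (-c)) x := by
      simpa using ((hasDerivAt_id x).const_mul (-c)).exp
    have h2 : HasDerivAt (fun y => deriv v y + c * v y)
        (deriv (deriv v) x + c * deriv v x) x :=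
      ((hv'd x).hasDerivAt).add ((hvd x).hasDerivAt.const_mul c)
    have := h1.mul h2
    refine this.congr_deriv ?_
    rw [← hc2]; ring
  have hint : interior (Icc (0 : ℝ) L) = Ioo 0 L := interior_Icc
  have hFanti : AntitoneOn (fun y => Real.exp (c * y) * (deriv v y - c * v y)) (Icc 0 L) := by
    apply antitoneOn_of_deriv_nonpos (convex_Icc 0 L)
    · exact (Continuous.mul (Real.continuous_exp.comp (continuous_const.mul continuous_id))
        ((hv'.continuous).sub (continuous_const.mul hvd.continuous))).continuousOn
    · intro x hx
      exact (hFderiv x).differentiableAt.differentiableWithinAt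
    · intro x hx
      rw [hint] at hx
      rw [(hFderiv x).deriv]
      have := key x hx
      have := Real.exp_pos (c * x)
      nlinarith
  have hGanti : AntitoneOn (fun y => Real.exp (-c * y) * (deriv v y + c * v y)) (Icc 0 L) := by
    apply antitoneOn_of_deriv_nonpos (convex_Icc 0 L)
    · exact (Continuous.mul (Real.continuous_exp.comp (continuous_const.mul continuous_id))
        ((hv'.continuous).add (continuous_const.mul hvd.continuous))).continuousOn
    · intro x hx
      exact (hGderiv x).differentiableAt.differentiableWithinAt
    · intro x hx
      rw [hint] at hx
      rw [(hGderiv x).deriv]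
      have := key x hx
      have := Real.exp_pos (-c * x)
      nlinarith
  intro x hx
  have h0mem : (0 : ℝ) ∈ Icc (0 : ℝ) L := ⟨le_rfl, hL.le⟩
  have hLmem : L ∈ Icc (0 : ℝ) L := ⟨hL.le, le_rfl⟩
  have hv0pos : 0 < v 0 := hvpos 0 h0mem
  have hvLpos : 0 < v L := hvpos L hLmem
  have hF := hFanti h0mem hx hx.1
  have hG := hGanti hx hLmem hx.2
  simp only [hv0, hvL, mul_zero, zero_sub, zero_add] at hF hG
  have hex : 0 < Real.exp (c * x) := Real.exp_pos _
  have hex' : 0 < Real.exp (-c * x) := Real.exp_pos _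
  have h1 : deriv v x - c * v x ≤ 0 := by
    have hle : Real.exp (c * x) * (deriv v x - c * v x) ≤ 0 := by
      refine hF.trans ?_
      rw [Real.exp_zero]
      nlinarith
    nlinarith
  have h2 : 0 ≤ deriv v x + c * v x := by
    have hge : 0 ≤ Real.exp (-c * x) * (deriv v x + c * v x) := by
      refine le_trans ?_ hG
      have := Real.exp_pos (-c * L)
      positivity
    nlinarith
  rw [abs_le]
  constructor <;> linarith
end

section
/- There exists a constant δ* > 0, depending only on μ, ν and L (and in particular independent of χ and of the particular solution), such that every non-constant positive stationary solution (u, v) of the chemotaxis system satisfies v(x) ≥ δ* · ∫₀^L u(y) dy for all x ∈ [0, L]. -/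
open Real Set MeasureTheory Filter

lemma aux_deriv_facts (v : ℝ → ℝ) (h : ContDiff ℝ 2 v) :
    Differentiable ℝ v ∧ Differentiable ℝ (deriv v) ∧ Continuous (deriv v) ∧
      Continuous (deriv (deriv v)) := by
  have h2 : ContDiff ℝ ((1:ℕ)+1) v := by exact_mod_cast h
  rw [contDiff_succ_iff_deriv] at h2
  have h3 : ContDiff ℝ ((0:ℕ)+1) (deriv v) := by exact_mod_cast h2.2.2
  rw [contDiff_succ_iff_deriv] at h3
  have h4 : ContDiff ℝ 0 (deriv (deriv v)) := by exact_mod_cast h3.2.2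
  exact ⟨h2.1, h3.1, h3.1.continuous, h4.continuous⟩

/-- Harnack-type estimate: `v y ≤ exp (√μ L) * v x` for all `x y ∈ [0,L]`. -/
lemma harnack (μ ν L : ℝ) (hμ : 0 < μ) (hν : 0 < ν) (hL : 0 < L)
    (u v : ℝ → ℝ) (hv2 : ContDiff ℝ 2 v)
    (hupos : ∀ x ∈ Icc (0:ℝ) L, 0 < u x) (hvpos : ∀ x ∈ Icc (0:ℝ) L, 0 < v x)
    (hode : ∀ x ∈ Ioo (0:ℝ) L, deriv (deriv v) x - μ * v x + ν * u x = 0)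
    (hv0 : deriv v 0 = 0) (hvL : deriv v L = 0) :
    ∀ x ∈ Icc (0:ℝ) L, ∀ y ∈ Icc (0:ℝ) L, v y ≤ Real.exp (Real.sqrt μ * L) * v x := by
  obtain ⟨hvd, hd2, hdc, _⟩ := aux_deriv_facts v hv2
  set s := Real.sqrt μ with hs_def
  have hs : 0 < s := Real.sqrt_pos.mpr hμ
  have hsq : s ^ 2 = μ := Real.sq_sqrt hμ.le
  -- derivative of w = v'/v is negative at interior points where (v')² ≥ μ v²
  have hw : ∀ t ∈ Ioo (0:ℝ) L, μ * (v t)^2 ≤ (deriv v t)^2 →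
      deriv (fun x => deriv v x / v x) t < 0 := by
    intro t ht hsqle
    have htI : t ∈ Icc (0:ℝ) L := Ioo_subset_Icc_self ht
    have hvt := hvpos t htI
    have hut := hupos t htI
    have hder : HasDerivAt (fun x => deriv v x / v x)
        ((deriv (deriv v) t * v t - deriv v t * deriv v t) / v t ^ 2) t :=
      ((hd2 t).hasDerivAt).div ((hvd t).hasDerivAt) hvt.ne'
    rw [hder.deriv]
    have hode' := hode t ht
    have hnum : deriv (deriv v) t * v t - deriv v t * deriv v t < 0 := by
      have hE : deriv (deriv v) t = μ * v t - ν * u t := by linarith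
      rw [hE]
      nlinarith [mul_pos (mul_pos hν hut) hvt]
    exact div_neg_of_neg_of_pos hnum (by positivity)
  -- Claim A : v' ≤ s v on [0,L]
  have hA : ∀ x ∈ Icc (0:ℝ) L, deriv v x ≤ s * v x := by
    by_contra hcon
    push_neg at hcon
    obtain ⟨x₁, hx₁, hgt⟩ := hcon
    have hv₁ := hvpos x₁ hx₁
    have hx₁0 : x₁ ≠ 0 := by
      intro h
      rw [h, hv0] at hgt
      have := hvpos 0 (left_mem_Icc.mpr hL.le)
      nlinarith
    have hx₁L : x₁ ≠ L := by
      intro h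
      rw [h, hvL] at hgt
      have := hvpos L (right_mem_Icc.mpr hL.le)
      nlinarith
    have hx₁Lt : x₁ < L := lt_of_le_of_ne hx₁.2 hx₁L
    set K := Icc (0:ℝ) x₁ ∩ {x | deriv v x ≤ s * v x} with hKdef
    have hKclosed : IsClosed K :=
      isClosed_Icc.inter (isClosed_le hdc (continuous_const.mul hv2.continuous))
    have hK0 : (0:ℝ) ∈ K := by
      refine ⟨⟨le_rfl, hx₁.1⟩, ?_⟩
      simp only [mem_setOf_eq, hv0]
      have := hvpos 0 (left_mem_Icc.mpr hL.le)
      positivity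
    have hbdd : BddAbove K := BddAbove.mono inter_subset_left bddAbove_Icc
    have hx₂mem := hKclosed.csSup_mem ⟨0, hK0⟩ hbdd
    set x₂ := sSup K with hx₂def
    obtain ⟨⟨hx₂0, hx₂le⟩, hx₂ineq⟩ := hx₂mem
    simp only [mem_setOf_eq] at hx₂ineq
    have hx₂lt : x₂ < x₁ := by
      rcases lt_or_eq_of_le hx₂le with h | h
      · exact h
      · exfalso; rw [h] at hx₂ineq; exact absurd hx₂ineq (not_le.mpr hgt)
    have hIccsub : Icc x₂ x₁ ⊆ Icc (0:ℝ) L :=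
      fun t ht => ⟨le_trans hx₂0 ht.1, le_trans ht.2 hx₁.2⟩
    have hgt' : ∀ t ∈ Ioc x₂ x₁, s * v t < deriv v t := by
      intro t ht
      by_contra hle
      push_neg at hle
      have htK : t ∈ K := ⟨⟨le_trans hx₂0 ht.1.le, ht.2⟩, hle⟩
      exact absurd (le_csSup hbdd htK) (not_le.mpr ht.1)
    have hsub : Ioc x₂ x₁ ⊆ Ioo (0:ℝ) L :=
      fun t ht => ⟨lt_of_le_of_lt hx₂0 ht.1, lt_of_le_of_lt ht.2 hx₁Lt⟩
    have hanti : StrictAntiOn (fun x => deriv v x / v x) (Icc x₂ x₁) := by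
      apply strictAntiOn_of_deriv_neg (convex_Icc _ _)
      · exact ContinuousOn.div hdc.continuousOn hv2.continuous.continuousOn
          (fun t ht => (hvpos t (hIccsub ht)).ne')
      · intro t ht
        rw [interior_Icc] at ht
        have htIoc : t ∈ Ioc x₂ x₁ := ⟨ht.1, ht.2.le⟩
        apply hw t (hsub htIoc)
        have h1 := hgt' t htIoc
        have hvt := hvpos t (hIccsub (Ioc_subset_Icc_self htIoc))
        have hsv : 0 < s * v t := mul_pos hs hvt
        nlinarith
    have hlt := hanti (left_mem_Icc.mpr hx₂lt.le) (right_mem_Icc.mpr hx₂lt.le) hx₂lt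
    simp only at hlt
    have hv₂ := hvpos x₂ (hIccsub (left_mem_Icc.mpr hx₂lt.le))
    have hw2 : deriv v x₂ / v x₂ ≤ s := (div_le_iff₀ hv₂).mpr (by linarith [hx₂ineq])
    have hw1 : s < deriv v x₁ / v x₁ := (lt_div_iff₀ hv₁).mpr (by linarith)
    linarith
  -- Claim B : -(s v) ≤ v' on [0,L]
  have hB : ∀ x ∈ Icc (0:ℝ) L, -(s * v x) ≤ deriv v x := by
    by_contra hcon
    push_neg at hcon
    obtain ⟨x₁, hx₁, hgt⟩ := hcon
    have hv₁ := hvpos x₁ hx₁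
    have hx₁0 : x₁ ≠ 0 := by
      intro h
      rw [h, hv0] at hgt
      have := hvpos 0 (left_mem_Icc.mpr hL.le)
      nlinarith
    have hx₁L : x₁ ≠ L := by
      intro h
      rw [h, hvL] at hgt
      have := hvpos L (right_mem_Icc.mpr hL.le)
      nlinarith
    have hx₁gt : 0 < x₁ := lt_of_le_of_ne hx₁.1 (Ne.symm hx₁0)
    set K := Icc x₁ L ∩ {x | -(s * v x) ≤ deriv v x} with hKdef
    have hKclosed : IsClosed K :=
      isClosed_Icc.inter (isClosed_le ((continuous_const.mul hv2.continuous).neg) hdc)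
    have hKL : L ∈ K := by
      refine ⟨⟨hx₁.2, le_rfl⟩, ?_⟩
      simp only [mem_setOf_eq, hvL]
      have := hvpos L (right_mem_Icc.mpr hL.le)
      nlinarith
    have hbdd : BddBelow K := BddBelow.mono inter_subset_left bddBelow_Icc
    have hx₂mem := hKclosed.csInf_mem ⟨L, hKL⟩ hbdd
    set x₂ := sInf K with hx₂def
    obtain ⟨⟨hx₂ge, hx₂L⟩, hx₂ineq⟩ := hx₂mem
    simp only [mem_setOf_eq] at hx₂ineq
    have hx₂gt : x₁ < x₂ := by
      rcases lt_or_eq_of_le hx₂ge with h | h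
      · exact h
      · exfalso; rw [← h] at hx₂ineq; exact absurd hx₂ineq (not_le.mpr hgt)
    have hIccsub : Icc x₁ x₂ ⊆ Icc (0:ℝ) L :=
      fun t ht => ⟨le_trans hx₁.1 ht.1, le_trans ht.2 hx₂L⟩
    have hgt' : ∀ t ∈ Ico x₁ x₂, deriv v t < -(s * v t) := by
      intro t ht
      by_contra hle
      push_neg at hle
      have htK : t ∈ K := ⟨⟨ht.1, le_trans ht.2.le hx₂L⟩, hle⟩
      exact absurd (csInf_le hbdd htK) (not_le.mpr ht.2)
    have hsub : Ico x₁ x₂ ⊆ Ioo (0:ℝ) L :=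
      fun t ht => ⟨lt_of_lt_of_le hx₁gt ht.1, lt_of_lt_of_le ht.2 hx₂L⟩
    have hanti : StrictAntiOn (fun x => deriv v x / v x) (Icc x₁ x₂) := by
      apply strictAntiOn_of_deriv_neg (convex_Icc _ _)
      · exact ContinuousOn.div hdc.continuousOn hv2.continuous.continuousOn
          (fun t ht => (hvpos t (hIccsub ht)).ne')
      · intro t ht
        rw [interior_Icc] at ht
        have htIco : t ∈ Ico x₁ x₂ := ⟨ht.1.le, ht.2⟩
        apply hw t (hsub htIco)
        have h1 := hgt' t htIco
        have hvt := hvpos t (hIccsub (Ico_subset_Icc_self htIco))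
        have hsv : 0 < s * v t := mul_pos hs hvt
        nlinarith
    have hlt := hanti (left_mem_Icc.mpr hx₂gt.le) (right_mem_Icc.mpr hx₂gt.le) hx₂gt
    simp only at hlt
    have hv₂ := hvpos x₂ (hIccsub (right_mem_Icc.mpr hx₂gt.le))
    have hw2 : -s ≤ deriv v x₂ / v x₂ := (le_div_iff₀ hv₂).mpr (by linarith [hx₂ineq])
    have hw1 : deriv v x₁ / v x₁ < -s := (div_lt_iff₀ hv₁).mpr (by linarith)
    linarith
  -- monotone comparison functions
  have hexp1 : Differentiable ℝ (fun y : ℝ => Real.exp (s * y)) :=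
    Real.differentiable_exp.comp (differentiable_id.const_mul s)
  have hexp2 : Differentiable ℝ (fun y : ℝ => Real.exp (-(s * y))) :=
    Real.differentiable_exp.comp ((differentiable_id.const_mul s).neg)
  have hmono : MonotoneOn (fun y => v y * Real.exp (s * y)) (Icc (0:ℝ) L) := by
    apply monotoneOn_of_deriv_nonneg (convex_Icc _ _)
    · exact (hv2.continuous.mul hexp1.continuous).continuousOn
    · exact (hvd.mul hexp1).differentiableOn
    · intro t ht
      rw [interior_Icc] at ht
      have hlin : HasDerivAt (fun y : ℝ => s * y) s t := by
        simpa using (hasDerivAt_id t).const_mul s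
      have hder : HasDerivAt (fun y => v y * Real.exp (s * y))
          (deriv v t * Real.exp (s * t) + v t * (Real.exp (s * t) * s)) t :=
        (hvd t).hasDerivAt.mul hlin.exp
      rw [hder.deriv]
      have hBt := hB t (Ioo_subset_Icc_self ht)
      have he : 0 < Real.exp (s * t) := Real.exp_pos _
      nlinarith
  have hanti2 : AntitoneOn (fun y => v y * Real.exp (-(s * y))) (Icc (0:ℝ) L) := by
    apply antitoneOn_of_deriv_nonpos (convex_Icc _ _)
    · exact (hv2.continuous.mul hexp2.continuous).continuousOn
    · exact (hvd.mul hexp2).differentiableOn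
    · intro t ht
      rw [interior_Icc] at ht
      have hlin : HasDerivAt (fun y : ℝ => -(s * y)) (-s) t := by
        simpa [Pi.neg_def] using ((hasDerivAt_id t).const_mul s).neg
      have hder : HasDerivAt (fun y => v y * Real.exp (-(s * y)))
          (deriv v t * Real.exp (-(s * t)) + v t * (Real.exp (-(s * t)) * (-s))) t :=
        (hvd t).hasDerivAt.mul hlin.exp
      rw [hder.deriv]
      have hAt := hA t (Ioo_subset_Icc_self ht)
      have he : 0 < Real.exp (-(s * t)) := Real.exp_pos _
      nlinarith
  -- combine
  intro x hx y hy
  have hvx := hvpos x hx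
  have hvy := hvpos y hy
  have key : v y ≤ v x * Real.exp (s * L) := by
    rcases le_total y x with hyx | hxy
    · have h1 := hmono hy hx hyx
      simp only at h1
      have h2 : (1:ℝ) ≤ Real.exp (s * y) := Real.one_le_exp (mul_nonneg hs.le hy.1)
      have h3 : Real.exp (s * x) ≤ Real.exp (s * L) :=
        Real.exp_le_exp.mpr (by nlinarith [hx.2])
      nlinarith
    · have h1 := hanti2 hx hy hxy
      simp only at h1
      have h2 := mul_le_mul_of_nonneg_right h1 (Real.exp_pos (s * y)).le
      rw [mul_assoc, ← Real.exp_add] at h2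
      simp only [neg_add_cancel, Real.exp_zero, mul_one] at h2
      have h3 : Real.exp (-(s * x)) ≤ 1 := Real.exp_le_one_iff.mpr (by nlinarith [hx.1])
      have h4 : Real.exp (s * y) ≤ Real.exp (s * L) :=
        Real.exp_le_exp.mpr (by nlinarith [hy.2])
      calc v y ≤ v x * Real.exp (-(s * x)) * Real.exp (s * y) := h2
        _ ≤ v x * 1 * Real.exp (s * y) := by nlinarith [Real.exp_pos (s*y), Real.exp_pos (-(s*x))]
        _ ≤ v x * Real.exp (s * L) := by rw [mul_one]; nlinarith
  linarith [key, mul_comm (v x) (Real.exp (s * L))]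

theorem stmt_6 (μ ν L : ℝ) (hμ : 0 < μ) (hν : 0 < ν) (hL : 0 < L) :
    ∃ δ : ℝ, 0 < δ ∧
      ∀ χ a b : ℝ, 0 < χ → 0 < a → 0 < b →
        ∀ u v : ℝ → ℝ, IsStatSol χ a b μ ν L u v → NonConst L u →
          ∀ x ∈ Icc (0 : ℝ) L, δ * (∫ y in (0 : ℝ)..L, u y) ≤ v x := by
  set s := Real.sqrt μ with hs_def
  refine ⟨ν / (μ * L) * Real.exp (-(s * L)), by positivity, ?_⟩
  intro χ a b hχ ha hb u v hsol hnc x hx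
  obtain ⟨hu2, hv2, hupos, hvpos, _, hode, _, _, hv0, hvL⟩ := hsol
  obtain ⟨hvd, hd2, hdc, hddc⟩ := aux_deriv_facts v hv2
  have hucont : Continuous u := hu2.continuous
  -- Harnack bound
  have hkey := harnack μ ν L hμ hν hL u v hv2 hupos hvpos hode hv0 hvL x hx
  -- extend ODE to [0,L] by continuity
  have hFcont : Continuous (fun t => deriv (deriv v) t - μ * v t + ν * u t) := by
    exact (hddc.sub (continuous_const.mul hv2.continuous)).add (continuous_const.mul hucont)
  have hext : ∀ t ∈ Icc (0:ℝ) L, deriv (deriv v) t - μ * v t + ν * u t = 0 := by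
    have hEq : EqOn (fun t => deriv (deriv v) t - μ * v t + ν * u t) (fun _ => (0:ℝ))
        (Ioo (0:ℝ) L) := fun t ht => hode t ht
    have := hEq.closure hFcont continuous_const
    rw [closure_Ioo hL.ne] at this
    exact fun t ht => this ht
  -- integrate the ODE
  have hint0 : ∫ y in (0:ℝ)..L, deriv (deriv v) y = 0 := by
    rw [intervalIntegral.integral_deriv_eq_sub (fun t _ => hd2 t)
      (hddc.intervalIntegrable _ _), hvL, hv0, sub_zero]
  have hcongr : ∫ y in (0:ℝ)..L, (μ * v y - ν * u y) = 0 := by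
    have heq : ∫ y in (0:ℝ)..L, (μ * v y - ν * u y)
        = ∫ y in (0:ℝ)..L, deriv (deriv v) y := by
      apply intervalIntegral.integral_congr
      intro t ht
      rw [uIcc_of_le hL.le] at ht
      have := hext t ht
      simp only
      linarith
    rw [heq, hint0]
  have hiv : IntervalIntegrable v volume 0 L := hv2.continuous.intervalIntegrable _ _
  have hiu : IntervalIntegrable u volume 0 L := hucont.intervalIntegrable _ _
  have hμν : μ * ∫ y in (0:ℝ)..L, v y = ν * ∫ y in (0:ℝ)..L, u y := by
    have hsplit : ∫ y in (0:ℝ)..L, (μ * v y - ν * u y)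
        = μ * (∫ y in (0:ℝ)..L, v y) - ν * ∫ y in (0:ℝ)..L, u y := by
      rw [intervalIntegral.integral_sub (f := fun y => μ * v y) (g := fun y => ν * u y) ((continuous_const.mul hv2.continuous).intervalIntegrable _ _)
        ((continuous_const.mul hucont).intervalIntegrable _ _),
        intervalIntegral.integral_const_mul, intervalIntegral.integral_const_mul]
    rw [hsplit] at hcongr
    linarith
  -- bound the integral of v
  have hbound : ∫ y in (0:ℝ)..L, v y ≤ L * (Real.exp (s * L) * v x) := by
    have h1 := intervalIntegral.integral_mono_on hL.le hiv
      (intervalIntegrable_const) (fun y hy => hkey y hy)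
    rw [intervalIntegral.integral_const, smul_eq_mul, sub_zero] at h1
    exact h1
  set I := ∫ y in (0:ℝ)..L, u y with hI
  have h1 : ν * I ≤ μ * L * (Real.exp (s * L) * v x) := by
    have := mul_le_mul_of_nonneg_left hbound hμ.le
    nlinarith [hμν]
  have hE1 : Real.exp (-(s * L)) * Real.exp (s * L) = 1 := by
    rw [← Real.exp_add]; simp
  have h2 := mul_le_mul_of_nonneg_left h1 (Real.exp_pos (-(s * L))).le
  have h3 : Real.exp (-(s * L)) * (μ * L * (Real.exp (s * L) * v x)) = μ * L * v x := by
    have : Real.exp (-(s * L)) * (μ * L * (Real.exp (s * L) * v x))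
        = (Real.exp (-(s * L)) * Real.exp (s * L)) * (μ * L * v x) := by ring
    rw [this, hE1, one_mul]
  have h4 : Real.exp (-(s * L)) * (ν * I) ≤ μ * L * v x := le_of_le_of_eq h2 h3
  rw [div_mul_eq_mul_div, div_mul_eq_mul_div, div_le_iff₀ (by positivity)]
  nlinarith [h4]
end

section
/- Let (u, v) be a non-constant positive stationary solution of the chemotaxis system. Then inf_{x ∈ [0,L]} u(x) < a/b < sup_{x ∈ [0,L]} u(x), and moreover ∫₀^L u(x) dx < aL/b and ∫₀^L u(x)² dx < a²L/b², and b·∫₀^L u(x)² dx = a·∫₀^L u(x) dx. -/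
open Real Set MeasureTheory Filter

/-- A continuous function, nonnegative on `[0,L]` and positive somewhere on `[0,L]`,
has positive integral over `[0,L]`. -/
lemma aux_integral_pos (L : ℝ) (hL : 0 < L) (g : ℝ → ℝ) (hg : Continuous g)
    (hnn : ∀ x ∈ Icc (0:ℝ) L, 0 ≤ g x) (x0 : ℝ) (hx0 : x0 ∈ Icc (0:ℝ) L)
    (hpos : 0 < g x0) : 0 < ∫ x in (0:ℝ)..L, g x := by
  have hU : IsOpen {x | 0 < g x} := isOpen_lt continuous_const hg
  have hcl : x0 ∈ closure (Ioo (0:ℝ) L) := by rw [closure_Ioo hL.ne]; exact hx0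
  obtain ⟨x1, hx1U, hx1I⟩ := mem_closure_iff.mp hcl _ hU hpos
  refine (intervalIntegral.integral_pos_iff_support_of_nonneg_ae' ?_ ?_).mpr ⟨hL, ?_⟩
  · rw [uIoc_of_le hL.le]
    exact (ae_restrict_iff' measurableSet_Ioc).mpr
      (Eventually.of_forall fun x hx => hnn x ⟨hx.1.le, hx.2⟩)
  · exact hg.intervalIntegrable 0 L
  · have hsub : {x | 0 < g x} ∩ Ioo 0 L ⊆ Function.support g ∩ Ioc 0 L := by
      rintro x ⟨hxa, hxb⟩
      exact ⟨hxa.ne', hxb.1, hxb.2.le⟩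
    exact lt_of_lt_of_le ((hU.inter isOpen_Ioo).measure_pos volume ⟨x1, hx1U, hx1I⟩)
      (measure_mono hsub)

theorem stmt_7 (χ a b μ ν L : ℝ) (hχ : 0 < χ) (ha : 0 < a) (hb : 0 < b)
    (hμ : 0 < μ) (hν : 0 < ν) (hL : 0 < L)
    (u v : ℝ → ℝ) (hsol : IsStatSol χ a b μ ν L u v) (hnc : NonConst L u) :
    sInf (u '' Icc (0 : ℝ) L) < a / b ∧ a / b < sSup (u '' Icc (0 : ℝ) L) ∧
    (∫ x in (0 : ℝ)..L, u x) < a * L / b ∧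
    (∫ x in (0 : ℝ)..L, (u x)^2) < a^2 * L / b^2 ∧
    b * (∫ x in (0 : ℝ)..L, (u x)^2) = a * (∫ x in (0 : ℝ)..L, u x) := by
  obtain ⟨hu, hv, hup, hvp, hode1, _hode2, hu0, huL, hv0, hvL⟩ := hsol
  set w : ℝ → ℝ := fun y => u y * deriv v y / v y with hwdef
  have hucont : Continuous u := hu.continuous
  have h2 : (2 : WithTop ℕ∞) = 1 + 1 := by norm_num
  have hu2 : ContDiff ℝ (1 + 1) u := h2 ▸ hu
  have hv2 : ContDiff ℝ (1 + 1) v := h2 ▸ hv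
  have hdu1 : ContDiff ℝ 1 (deriv u) := (contDiff_succ_iff_deriv.mp hu2).2.2
  have hdv1 : ContDiff ℝ 1 (deriv v) := (contDiff_succ_iff_deriv.mp hv2).2.2
  have hdu_diff : Differentiable ℝ (deriv u) := hdu1.differentiable one_ne_zero
  have hddu_cont : Continuous (deriv (deriv u)) := hdu1.continuous_deriv le_rfl
  -- FTC for deriv u
  have hI1 : ∫ x in (0:ℝ)..L, deriv (deriv u) x = 0 := by
    rw [intervalIntegral.integral_deriv_eq_sub (fun x _ => hdu_diff x)
      (hddu_cont.intervalIntegrable 0 L), huL, hu0, sub_zero]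
  -- the chemotactic term
  have hS : IsOpen {x | v x ≠ 0} := isOpen_ne_fun hv.continuous continuous_const
  have hIccS : Icc (0:ℝ) L ⊆ {x | v x ≠ 0} := fun x hx => (hvp x hx).ne'
  have hw_cd : ContDiffOn ℝ 1 w {x | v x ≠ 0} :=
    ((hu.of_le one_le_two).contDiffOn.mul hdv1.contDiffOn).div
      (hv.of_le one_le_two).contDiffOn (fun x hx => hx)
  have hw_diff : ∀ x ∈ Icc (0:ℝ) L, HasDerivAt w (deriv w x) x := fun x hx =>
    ((hw_cd.differentiableOn one_ne_zero).differentiableAt (hS.mem_nhds (hIccS hx))).hasDerivAt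
  have hw'_int : IntervalIntegrable (deriv w) volume 0 L := by
    apply ContinuousOn.intervalIntegrable
    rw [uIcc_of_le hL.le]
    exact (hw_cd.continuousOn_deriv_of_isOpen hS le_rfl).mono hIccS
  have hIw : ∫ x in (0:ℝ)..L, deriv w x = 0 := by
    rw [intervalIntegral.integral_eq_sub_of_hasDerivAt
      (fun x hx => hw_diff x (by rwa [uIcc_of_le hL.le] at hx)) hw'_int]
    show u L * deriv v L / v L - u 0 * deriv v 0 / v 0 = 0
    rw [hvL, hv0]; ring
  -- the key integral identity
  have hzero : ∫ x in (0:ℝ)..L, u x * (a - b * u x) = 0 := by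
    have hcongr : (∫ x in (0:ℝ)..L, u x * (a - b * u x))
        = ∫ x in (0:ℝ)..L, (χ * deriv w x - deriv (deriv u) x) := by
      apply intervalIntegral.integral_congr_ae
      have hne : ∀ᵐ x : ℝ, x ≠ L := by
        rw [ae_iff]
        simpa [not_ne_iff, setOf_eq_eq_singleton] using
          (measure_singleton L : (volume : Measure ℝ) {L} = 0)
      filter_upwards [hne] with x hxne hx
      rw [uIoc_of_le hL.le] at hx
      have hxo : x ∈ Ioo (0:ℝ) L := ⟨hx.1, lt_of_le_of_ne hx.2 hxne⟩
      have h := hode1 x hxo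
      linarith
    rw [hcongr, intervalIntegral.integral_sub (hw'_int.const_mul χ)
      (hddu_cont.intervalIntegrable 0 L), intervalIntegral.integral_const_mul, hIw, hI1]
    ring
  -- linear reformulation
  have hIu_int : IntervalIntegrable u volume 0 L := hucont.intervalIntegrable 0 L
  have hIu2_int : IntervalIntegrable (fun x => (u x)^2) volume 0 L :=
    (hucont.pow 2).intervalIntegrable 0 L
  have hkey : b * (∫ x in (0:ℝ)..L, (u x)^2) = a * (∫ x in (0:ℝ)..L, u x) := by
    have hfun : (fun x => u x * (a - b * u x)) = fun x => a * u x - b * (u x)^2 := by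
      funext x; ring
    rw [hfun] at hzero
    rw [intervalIntegral.integral_sub (hIu_int.const_mul a) (hIu2_int.const_mul b),
      intervalIntegral.integral_const_mul, intervalIntegral.integral_const_mul] at hzero
    linarith
  -- a point where u differs from a/b
  have hx_ne : ∃ x ∈ Icc (0:ℝ) L, u x ≠ a / b := by
    by_contra h
    push_neg at h
    exact hnc ⟨a / b, h⟩
  obtain ⟨xd, hxd, hxdne⟩ := hx_ne
  -- claim A : some point with u < a/b
  have hA : ∃ x ∈ Icc (0:ℝ) L, u x < a / b := by
    by_contra h
    push_neg at h
    have hg : ∀ x ∈ Icc (0:ℝ) L, 0 ≤ u x * (b * u x - a) := by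
      intro x hx
      have h1 := h x hx
      have h2 : a ≤ b * u x := by
        rw [div_le_iff₀ hb] at h1; linarith
      exact mul_nonneg (hup x hx).le (by linarith)
    have hgd : 0 < u xd * (b * u xd - a) := by
      have h1 : a / b < u xd := lt_of_le_of_ne (h xd hxd) (Ne.symm hxdne)
      rw [div_lt_iff₀ hb] at h1
      exact mul_pos (hup xd hxd) (by linarith)
    have hposI : 0 < ∫ x in (0:ℝ)..L, u x * (b * u x - a) :=
      aux_integral_pos L hL _ (hucont.mul ((continuous_const.mul hucont).sub
      continuous_const)) hg xd hxd hgd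
    have hzI : ∫ x in (0:ℝ)..L, u x * (b * u x - a) = 0 := by
      have hfun : (fun x => u x * (b * u x - a)) = fun x => -(u x * (a - b * u x)) := by
        funext x; ring
      rw [hfun, intervalIntegral.integral_neg, hzero, neg_zero]
    linarith
  -- claim B : some point with u > a/b
  have hB : ∃ x ∈ Icc (0:ℝ) L, a / b < u x := by
    by_contra h
    push_neg at h
    have hg : ∀ x ∈ Icc (0:ℝ) L, 0 ≤ u x * (a - b * u x) := by
      intro x hx
      have h1 := h x hx
      have h2 : b * u x ≤ a := by
        rw [le_div_iff₀ hb] at h1; linarith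
      exact mul_nonneg (hup x hx).le (by linarith)
    have hgd : 0 < u xd * (a - b * u xd) := by
      have h1 : u xd < a / b := lt_of_le_of_ne (h xd hxd) hxdne
      rw [lt_div_iff₀ hb] at h1
      exact mul_pos (hup xd hxd) (by linarith)
    have hposI : 0 < ∫ x in (0:ℝ)..L, u x * (a - b * u x) :=
      aux_integral_pos L hL _ (hucont.mul (continuous_const.sub
      (continuous_const.mul hucont))) hg xd hxd hgd
    linarith
  obtain ⟨x1, hx1, hlt1⟩ := hA
  obtain ⟨x2, hx2, hlt2⟩ := hB
  have hKcpt : IsCompact (u '' Icc (0:ℝ) L) :=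
    isCompact_Icc.image_of_continuousOn hucont.continuousOn
  have hJ : 0 < ∫ x in (0:ℝ)..L, (u x - a / b)^2 := by
    apply aux_integral_pos L hL _ ((hucont.sub continuous_const).pow 2)
      (fun x _ => sq_nonneg _) xd hxd
    have := sub_ne_zero_of_ne hxdne
    show 0 < (u xd - a / b)^2
    positivity
  have hJexp : (∫ x in (0:ℝ)..L, (u x - a / b)^2)
      = (∫ x in (0:ℝ)..L, (u x)^2) - (2 * (a / b)) * (∫ x in (0:ℝ)..L, u x)
        + (a / b)^2 * L := by
    have hfun : (fun x => (u x - a / b)^2)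
        = fun x => ((u x)^2 - (2 * (a / b)) * u x) + (a / b)^2 := by
      funext x; ring
    rw [hfun, intervalIntegral.integral_add (hIu2_int.sub (hIu_int.const_mul _))
      intervalIntegrable_const, intervalIntegral.integral_sub hIu2_int
      (hIu_int.const_mul _), intervalIntegral.integral_const_mul,
      intervalIntegral.integral_const]
    simp [smul_eq_mul]
    ring
  rw [hJexp] at hJ
  have hIu2 : (∫ x in (0:ℝ)..L, (u x)^2) = (a / b) * (∫ x in (0:ℝ)..L, u x) := by
    field_simp
    linarith
  have hab : 0 < a / b := div_pos ha hb
  have hIulT : (∫ x in (0:ℝ)..L, u x) < (a / b) * L := by nlinarith [hIu2]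
  refine ⟨lt_of_le_of_lt (csInf_le hKcpt.bddBelow ⟨x1, hx1, rfl⟩) hlt1,
    lt_of_lt_of_le hlt2 (le_csSup hKcpt.bddAbove ⟨x2, hx2, rfl⟩), ?_, ?_, hkey⟩
  · rw [show a * L / b = (a / b) * L by ring]
    exact hIulT
  · rw [hIu2, show a^2 * L / b^2 = (a / b) * ((a / b) * L) by field_simp]
    exact (mul_lt_mul_iff_right₀ hab).mpr hIulT
end

section
/- There exists a constant C₁ > 0, depending only on χ, a, b, μ and L (and independent of the particular solution), such that every non-constant positive stationary solution (u, v) of the chemotaxis system satisfies |u(x)| ≤ C₁ and |u'(x)| ≤ C₁ for all x ∈ [0, L]. -/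
open Real Set MeasureTheory Filter

lemma reg2 {f : ℝ → ℝ} (hf : ContDiff ℝ 2 f) :
    Differentiable ℝ f ∧ Differentiable ℝ (deriv f) ∧ Continuous (deriv f) := by
  have h : (2 : WithTop ℕ∞) = 1 + 1 := by norm_num
  rw [h, contDiff_succ_iff_deriv] at hf
  obtain ⟨h1, -, h2⟩ := hf
  exact ⟨h1, (contDiff_one_iff_deriv.mp h2).1, h2.continuous⟩

set_option maxHeartbeats 1000000 in
/-- Main auxiliary: all estimates for one fixed solution. -/
lemma key (χ a b μ ν L : ℝ) (hχ : 0 < χ) (ha : 0 < a) (hb : 0 < b)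
    (hμ : 0 < μ) (hL : 0 < L) (hν : 0 < ν) (u v : ℝ → ℝ)
    (hu : ContDiff ℝ 2 u) (hv : ContDiff ℝ 2 v)
    (hupos : ∀ x ∈ Icc (0 : ℝ) L, 0 < u x) (hvpos : ∀ x ∈ Icc (0 : ℝ) L, 0 < v x)
    (heq1 : ∀ x ∈ Ioo (0 : ℝ) L,
      deriv (deriv u) x - χ * deriv (fun y => u y * deriv v y / v y) x
        + u x * (a - b * u x) = 0)
    (heq2 : ∀ x ∈ Ioo (0 : ℝ) L, deriv (deriv v) x - μ * v x + ν * u x = 0)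
    (hu0 : deriv u 0 = 0) (huL : deriv u L = 0)
    (hv0 : deriv v 0 = 0) (hvL : deriv v L = 0) :
    ∀ x ∈ Icc (0 : ℝ) L,
      |u x| ≤ a / b * Real.exp (χ * (μ * L * L)) ∧
      |deriv u x| ≤ (a / b * Real.exp (χ * (μ * L * L))) *
        ((b * (a / b * Real.exp (χ * (μ * L * L))) + a) * L + χ * (μ * L)) := by
  obtain ⟨hu1, hu2, hu2c⟩ := reg2 hu
  obtain ⟨hv1, hv2, hv2c⟩ := reg2 hv
  set M : ℝ := a / b * Real.exp (χ * (μ * L * L)) with hM_def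
  have hModd : 0 < M := by positivity
  -- the positivity set of v
  set U : Set ℝ := v ⁻¹' Ioi 0 with hU_def
  have hUopen : IsOpen U := isOpen_Ioi.preimage hv1.continuous
  have hIccU : Icc (0:ℝ) L ⊆ U := fun x hx => hvpos x hx
  have hvU : ∀ x ∈ U, 0 < v x := fun x hx => hx
  -- q = v'/v
  set q : ℝ → ℝ := fun x => deriv v x / v x with hq_def
  have hq0 : q 0 = 0 := by simp [hq_def, hv0]
  have hqL : q L = 0 := by simp [hq_def, hvL]
  have hqc : ContinuousOn q (Icc 0 L) :=
    hv2c.continuousOn.div hv1.continuous.continuousOn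
      (fun x hx => (hvpos x hx).ne')
  have hq' : ∀ x ∈ U, HasDerivAt q
      ((deriv (deriv v) x * v x - deriv v x * deriv v x) / (v x)^2) x := by
    intro x hx
    exact ((hv2 x).hasDerivAt).div ((hv1 x).hasDerivAt) (hvU x hx).ne'
  -- q' ≤ μ on Ioo
  have hq'le : ∀ x ∈ Ioo (0:ℝ) L,
      (deriv (deriv v) x * v x - deriv v x * deriv v x) / (v x)^2 ≤ μ := by
    intro x hx
    have hx' : x ∈ Icc (0:ℝ) L := Ioo_subset_Icc_self hx
    have hvx := hvpos x hx'
    have hux := hupos x hx'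
    have h2 := heq2 x hx
    rw [div_le_iff₀ (by positivity)]
    nlinarith [sq_nonneg (deriv v x), mul_pos (mul_pos hν hux) hvx]
  -- h₁ = μ x - q x is monotone on Icc
  have hmono1 : MonotoneOn (fun x => μ * x - q x) (Icc 0 L) := by
    apply monotoneOn_of_deriv_nonneg (convex_Icc 0 L)
    · exact (continuousOn_id.const_smul μ).sub hqc |>.congr (fun x _ => by simp [smul_eq_mul])
    · rw [interior_Icc]
      intro x hx
      exact (((hasDerivAt_id x).const_mul μ).sub (hq' x (hIccU (Ioo_subset_Icc_self hx)))).differentiableAt.differentiableWithinAt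
    · rw [interior_Icc]
      intro x hx
      have hd := ((hasDerivAt_id x).const_mul μ).sub (hq' x (hIccU (Ioo_subset_Icc_self hx)))
      simp only [id_eq] at hd
      rw [show (fun x => μ * x - q x) = ((fun y => μ * y) - q) from rfl, hd.deriv]
      have := hq'le x hx
      simp only [mul_one]
      linarith
  -- bounds on q
  have hqub : ∀ x ∈ Icc (0:ℝ) L, q x ≤ μ * x := by
    intro x hx
    have := hmono1 (left_mem_Icc.mpr hL.le) hx hx.1
    simp only [mul_zero, hq0, sub_zero, zero_sub] at this
    linarith
  have hqlb : ∀ x ∈ Icc (0:ℝ) L, μ * x - μ * L ≤ q x := by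
    intro x hx
    have := hmono1 hx (right_mem_Icc.mpr hL.le) hx.2
    simp only [hqL, sub_zero] at this
    linarith
  have hqabs : ∀ x ∈ Icc (0:ℝ) L, |q x| ≤ μ * L := by
    intro x hx
    rw [abs_le]
    constructor
    · have := hqlb x hx
      nlinarith [hx.1, hx.2]
    · have := hqub x hx
      nlinarith [hx.1, hx.2]
  -- logarithmic oscillation bound for v
  have hrc : ContinuousOn (fun x => Real.log (v x)) (Icc 0 L) :=
    (hv1.continuous.continuousOn).log (fun x hx => (hvpos x hx).ne')
  have hr' : ∀ x ∈ U, HasDerivAt (fun y => Real.log (v y)) (q x) x := by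
    intro x hx
    exact ((hv1 x).hasDerivAt).log (hvU x hx).ne'
  have hlogmono : ∀ c : ℝ, (∀ x ∈ Ioo (0:ℝ) L, 0 ≤ μ * L + c * q x) →
      MonotoneOn (fun x => μ * L * x + c * Real.log (v x)) (Icc 0 L) := by
    intro c hc
    apply monotoneOn_of_deriv_nonneg (convex_Icc 0 L)
    · exact ((continuous_const.mul continuous_id).continuousOn).add (continuousOn_const.mul hrc)
    · rw [interior_Icc]
      intro x hx
      have hd := (((hasDerivAt_id x).const_mul (μ * L)).add
        ((hr' x (hIccU (Ioo_subset_Icc_self hx))).const_mul c))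
      exact hd.differentiableAt.differentiableWithinAt
    · rw [interior_Icc]
      intro x hx
      have hd := (((hasDerivAt_id x).const_mul (μ * L)).add
        ((hr' x (hIccU (Ioo_subset_Icc_self hx))).const_mul c))
      simp only [id_eq] at hd
      rw [show (fun x => μ * L * x + c * Real.log (v x)) = ((fun y => μ * L * y) + fun y => c * Real.log (v y)) from rfl, hd.deriv]
      have := hc x hx
      linarith
  have hlog : ∀ x ∈ Icc (0:ℝ) L, ∀ y ∈ Icc (0:ℝ) L,
      Real.log (v x) - Real.log (v y) ≤ μ * L * L := by
    have hm1 : MonotoneOn (fun x => μ * L * x + 1 * Real.log (v x)) (Icc 0 L) := by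
      apply hlogmono
      intro x hx
      have := hqlb x (Ioo_subset_Icc_self hx)
      have hx0 := hx.1
      nlinarith
    have hm2 : MonotoneOn (fun x => μ * L * x + (-1) * Real.log (v x)) (Icc 0 L) := by
      apply hlogmono
      intro x hx
      have := hqub x (Ioo_subset_Icc_self hx)
      have hxL := hx.2
      nlinarith [hx.1]
    intro x hx y hy
    rcases le_total x y with h | h
    · have := hm1 hx hy h
      simp only at this
      have hx0 := hx.1; have hyL := hy.2; have hy0 := hy.1; have hxL := hx.2
      have haux : μ * L * y - μ * L * x ≤ μ * L * L := by
        nlinarith [mul_nonneg (mul_nonneg hμ.le hL.le) (by linarith : (0:ℝ) ≤ L - y + x)]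
      linarith
    · have := hm2 hy hx h
      simp only at this
      have hx0 := hx.1; have hyL := hy.2; have hy0 := hy.1; have hxL := hx.2
      have haux : μ * L * x - μ * L * y ≤ μ * L * L := by
        nlinarith [mul_nonneg (mul_nonneg hμ.le hL.le) (by linarith : (0:ℝ) ≤ L - x + y)]
      linarith
  -- s = u' - χ u v'/v
  set s : ℝ → ℝ := fun x => deriv u x - χ * (u x * deriv v x / v x) with hs_def
  have hs0 : s 0 = 0 := by simp [hs_def, hu0, hv0]
  have hsL : s L = 0 := by simp [hs_def, huL, hvL]
  have hwdiff : ∀ x ∈ U, DifferentiableAt ℝ (fun y => u y * deriv v y / v y) x := by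
    intro x hx
    exact ((hu1 x).mul (hv2 x)).div (hv1 x) (hvU x hx).ne'
  have hsc : ContinuousOn s (Icc 0 L) := by
    apply (hu2c.continuousOn).sub
    apply continuousOn_const.mul
    exact ((hu1.continuous.continuousOn.mul hv2c.continuousOn).div
      hv1.continuous.continuousOn (fun x hx => (hvpos x hx).ne'))
  have hs' : ∀ x ∈ Ioo (0:ℝ) L, HasDerivAt s (u x * (b * u x - a)) x := by
    intro x hx
    have hxU : x ∈ U := hIccU (Ioo_subset_Icc_self hx)
    have hd : HasDerivAt s
        (deriv (deriv u) x - χ * deriv (fun y => u y * deriv v y / v y) x) x :=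
      ((hu2 x).hasDerivAt).sub (((hwdiff x hxU).hasDerivAt).const_mul χ)
    have h1 := heq1 x hx
    have : u x * (b * u x - a)
        = deriv (deriv u) x - χ * deriv (fun y => u y * deriv v y / v y) x := by
      nlinarith [h1]
    rwa [← this] at hd
  -- f = u * exp(-χ log v)
  set f : ℝ → ℝ := fun x => u x * Real.exp (-χ * Real.log (v x)) with hf_def
  have hfc : ContinuousOn f (Icc 0 L) :=
    hu1.continuous.continuousOn.mul ((hrc.const_smul (-χ)).rexp)
  have hf' : ∀ x ∈ U, HasDerivAt f (Real.exp (-χ * Real.log (v x)) * s x) x := by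
    intro x hx
    have hg : HasDerivAt (fun y => Real.exp (-χ * Real.log (v y)))
        (Real.exp (-χ * Real.log (v x)) * (-χ * q x)) x :=
      ((hr' x hx).const_mul (-χ)).exp
    have hd : HasDerivAt (fun y => u y * Real.exp (-χ * Real.log (v y))) _ x := ((hu1 x).hasDerivAt).mul hg
    convert hd using 1
    simp only [hs_def, hq_def]
    ring
  clear_value M U q s f
  -- maximum of f
  obtain ⟨x₀, hx₀, hmax⟩ := isCompact_Icc.exists_isMaxOn (nonempty_Icc.mpr hL.le) hfc
  -- at the max point, u ≤ a/b
  have hub : u x₀ ≤ a / b := by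
    by_contra hgt
    push_neg at hgt
    have hop : IsOpen {y | a / b < u y} := isOpen_lt continuous_const hu1.continuous
    obtain ⟨δ, hδ, hball⟩ := Metric.isOpen_iff.mp hop x₀ hgt
    have hδu : ∀ y, |y - x₀| < δ → a / b < u y := fun y hy =>
      hball (by rwa [Metric.mem_ball, Real.dist_eq])
    have hspos : ∀ x ∈ Ioo (0:ℝ) L, |x - x₀| < δ → 0 < deriv s x := by
      intro x hx hxd
      rw [(hs' x hx).deriv]
      have h1 := hδu x hxd
      have h2 : 0 < u x := hupos x (Ioo_subset_Icc_self hx)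
      have h3 : 0 < b * u x - a := by
        have : a < b * u x := by
          rw [div_lt_iff₀ hb] at h1; linarith
        linarith
      exact mul_pos h2 h3
    rcases lt_or_eq_of_le hx₀.2 with hx₀L | hx₀L
    · -- x₀ < L
      set d : ℝ := min (δ/2) (L - x₀) with hd_def
      have hd0 : 0 < d := lt_min (by linarith) (by linarith)
      have hdδ : d ≤ δ/2 := min_le_left _ _
      have hdL : x₀ + d ≤ L := by
        have := min_le_right (δ/2) (L - x₀); linarith
      have hx₁ : x₀ + d ∈ Icc (0:ℝ) L := ⟨by linarith [hx₀.1], hdL⟩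
      have hsx₀ : s x₀ = 0 := by
        rcases eq_or_lt_of_le hx₀.1 with h0 | h0
        · rw [hs_def]; simp only [← h0, hu0, hv0]; ring
        · have hloc : IsLocalMax f x₀ := hmax.isLocalMax (Icc_mem_nhds h0 hx₀L)
          have hder := hf' x₀ (hIccU hx₀)
          have hz := hloc.deriv_eq_zero
          rw [hder.deriv] at hz
          exact (mul_eq_zero.mp hz).resolve_left (Real.exp_pos _).ne'
      have hsub : Icc x₀ (x₀ + d) ⊆ Icc (0:ℝ) L := Icc_subset_Icc hx₀.1 hdL
      have hsmono : StrictMonoOn s (Icc x₀ (x₀ + d)) := by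
        apply strictMonoOn_of_deriv_pos (convex_Icc _ _) (hsc.mono hsub)
        rw [interior_Icc]
        intro x hx
        apply hspos x ⟨lt_of_le_of_lt hx₀.1 hx.1, lt_of_lt_of_le hx.2 hdL⟩
        rw [abs_lt]
        constructor <;> [linarith [hx.1]; linarith [hx.2]]
      have hfmono : StrictMonoOn f (Icc x₀ (x₀ + d)) := by
        apply strictMonoOn_of_deriv_pos (convex_Icc _ _) (hfc.mono hsub)
        rw [interior_Icc]
        intro x hx
        have hxU : x ∈ U := hIccU (hsub (Ioo_subset_Icc_self hx))
        rw [(hf' x hxU).deriv]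
        have hsx : 0 < s x := by
          have := hsmono (left_mem_Icc.mpr (by linarith)) (Ioo_subset_Icc_self hx) hx.1
          rwa [hsx₀] at this
        exact mul_pos (Real.exp_pos _) hsx
      have hlt := hfmono (left_mem_Icc.mpr (by linarith))
        (right_mem_Icc.mpr (by linarith)) (by linarith)
      exact absurd (hmax hx₁) (not_le.mpr hlt)
    · -- x₀ = L
      rw [hx₀L] at hgt hmax hδu
      set d : ℝ := min (δ/2) L with hd_def
      have hd0 : 0 < d := lt_min (by linarith) hL
      have hdδ : d ≤ δ/2 := min_le_left _ _
      have hd1 : 0 ≤ L - d := by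
        have := min_le_right (δ/2) L; linarith
      have hx₁ : L - d ∈ Icc (0:ℝ) L := ⟨hd1, by linarith⟩
      have hsub : Icc (L - d) L ⊆ Icc (0:ℝ) L := Icc_subset_Icc hd1 le_rfl
      have hsmono : StrictMonoOn s (Icc (L - d) L) := by
        apply strictMonoOn_of_deriv_pos (convex_Icc _ _) (hsc.mono hsub)
        rw [interior_Icc]
        intro x hx
        apply hspos x ⟨lt_of_le_of_lt hd1 hx.1, hx.2⟩
        rw [abs_lt]
        constructor <;> [linarith [hx.1]; linarith [hx.2]]
      have hfanti : StrictAntiOn f (Icc (L - d) L) := by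
        apply strictAntiOn_of_deriv_neg (convex_Icc _ _) (hfc.mono hsub)
        rw [interior_Icc]
        intro x hx
        have hxU : x ∈ U := hIccU (hsub (Ioo_subset_Icc_self hx))
        rw [(hf' x hxU).deriv]
        have hsx : s x < 0 := by
          have := hsmono (Ioo_subset_Icc_self hx) (right_mem_Icc.mpr (by linarith)) hx.2
          rwa [hsL] at this
        exact mul_neg_of_pos_of_neg (Real.exp_pos _) hsx
      have hlt := hfanti (left_mem_Icc.mpr (by linarith))
        (right_mem_Icc.mpr (by linarith)) (by linarith)
      exact absurd (hmax hx₁) (not_le.mpr hlt)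
  -- u ≤ M on Icc
  have huM : ∀ x ∈ Icc (0:ℝ) L, u x ≤ M := by
    intro x hx
    have hfx : f x ≤ f x₀ := hmax hx
    have hux : u x = f x * Real.exp (χ * Real.log (v x)) := by
      rw [hf_def]
      simp only
      rw [mul_assoc, ← Real.exp_add]
      have h0 : -χ * Real.log (v x) + χ * Real.log (v x) = 0 := by ring
      rw [h0, Real.exp_zero, mul_one]
    rw [hux, hM_def]
    calc f x * Real.exp (χ * Real.log (v x))
        ≤ f x₀ * Real.exp (χ * Real.log (v x)) :=
          mul_le_mul_of_nonneg_right hfx (Real.exp_pos _).le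
      _ = u x₀ * Real.exp (χ * (Real.log (v x) - Real.log (v x₀))) := by
          rw [hf_def]
          simp only
          rw [mul_assoc, ← Real.exp_add]
          have h0 : -χ * Real.log (v x₀) + χ * Real.log (v x)
              = χ * (Real.log (v x) - Real.log (v x₀)) := by ring
          rw [h0]
      _ ≤ a / b * Real.exp (χ * (μ * L * L)) := by
          apply mul_le_mul hub (Real.exp_le_exp.mpr ?_) (Real.exp_pos _).le
            (div_nonneg ha.le hb.le)
          exact mul_le_mul_of_nonneg_left (hlog x hx x₀ hx₀) hχ.le
  -- bound on s via monotonicity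
  have hsbound : ∀ x ∈ Icc (0:ℝ) L, |s x| ≤ M * (b * M + a) * L := by
    have hKpos : 0 < M * (b * M + a) := by positivity
    have hmonoK : ∀ c : ℝ, c = 1 ∨ c = -1 →
        MonotoneOn (fun x => M * (b * M + a) * x + c * s x) (Icc 0 L) := by
      intro c hc
      apply monotoneOn_of_deriv_nonneg (convex_Icc 0 L)
      · exact ((continuous_const.mul continuous_id).continuousOn).add
          (continuousOn_const.mul hsc)
      · rw [interior_Icc]
        intro x hx
        have hd := ((hasDerivAt_id x).const_mul (M * (b * M + a))).add
          ((hs' x hx).const_mul c)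
        exact hd.differentiableAt.differentiableWithinAt
      · rw [interior_Icc]
        intro x hx
        have hd := ((hasDerivAt_id x).const_mul (M * (b * M + a))).add
          ((hs' x hx).const_mul c)
        simp only [id_eq] at hd
        rw [show (fun x => M * (b * M + a) * x + c * s x) = ((fun y => M * (b * M + a) * y) + fun y => c * s y) from rfl, hd.deriv]
        have h1 : 0 < u x := hupos x (Ioo_subset_Icc_self hx)
        have h2 : u x ≤ M := huM x (Ioo_subset_Icc_self hx)
        rcases hc with rfl | rfl
        · nlinarith [mul_nonneg (mul_nonneg hb.le h1.le) h1.le,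
            mul_le_mul_of_nonneg_right h2 ha.le,
            mul_nonneg (mul_nonneg hb.le hModd.le) hModd.le]
        · nlinarith [mul_le_mul h2 h2 h1.le hModd.le,
            mul_nonneg h1.le ha.le, mul_nonneg hModd.le ha.le]
    intro x hx
    have h1 := hmonoK 1 (Or.inl rfl) (left_mem_Icc.mpr hL.le) hx hx.1
    have h2 := hmonoK (-1) (Or.inr rfl) (left_mem_Icc.mpr hL.le) hx hx.1
    simp only [hs0, mul_zero, zero_add, one_mul, neg_mul, neg_zero, add_zero, mul_one] at h1 h2
    rw [abs_le]
    have hxL := hx.2; have hx0 := hx.1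
    constructor
    · nlinarith
    · nlinarith
  -- final bound on deriv u
  intro x hx
  have hx0 : 0 < u x := hupos x hx
  refine ⟨?_, ?_⟩
  · rw [abs_of_pos hx0]
    exact huM x hx
  · have hder : deriv u x = s x + χ * (u x * q x) := by
      rw [hs_def, hq_def]
      simp only
      ring
    rw [hder]
    have h1 := hsbound x hx
    have h2 : |u x * q x| ≤ M * (μ * L) := by
      rw [abs_mul, abs_of_pos hx0]
      exact mul_le_mul (huM x hx) (hqabs x hx) (abs_nonneg _) hModd.le
    have habs1 : |s x + χ * (u x * q x)| ≤ |s x| + |χ * (u x * q x)| := abs_add_le _ _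
    have habs2 : |χ * (u x * q x)| = χ * |u x * q x| := by
      rw [abs_mul, abs_of_pos hχ]
    calc |s x + χ * (u x * q x)| ≤ |s x| + χ * |u x * q x| := by
          rw [← habs2]; exact habs1
      _ ≤ M * (b * M + a) * L + χ * (M * (μ * L)) := by
          have := mul_le_mul_of_nonneg_left h2 hχ.le
          linarith
      _ = M * ((b * M + a) * L + χ * (μ * L)) := by ring

theorem stmt_8 (χ a b μ L : ℝ) (hχ : 0 < χ) (ha : 0 < a) (hb : 0 < b)
    (hμ : 0 < μ) (hL : 0 < L) :
    ∃ C : ℝ, 0 < C ∧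
      ∀ ν : ℝ, 0 < ν →
        ∀ u v : ℝ → ℝ, IsStatSol χ a b μ ν L u v → NonConst L u →
          ∀ x ∈ Icc (0 : ℝ) L, |u x| ≤ C ∧ |deriv u x| ≤ C := by
  set M : ℝ := a / b * Real.exp (χ * (μ * L * L)) with hM_def
  have hM : 0 < M := by positivity
  refine ⟨M + M * ((b * M + a) * L + χ * (μ * L)) + 1, by positivity, ?_⟩
  intro ν hν u v hsol _
  obtain ⟨hu, hv, hupos, hvpos, heq1, heq2, hu0, huL, hv0, hvL⟩ := hsol
  intro x hx
  obtain ⟨h1, h2⟩ := key χ a b μ ν L hχ ha hb hμ hL hν u v hu hv hupos hvpos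
    heq1 heq2 hu0 huL hv0 hvL x hx
  have hterm : 0 ≤ M * ((b * M + a) * L + χ * (μ * L)) := by positivity
  constructor
  · calc |u x| ≤ M := h1
      _ ≤ M + M * ((b * M + a) * L + χ * (μ * L)) + 1 := by linarith
  · calc |deriv u x| ≤ M * ((b * M + a) * L + χ * (μ * L)) := h2
      _ ≤ M + M * ((b * M + a) * L + χ * (μ * L)) + 1 := by linarith
end

section
/- There exists a constant C₂ > 0, depending only on a, b, μ, ν and L (and in particular independent of χ and of the particular solution), such that for every χ > 0 and every non-constant positive stationary solution (u, v) of the chemotaxis system with parameter χ, one has ∫₀^L v(x)² dx + ∫₀^L v'(x)² dx + ∫₀^L v''(x)² dx ≤ C₂. -/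
open Real Set MeasureTheory Filter

lemma cd_deriv {f : ℝ → ℝ} (h : ContDiff ℝ 2 f) : ContDiff ℝ 1 (deriv f) := by
  have h2 : ContDiff ℝ (1 + 1) f := by norm_num; exact h
  exact (contDiff_succ_iff_deriv.mp h2).2.2

lemma int_congr {L : ℝ} (hL : 0 ≤ L) {f g : ℝ → ℝ} (h : ∀ x ∈ Ioo (0:ℝ) L, f x = g x) :
    ∫ x in (0:ℝ)..L, f x = ∫ x in (0:ℝ)..L, g x := by
  apply intervalIntegral.integral_congr_ae
  rw [MeasureTheory.ae_iff]
  refine measure_mono_null (fun x hx => ?_) (measure_singleton L)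
  simp only [mem_setOf_eq, _root_.not_imp] at hx
  obtain ⟨hx1, hx2⟩ := hx
  rw [Set.uIoc_of_le hL] at hx1
  by_contra hxL
  exact hx2 (h x ⟨hx1.1, lt_of_le_of_ne hx1.2 (by simpa using hxL)⟩)

lemma sq_int_le {L : ℝ} (hL : 0 < L) {f : ℝ → ℝ} (hf : Continuous f) :
    (∫ x in (0:ℝ)..L, f x)^2 ≤ L * ∫ x in (0:ℝ)..L, (f x)^2 := by
  set m : ℝ := (∫ x in (0:ℝ)..L, f x) / L with hm
  have h0 : (0:ℝ) ≤ ∫ x in (0:ℝ)..L, (f x - m)^2 :=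
    intervalIntegral.integral_nonneg hL.le (fun x _ => sq_nonneg _)
  have hif : IntervalIntegrable f volume 0 L := hf.intervalIntegrable 0 L
  have hif2 : IntervalIntegrable (fun x => (f x)^2) volume 0 L :=
    (hf.pow 2).intervalIntegrable 0 L
  have hexp : ∫ x in (0:ℝ)..L, (f x - m)^2
      = (∫ x in (0:ℝ)..L, (f x)^2) - (2*m) * (∫ x in (0:ℝ)..L, f x) + m^2 * L := by
    have h1 : (fun x => (f x - m)^2) = fun x => ((f x)^2 - (2*m) * f x) + m^2 := by
      funext x; ring
    rw [h1, intervalIntegral.integral_add (hif2.sub (hif.const_mul (2*m)))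
      (intervalIntegrable_const), intervalIntegral.integral_sub hif2 (hif.const_mul (2*m)),
      intervalIntegral.integral_const_mul, intervalIntegral.integral_const]
    simp [smul_eq_mul]; ring
  rw [hexp] at h0
  have hmL : m * L = ∫ x in (0:ℝ)..L, f x := by rw [hm, div_mul_cancel₀ _ hL.ne']
  nlinarith [mul_nonneg h0 hL.le, hmL, sq_nonneg m]

set_option maxHeartbeats 1000000 in
theorem stmt_9 (a b μ ν L : ℝ) (ha : 0 < a) (hb : 0 < b)
    (hμ : 0 < μ) (hν : 0 < ν) (hL : 0 < L) :
    ∃ C : ℝ, 0 < C ∧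
      ∀ χ : ℝ, 0 < χ →
        ∀ u v : ℝ → ℝ, IsStatSol χ a b μ ν L u v → NonConst L u →
          (∫ x in (0 : ℝ)..L, (v x)^2) + (∫ x in (0 : ℝ)..L, (deriv v x)^2)
            + (∫ x in (0 : ℝ)..L, (deriv (deriv v) x)^2) ≤ C := by
  set U : ℝ := a^2*L/b^2 with hUdef
  set c : ℝ := ν^2/(2*μ) with hcdef
  have hUpos : 0 < U := by positivity
  have hcpos : 0 < c := by positivity
  refine ⟨2*(c*U)/μ + c*U + (2*μ^2*(2*(c*U)/μ) + 2*ν^2*U), by positivity, ?_⟩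
  intro χ hχ u v hsol _
  obtain ⟨hu, hv, hupos, hvpos, heq1, heq2, hu0, huL, hv0, hvL⟩ := hsol
  have hucont : Continuous u := hu.continuous
  have hvcont : Continuous v := hv.continuous
  have hdu : ContDiff ℝ 1 (deriv u) := cd_deriv hu
  have hdv : ContDiff ℝ 1 (deriv v) := cd_deriv hv
  have hducont : Continuous (deriv u) := hdu.continuous
  have hdvcont : Continuous (deriv v) := hdv.continuous
  have hddvcont : Continuous (deriv (deriv v)) := hdv.continuous_deriv le_rfl
  have hudiff : Differentiable ℝ u := hu.differentiable two_ne_zero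
  have hvdiff : Differentiable ℝ v := hv.differentiable two_ne_zero
  have hdudiff : Differentiable ℝ (deriv u) := hdu.differentiable one_ne_zero
  have hdvdiff : Differentiable ℝ (deriv v) := hdv.differentiable one_ne_zero
  set I1 : ℝ := ∫ x in (0:ℝ)..L, u x with hI1
  set I2 : ℝ := ∫ x in (0:ℝ)..L, (u x)^2 with hI2
  set J : ℝ := ∫ x in (0:ℝ)..L, (v x)^2 with hJdef
  set J' : ℝ := ∫ x in (0:ℝ)..L, (deriv v x)^2 with hJ'def
  have hint_u : IntervalIntegrable u volume 0 L := hucont.intervalIntegrable 0 L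
  have hint_u2 : IntervalIntegrable (fun x => (u x)^2) volume 0 L :=
    (hucont.pow 2).intervalIntegrable 0 L
  have hint_v2 : IntervalIntegrable (fun x => (v x)^2) volume 0 L :=
    (hvcont.pow 2).intervalIntegrable 0 L
  have hint_dv2 : IntervalIntegrable (fun x => (deriv v x)^2) volume 0 L :=
    (hdvcont.pow 2).intervalIntegrable 0 L
  have hint_uv : IntervalIntegrable (fun x => ν * (u x * v x)) volume 0 L :=
    (continuous_const.mul (hucont.mul hvcont)).intervalIntegrable 0 L
  -- Step 1: integrate the u-equation
  set F : ℝ → ℝ := fun y => deriv u y - χ * (u y * deriv v y / v y) with hF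
  have hFTC : ∫ x in (0:ℝ)..L, (b*(u x)^2 - a*u x) = F L - F 0 := by
    apply intervalIntegral.integral_eq_sub_of_hasDeriv_right_of_le hL.le
    · apply ContinuousOn.sub (hducont.continuousOn)
      apply ContinuousOn.mul continuousOn_const
      exact ContinuousOn.div ((hucont.mul hdvcont).continuousOn) hvcont.continuousOn
        (fun x hx => (hvpos x hx).ne')
    · intro x hx
      have hvx : v x ≠ 0 := (hvpos x (Ioo_subset_Icc_self hx)).ne'
      have hgd : DifferentiableAt ℝ (fun y => u y * deriv v y / v y) x :=
        ((hudiff x).mul (hdvdiff x)).div (hvdiff x) hvx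
      have hFd : HasDerivAt F
          (deriv (deriv u) x - χ * deriv (fun y => u y * deriv v y / v y) x) x :=
        ((hdudiff x).hasDerivAt).sub ((hgd.hasDerivAt).const_mul χ)
      have heq := heq1 x hx
      have hval : deriv (deriv u) x - χ * deriv (fun y => u y * deriv v y / v y) x
          = b*(u x)^2 - a*u x := by linear_combination heq
      rw [hval] at hFd
      exact hFd.hasDerivWithinAt
    · exact ((continuous_const.mul (hucont.pow 2)).sub
        (continuous_const.mul hucont)).intervalIntegrable 0 L
  have hF0 : F 0 = 0 := by simp [hF, hu0, hv0]
  have hFL : F L = 0 := by simp [hF, huL, hvL]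
  have hstep1 : b * I2 = a * I1 := by
    rw [hF0, hFL, intervalIntegral.integral_sub (hint_u2.const_mul b) (hint_u.const_mul a),
      intervalIntegral.integral_const_mul, intervalIntegral.integral_const_mul] at hFTC
    simp only [sub_zero] at hFTC
    rw [← hI1, ← hI2] at hFTC
    linarith
  have hCS : I1^2 ≤ L * I2 := sq_int_le hL hucont
  have hI2nn : 0 ≤ I2 := intervalIntegral.integral_nonneg hL.le (fun x _ => sq_nonneg _)
  have hU : I2 ≤ U := by
    rcases eq_or_lt_of_le hI2nn with h|h
    · rw [← h]; exact hUpos.le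
    · rw [hUdef, le_div_iff₀ (by positivity)]
      have hsq : (b*I2)^2 = (a*I1)^2 := by rw [hstep1]
      nlinarith [hsq, hCS, h, sq_nonneg a]
  -- Step 2: multiply the v-equation by v and integrate by parts
  have hG : ∫ x in (0:ℝ)..L, (deriv v x * deriv v x + v x * deriv (deriv v) x)
      = v L * deriv v L - v 0 * deriv v 0 := by
    apply intervalIntegral.integral_eq_sub_of_hasDeriv_right_of_le hL.le
    · exact (hvcont.mul hdvcont).continuousOn
    · intro x hx
      exact (((hvdiff x).hasDerivAt).mul ((hdvdiff x).hasDerivAt)).hasDerivWithinAt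
    · exact ((hdvcont.mul hdvcont).add (hvcont.mul hddvcont)).intervalIntegrable 0 L
  rw [hv0, hvL, mul_zero, mul_zero, sub_zero] at hG
  have hG2 : ∫ x in (0:ℝ)..L, ((deriv v x)^2 + μ*(v x)^2 - ν*(u x * v x)) = 0 := by
    have hcongr : (∫ x in (0:ℝ)..L, ((deriv v x)^2 + μ*(v x)^2 - ν*(u x * v x)))
        = ∫ x in (0:ℝ)..L, (deriv v x * deriv v x + v x * deriv (deriv v) x) := by
      apply int_congr hL.le
      intro x hx
      have h2 := heq2 x hx
      have hval : deriv (deriv v) x = μ * v x - ν * u x := by linarith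
      rw [hval]; ring
    rw [hcongr, hG]
  have hsplit0 : ∫ x in (0:ℝ)..L, ((deriv v x)^2 + μ*(v x)^2 - ν*(u x * v x))
      = J' + μ*J - ν*(∫ x in (0:ℝ)..L, u x * v x) := by
    rw [intervalIntegral.integral_sub (hint_dv2.add (hint_v2.const_mul μ)) hint_uv,
      intervalIntegral.integral_add hint_dv2 (hint_v2.const_mul μ),
      intervalIntegral.integral_const_mul, intervalIntegral.integral_const_mul]
  have hsplit : J' + μ*J - ν*(∫ x in (0:ℝ)..L, u x * v x) = 0 := by
    rw [← hsplit0]; exact hG2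
  have hKval : ∫ x in (0:ℝ)..L, ((μ/2)*(v x)^2 + c*(u x)^2) = (μ/2)*J + c*I2 := by
    rw [intervalIntegral.integral_add (f := fun x => (μ/2)*(v x)^2) (g := fun x => c*(u x)^2)
      ((continuous_const.mul (hvcont.pow 2)).intervalIntegrable 0 L)
      ((continuous_const.mul (hucont.pow 2)).intervalIntegrable 0 L),
      intervalIntegral.integral_const_mul, intervalIntegral.integral_const_mul]
  have hK : ∫ x in (0:ℝ)..L, ν*(u x * v x)
      ≤ ∫ x in (0:ℝ)..L, ((μ/2)*(v x)^2 + c*(u x)^2) := by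
    apply intervalIntegral.integral_mono_on hL.le hint_uv
      (((continuous_const.mul (hvcont.pow 2)).add
        (continuous_const.mul (hucont.pow 2))).intervalIntegrable 0 L)
    intro x _
    show ν*(u x * v x) ≤ (μ/2)*(v x)^2 + c*(u x)^2
    have h2 : c*(2*μ) = ν^2 := by rw [hcdef]; field_simp
    have h3 : c*(2*μ)*(u x)^2 = ν^2*(u x)^2 := by rw [h2]
    nlinarith [sq_nonneg (μ * v x - ν * u x), h3, hμ]
  have hνK : ν * (∫ x in (0:ℝ)..L, u x * v x) ≤ (μ/2)*J + c*I2 := by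
    rw [← intervalIntegral.integral_const_mul, ← hKval]
    exact hK
  have hJnn : 0 ≤ J := intervalIntegral.integral_nonneg hL.le (fun x _ => sq_nonneg _)
  have hJ'nn : 0 ≤ J' := intervalIntegral.integral_nonneg hL.le (fun x _ => sq_nonneg _)
  have hcI2 : c*I2 ≤ c*U := mul_le_mul_of_nonneg_left hU hcpos.le
  have hmuJ : 0 ≤ μ * J := mul_nonneg hμ.le hJnn
  have hJ'b : J' ≤ c*U := by linarith
  have hJb : J ≤ 2*(c*U)/μ := by
    rw [le_div_iff₀ hμ]; linarith
  -- Step 3: bound the second derivative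
  have hdd : ∫ x in (0:ℝ)..L, (deriv (deriv v) x)^2
      = ∫ x in (0:ℝ)..L, (μ*v x - ν*u x)^2 := by
    apply int_congr hL.le
    intro x hx
    have h2 := heq2 x hx
    have hval : deriv (deriv v) x = μ * v x - ν * u x := by linarith
    rw [hval]
  have hmono2 : ∫ x in (0:ℝ)..L, (μ*v x - ν*u x)^2
      ≤ ∫ x in (0:ℝ)..L, (2*μ^2*(v x)^2 + 2*ν^2*(u x)^2) := by
    apply intervalIntegral.integral_mono_on hL.le
      ((((continuous_const.mul hvcont).sub (continuous_const.mul hucont)).pow 2).intervalIntegrable 0 L)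
      (((continuous_const.mul (hvcont.pow 2)).add
        (continuous_const.mul (hucont.pow 2))).intervalIntegrable 0 L)
    intro x _
    show (μ*v x - ν*u x)^2 ≤ 2*μ^2*(v x)^2 + 2*ν^2*(u x)^2
    nlinarith [sq_nonneg (μ * v x + ν * u x)]
  have hval2 : ∫ x in (0:ℝ)..L, (2*μ^2*(v x)^2 + 2*ν^2*(u x)^2)
      = 2*μ^2*J + 2*ν^2*I2 := by
    rw [intervalIntegral.integral_add (f := fun x => 2*μ^2*(v x)^2) (g := fun x => 2*ν^2*(u x)^2)
      ((continuous_const.mul (hvcont.pow 2)).intervalIntegrable 0 L)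
      ((continuous_const.mul (hucont.pow 2)).intervalIntegrable 0 L),
      intervalIntegral.integral_const_mul, intervalIntegral.integral_const_mul]
  have hddb : ∫ x in (0:ℝ)..L, (deriv (deriv v) x)^2 ≤ 2*μ^2*(2*(c*U)/μ) + 2*ν^2*U := by
    rw [hdd]
    have h1 : 2*μ^2*J ≤ 2*μ^2*(2*(c*U)/μ) :=
      mul_le_mul_of_nonneg_left hJb (by positivity)
    have h2 : 2*ν^2*I2 ≤ 2*ν^2*U := mul_le_mul_of_nonneg_left hU (by positivity)
    calc _ ≤ 2*μ^2*J + 2*ν^2*I2 := by rw [← hval2]; exact hmono2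
    _ ≤ _ := by linarith
  linarith [hddb, hJb, hJ'b]
end

section
/- Let (u, v) be a non-constant positive stationary solution of the chemotaxis system. If u is monotone increasing on (0, L) (i.e., u'(x) ≥ 0 for all x ∈ (0, L)), then v'(x) > 0 for every x ∈ (0, L); similarly, if u is monotone decreasing on (0, L), then v'(x) < 0 for every x ∈ (0, L). -/
open Real Set MeasureTheory Filter
open Topology

/-- If `deriv f x = 0` and the second derivative at `x` is negative, then `f` takes
smaller values just to the right of `x`. -/
lemma descent (f : ℝ → ℝ) (hf : Differentiable ℝ f) {x b m : ℝ} (hxb : x < b)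
    (h0 : deriv f x = 0) (hm : HasDerivAt (deriv f) m x) (hneg : m < 0) :
    ∃ y ∈ Set.Ioc x b, f y < f x := by
  have hslope : Tendsto (slope (deriv f) x) (𝓝[≠] x) (𝓝 m) :=
    hasDerivAt_iff_tendsto_slope.mp hm
  have hmono : 𝓝[>] x ≤ 𝓝[≠] x :=
    nhdsWithin_mono x (fun y hy => (Set.mem_compl_singleton_iff).mpr (ne_of_gt hy))
  have h1 : ∀ᶠ y in 𝓝[>] x, slope (deriv f) x y < 0 :=
    (hslope.mono_left hmono).eventually_lt_const hneg
  obtain ⟨u, hu, hsub⟩ := mem_nhdsGT_iff_exists_Ioo_subset.mp h1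
  have hu' : x < u := hu
  set y := (x + min u b) / 2 with hy
  have hxy : x < y := by
    have : x < min u b := lt_min hu' hxb
    simp only [hy]; linarith
  have hyu : y < min u b := by
    have : x < min u b := lt_min hu' hxb
    simp only [hy]; linarith
  have hyb : y ≤ b := le_of_lt (lt_of_lt_of_le hyu (min_le_right _ _))
  have hderivneg : ∀ c ∈ Set.Ioo x y, deriv f c < 0 := by
    intro c hc
    have hcu : c ∈ Set.Ioo x u := ⟨hc.1, lt_of_lt_of_le (lt_trans hc.2 hyu) (min_le_left _ _)⟩
    have hs := hsub hcu
    rw [Set.mem_setOf_eq, slope_def_field, h0, sub_zero] at hs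
    have hcx : 0 < c - x := sub_pos.mpr hc.1
    have := mul_neg_of_neg_of_pos hs hcx
    rwa [div_mul_cancel₀ _ (ne_of_gt hcx)] at this
  obtain ⟨c, hc, hceq⟩ := exists_deriv_eq_slope f hxy hf.continuous.continuousOn
    hf.differentiableOn
  refine ⟨y, ⟨hxy, hyb⟩, ?_⟩
  have h2 : (f y - f x) / (y - x) < 0 := hceq ▸ hderivneg c hc
  have h3 : 0 < y - x := sub_pos.mpr hxy
  have := mul_neg_of_neg_of_pos h2 h3
  rw [div_mul_cancel₀ _ (ne_of_gt h3)] at this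
  linarith

/-- No interior minimum where the second derivative is negative. -/
lemma not_interior_min (f : ℝ → ℝ) (hf : Differentiable ℝ f) {p q x m : ℝ}
    (hx : x ∈ Set.Ioo p q) (hmin : IsMinOn f (Set.Icc p q) x)
    (hm : HasDerivAt (deriv f) m x) (hneg : m < 0) : False := by
  have hloc : IsLocalMin f x := hmin.isLocalMin (Icc_mem_nhds hx.1 hx.2)
  have h0 : deriv f x = 0 := hloc.deriv_eq_zero
  obtain ⟨y, hy, hlt⟩ := descent f hf hx.2 h0 hm hneg
  have hle : f x ≤ f y := isMinOn_iff.mp hmin y ⟨le_of_lt (lt_trans hx.1 hy.1), hy.2⟩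
  linarith

/-- Hopf-type barrier argument: a nonnegative solution of `w'' = μ w - r` with `r ≥ 0`
that vanishes to second order at the left endpoint `p` and is positive at `q`
gives a contradiction. -/
lemma barrier {μ K p q : ℝ} (hμ : 0 < μ) (hK : K ^ 2 = μ + 1) (hKpos : 0 < K)
    (hpq : p < q) (w r : ℝ → ℝ)
    (hw : Differentiable ℝ w)
    (heq : ∀ x ∈ Set.Ioo p q, HasDerivAt (deriv w) (μ * w x - r x) x)
    (hr : ∀ x ∈ Set.Ioo p q, 0 ≤ r x)
    (hpos : ∀ x ∈ Set.Icc p q, 0 ≤ w x)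
    (hp0 : w p = 0) (hp1 : deriv w p = 0) (hq : 0 < w q) : False := by
  set E := fun x : ℝ => Real.exp (K * (x - p)) with hE
  have hEpos : ∀ x, 0 < E x := fun x => Real.exp_pos _
  set ε := w q / E q with hεdef
  have hε : 0 < ε := div_pos hq (hEpos q)
  set g := fun x => w x - ε * (E x - 1) with hg
  have hEder : ∀ x, HasDerivAt E (E x * K) x := by
    intro x
    have h1 : HasDerivAt (fun y : ℝ => K * (y - p)) (K * 1) x :=
      ((hasDerivAt_id x).sub_const p).const_mul K
    simpa [hE] using h1.exp
  have hgder : ∀ x, HasDerivAt g (deriv w x - ε * (E x * K)) x := fun x =>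
    ((hw x).hasDerivAt).sub (((hEder x).sub_const 1).const_mul ε)
  have hgderiv : deriv g = fun x => deriv w x - ε * (E x * K) := funext fun x => (hgder x).deriv
  have hgdiff : Differentiable ℝ g := fun x => (hgder x).differentiableAt
  obtain ⟨xm, hxm, hxmin⟩ := isCompact_Icc.exists_isMinOn (nonempty_Icc.mpr hpq.le)
    hgdiff.continuous.continuousOn
  have hgp : g p = 0 := by simp [hg, hE, hp0]
  have hgq : 0 < g q := by
    have h1 : ε * (E q - 1) < w q := by
      rw [hεdef, div_mul_eq_mul_div, div_lt_iff₀ (hEpos q)]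
      nlinarith [hEpos q, hq]
    simp only [hg]; linarith
  have hxm_end : xm = p ∨ xm = q := by
    by_contra hcon
    push_neg at hcon
    have hxm' : xm ∈ Set.Ioo p q :=
      ⟨lt_of_le_of_ne hxm.1 (Ne.symm hcon.1), lt_of_le_of_ne hxm.2 hcon.2⟩
    have hd2 : HasDerivAt (deriv g) (μ * w xm - r xm - ε * (E xm * K * K)) xm := by
      rw [hgderiv]
      exact (heq xm hxm').sub (((hEder xm).mul_const K).const_mul ε)
    have hgle : g xm ≤ 0 := by
      have := isMinOn_iff.mp hxmin p ⟨le_refl p, hpq.le⟩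
      rw [hgp] at this; exact this
    have hwle : w xm ≤ ε * (E xm - 1) := by
      simp only [hg] at hgle; linarith
    have hrm := hr xm hxm'
    have hm : μ * w xm - r xm - ε * (E xm * K * K) < 0 := by
      have hKK : K * K = μ + 1 := by nlinarith [hK]
      rw [mul_assoc, hKK]
      nlinarith [mul_le_mul_of_nonneg_left hwle hμ.le, mul_pos hε hμ,
        mul_pos hε (hEpos xm), hrm]
    exact not_interior_min g hgdiff hxm' hxmin hd2 hm
  have hgnonneg : ∀ x ∈ Set.Icc p q, 0 ≤ g x := by
    intro x hx
    have := isMinOn_iff.mp hxmin x hx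
    rcases hxm_end with h | h
    · rw [h, hgp] at this; linarith
    · rw [h] at this; linarith [hgq]
  have hder0 : HasDerivAt w 0 p := hp1 ▸ (hw p).hasDerivAt
  have hslope : Tendsto (slope w p) (𝓝[≠] p) (𝓝 0) := hasDerivAt_iff_tendsto_slope.mp hder0
  have hmono : 𝓝[>] p ≤ 𝓝[≠] p :=
    nhdsWithin_mono p (fun y hy => (Set.mem_compl_singleton_iff).mpr (ne_of_gt hy))
  have h1 : ∀ᶠ y in 𝓝[>] p, slope w p y < ε * K :=
    (hslope.mono_left hmono).eventually_lt_const (by positivity)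
  have h2 : ∀ᶠ y in 𝓝[>] p, y ∈ Set.Ioo p q :=
    eventually_of_mem (Ioo_mem_nhdsGT_of_mem ⟨le_refl p, hpq⟩) (fun y hy => hy)
  obtain ⟨y, hy1, hy2⟩ := (h1.and h2).exists
  have hyp : 0 < y - p := sub_pos.mpr hy2.1
  have hwy : ε * (E y - 1) ≤ w y := by
    have := hgnonneg y ⟨hy2.1.le, hy2.2.le⟩
    simp only [hg] at this; linarith
  have hexp : K * (y - p) ≤ E y - 1 := by
    have := Real.add_one_le_exp (K * (y - p))
    simp only [hE]; linarith
  have hfin : ε * K ≤ slope w p y := by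
    rw [slope_def_field, hp0, sub_zero, le_div_iff₀ hyp]
    calc ε * K * (y - p) = ε * (K * (y - p)) := by ring
    _ ≤ ε * (E y - 1) := by nlinarith
    _ ≤ w y := hwy
  linarith

/-- Core positivity lemma: if `w'' = μ w - r` on `(0, L)` with `r ≥ 0`, `w(0) = w(L) = 0`
and `w` is not identically zero on `(0, L)`, then `w > 0` on `(0, L)`. -/
lemma core {μ L : ℝ} (hμ : 0 < μ) (hL : 0 < L) (w r : ℝ → ℝ)
    (hw : Differentiable ℝ w)
    (heq : ∀ x ∈ Set.Ioo (0 : ℝ) L, HasDerivAt (deriv w) (μ * w x - r x) x)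
    (hr : ∀ x ∈ Set.Ioo (0 : ℝ) L, 0 ≤ r x)
    (h0 : w 0 = 0) (hLz : w L = 0)
    (hnz : ∃ x1 ∈ Set.Ioo (0 : ℝ) L, w x1 ≠ 0) :
    ∀ x ∈ Set.Ioo (0 : ℝ) L, 0 < w x := by
  have hK2 : (Real.sqrt (μ + 1)) ^ 2 = μ + 1 := Real.sq_sqrt (by linarith)
  have hKpos : (0 : ℝ) < Real.sqrt (μ + 1) := Real.sqrt_pos.mpr (by linarith)
  -- Step A: weak minimum principle, `w ≥ 0` on `[0, L]`.
  have hnonneg : ∀ x ∈ Set.Icc (0 : ℝ) L, 0 ≤ w x := by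
    by_contra hcon
    push_neg at hcon
    obtain ⟨z, hz, hzneg⟩ := hcon
    obtain ⟨xm, hxm, hxmin⟩ := isCompact_Icc.exists_isMinOn (nonempty_Icc.mpr hL.le)
      hw.continuous.continuousOn
    have hneg : w xm < 0 := lt_of_le_of_lt (isMinOn_iff.mp hxmin z hz) hzneg
    have hxm0 : xm ≠ 0 := fun h => by rw [h, h0] at hneg; exact lt_irrefl 0 hneg
    have hxmL : xm ≠ L := fun h => by rw [h, hLz] at hneg; exact lt_irrefl 0 hneg
    have hxm' : xm ∈ Set.Ioo (0 : ℝ) L :=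
      ⟨lt_of_le_of_ne hxm.1 (Ne.symm hxm0), lt_of_le_of_ne hxm.2 hxmL⟩
    exact not_interior_min w hw hxm' hxmin (heq xm hxm') (by nlinarith [hr xm hxm'])
  -- Step B: strict positivity.
  intro x hx
  rcases (hnonneg x ⟨hx.1.le, hx.2.le⟩).lt_or_eq with h | h
  · exact h
  exfalso
  have hwx : w x = 0 := h.symm
  have hderx : deriv w x = 0 := by
    have hmin : IsMinOn w (Set.Icc (0 : ℝ) L) x :=
      isMinOn_iff.mpr fun y hy => by rw [hwx]; exact hnonneg y hy
    exact (hmin.isLocalMin (Icc_mem_nhds hx.1 hx.2)).deriv_eq_zero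
  obtain ⟨x1, hx1, hx1ne⟩ := hnz
  have hx1pos : 0 < w x1 := (hnonneg x1 ⟨hx1.1.le, hx1.2.le⟩).lt_of_ne (Ne.symm hx1ne)
  have hxx1 : x ≠ x1 := fun hxx => by rw [hxx] at hwx; exact hx1ne hwx
  rcases lt_or_gt_of_ne hxx1 with hlt | hgt
  · exact barrier hμ hK2 hKpos hlt w r hw
      (fun y hy => heq y ⟨lt_trans hx.1 hy.1, lt_trans hy.2 hx1.2⟩)
      (fun y hy => hr y ⟨lt_trans hx.1 hy.1, lt_trans hy.2 hx1.2⟩)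
      (fun y hy => hnonneg y ⟨le_trans hx.1.le hy.1, le_trans hy.2 hx1.2.le⟩)
      hwx hderx hx1pos
  · -- reflect: `W y = w (x + x1 - y)` on `[x1, x]`.
    set c := x + x1 with hc
    have hWdiff : Differentiable ℝ (fun y => w (c - y)) :=
      hw.comp ((differentiable_id.const_sub c))
    have hWder : deriv (fun y => w (c - y)) = fun y => -deriv w (c - y) :=
      funext fun y => deriv_comp_const_sub w c y
    have key : ∀ y ∈ Set.Ioo x1 x,
        HasDerivAt (deriv (fun z => w (c - z))) (μ * w (c - y) - r (c - y)) y := by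
      intro y hy
      have hcy' : c - y ∈ Set.Ioo (0 : ℝ) L :=
        ⟨by simp only [hc]; nlinarith [hx1.1, hy.2], by simp only [hc]; nlinarith [hx.2, hy.1]⟩
      have hg : HasDerivAt (fun z : ℝ => c - z) (-1) y := (hasDerivAt_id y).const_sub c
      have h1 := (heq _ hcy').comp y hg
      have h2 : HasDerivAt (fun z => deriv w (c - z)) (-(μ * w (c - y) - r (c - y))) y := by
        have h1' := h1
        rw [show (μ * w (c - y) - r (c - y)) * -1 = -(μ * w (c - y) - r (c - y)) by ring] at h1'
        exact h1'
      rw [hWder]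
      have h3 := h2.neg
      rw [neg_neg] at h3
      exact h3
    refine barrier hμ hK2 hKpos hgt (fun y => w (c - y)) (fun y => r (c - y)) hWdiff key
      (fun y hy => hr (c - y)
        ⟨by simp only [hc]; nlinarith [hx1.1, hy.2], by simp only [hc]; nlinarith [hx.2, hy.1]⟩)
      (fun y hy => hnonneg (c - y)
        ⟨by simp only [hc]; nlinarith [hx1.1.le, hy.2], by simp only [hc]; nlinarith [hx.2.le, hy.1]⟩)
      ?_ ?_ ?_
    · show w (c - x1) = 0
      rw [show c - x1 = x by simp [hc]]; exact hwx
    · rw [hWder]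
      show -deriv w (c - x1) = 0
      rw [show c - x1 = x by simp [hc], hderx, neg_zero]
    · show 0 < w (c - x)
      rw [show c - x = x1 by simp [hc]]; exact hx1pos

theorem stmt_10 (χ a b μ ν L : ℝ) (hχ : 0 < χ) (ha : 0 < a) (hb : 0 < b)
    (hμ : 0 < μ) (hν : 0 < ν) (hL : 0 < L)
    (u v : ℝ → ℝ) (hsol : IsStatSol χ a b μ ν L u v) (hnc : NonConst L u) :
    ((∀ x ∈ Ioo (0 : ℝ) L, 0 ≤ deriv u x) → ∀ x ∈ Ioo (0 : ℝ) L, 0 < deriv v x) ∧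
    ((∀ x ∈ Ioo (0 : ℝ) L, deriv u x ≤ 0) → ∀ x ∈ Ioo (0 : ℝ) L, deriv v x < 0) := by
  obtain ⟨hu2, hv2, hupos, hvpos, hequ, heqv, hu0, huL, hv0, hvL⟩ := hsol
  have hv2' : ContDiff ℝ ((1 : ℕ∞) + 1) v := by exact_mod_cast hv2
  have hvd1 : ContDiff ℝ 1 (deriv v) := (contDiff_succ_iff_deriv.mp hv2').2.2
  have hwdiff : Differentiable ℝ (deriv v) := hvd1.differentiable (by norm_num)
  have hvdiff : Differentiable ℝ v := hv2.differentiable (by norm_num)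
  have hudiff : Differentiable ℝ u := hu2.differentiable (by norm_num)
  -- the second derivative of `v'` in the interior
  have hdd : ∀ x ∈ Ioo (0 : ℝ) L,
      HasDerivAt (deriv (deriv v)) (μ * deriv v x - ν * deriv u x) x := by
    intro x hx
    have hg : HasDerivAt (fun y => μ * v y - ν * u y) (μ * deriv v x - ν * deriv u x) x :=
      ((hvdiff x).hasDerivAt.const_mul μ).sub ((hudiff x).hasDerivAt.const_mul ν)
    refine hg.congr_of_eventuallyEq ?_
    filter_upwards [isOpen_Ioo.mem_nhds hx] with y hy
    have := heqv y hy; linarith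
  -- `v'` is not identically zero on `(0, L)`
  have hnz : ∃ x1 ∈ Ioo (0 : ℝ) L, deriv v x1 ≠ 0 := by
    by_contra hcon
    push_neg at hcon
    apply hnc
    have hval : ∀ x ∈ Ioo (0 : ℝ) L, u x = μ * v 0 / ν := by
      intro x hx
      have hvx : v x = v 0 := by
        obtain ⟨cc, hcc, hslope⟩ := exists_deriv_eq_slope v hx.1
          hvdiff.continuous.continuousOn hvdiff.differentiableOn
        rw [hcon cc ⟨hcc.1, lt_trans hcc.2 hx.2⟩] at hslope
        have hx0 : x - 0 ≠ 0 := by simpa using (ne_of_gt hx.1)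
        have := div_eq_zero_iff.mp hslope.symm
        rcases this with h | h
        · linarith
        · exact absurd h hx0
      have hdv0 : deriv (deriv v) x = 0 := by
        have heq0 : deriv v =ᶠ[𝓝 x] (fun _ => (0 : ℝ)) := by
          filter_upwards [isOpen_Ioo.mem_nhds hx] with y hy
          exact hcon y hy
        rw [heq0.deriv_eq, deriv_const]
      have := heqv x hx
      rw [hdv0, hvx] at this
      field_simp
      linarith
    refine ⟨μ * v 0 / ν, fun x hx => ?_⟩
    have hneb : ∀ z ∈ Icc (0 : ℝ) L, (𝓝[Ioo (0 : ℝ) L] z).NeBot := by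
      intro z hz
      refine mem_closure_iff_nhdsWithin_neBot.mp ?_
      rw [closure_Ioo hL.ne]
      exact hz
    have hlim : ∀ z ∈ Icc (0 : ℝ) L, u z = μ * v 0 / ν := by
      intro z hz
      have := hneb z hz
      have h1 : Tendsto u (𝓝[Ioo (0 : ℝ) L] z) (𝓝 (u z)) :=
        (hudiff.continuous.continuousWithinAt)
      have h2 : Tendsto u (𝓝[Ioo (0 : ℝ) L] z) (𝓝 (μ * v 0 / ν)) := by
        refine Tendsto.congr' ?_ tendsto_const_nhds
        filter_upwards [self_mem_nhdsWithin] with y hy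
        exact (hval y hy).symm
      exact tendsto_nhds_unique h1 h2
    exact hlim x hx
  constructor
  · intro hmono
    exact core hμ hL (deriv v) (fun y => ν * deriv u y) hwdiff hdd
      (fun y hy => mul_nonneg hν.le (hmono y hy)) hv0 hvL hnz
  · intro hmono x hx
    have hneg : ∀ y ∈ Ioo (0 : ℝ) L, 0 < -deriv v y := by
      refine core hμ hL (fun y => -deriv v y) (fun y => -(ν * deriv u y)) hwdiff.neg ?_ ?_
        (by simp [hv0]) (by simp [hvL]) ?_
      · intro y hy
        have h2 : deriv (fun z => -deriv v z) = fun z => -deriv (deriv v) z :=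
          funext fun z => deriv.neg
        rw [h2]
        have h1 := (hdd y hy).neg
        exact h1.congr_deriv (by beta_reduce; ring)
      · intro y hy
        show 0 ≤ -(ν * deriv u y)
        nlinarith [mul_nonneg hν.le (neg_nonneg.mpr (hmono y hy))]
      · obtain ⟨x1, h1, h2⟩ := hnz
        exact ⟨x1, h1, by simpa using h2⟩
    linarith [hneg x hx]
end

section
/- Let ((u_n, v_n))_{n≥1} be a sequence of non-constant positive stationary solutions of the chemotaxis system with parameters χ = χ_n, where χ_n → ∞. Suppose u_n'(x) ≤ 0 for all x ∈ (0, L) and all n, liminf_{n→∞} u_n(0) > a/b, limsup_{n→∞} u_n(0) < ∞, and there exist 0 < c < d < L with limsup_{n→∞} max_{x ∈ [c,d]} u_n(x) < a/b. Then u_n → 0 locally uniformly on (0, L), i.e., uniformly on every compact subset of the open interval (0, L). -/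
open Real Set MeasureTheory Filter

open Topology

namespace Stmt17

lemma eq_of_closure {W : ℝ → ℝ} {s : Set ℝ} {z k : ℝ} (hW : ContinuousAt W z)
    (hz : z ∈ closure s) (h : ∀ y ∈ s, W y = k) : W z = k := by
  haveI : (nhdsWithin z s).NeBot := mem_closure_iff_nhdsWithin_neBot.mp hz
  refine tendsto_nhds_unique (hW.continuousWithinAt : ContinuousWithinAt W s z) ?_
  refine Tendsto.congr' ?_ tendsto_const_nhds
  filter_upwards [self_mem_nhdsWithin] with y hy
  exact (h y hy).symm

structure Pack (χ a b μ ν L M : ℝ) (u v : ℝ → ℝ) : Prop where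
  hcu : Continuous u
  hcv : Continuous v
  hcdu : Continuous (deriv u)
  hcdv : Continuous (deriv v)
  hdu : Differentiable ℝ u
  hdv : Differentiable ℝ v
  upos : ∀ x ∈ Icc (0:ℝ) L, 0 < u x
  vpos : ∀ x ∈ Icc (0:ℝ) L, 0 < v x
  anti_u : AntitoneOn u (Icc 0 L)
  anti_v : AntitoneOn v (Icc 0 L)
  uM : ∀ x ∈ Icc (0:ℝ) L, u x ≤ M
  hM0 : 0 < M
  vM : ∀ x ∈ Icc (0:ℝ) L, μ * v x ≤ ν * M
  dv0 : deriv v 0 = 0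
  dvL : deriv v L = 0
  dv_nonpos : ∀ x ∈ Icc (0:ℝ) L, deriv v x ≤ 0
  dv_int : ∀ x ∈ Icc (0:ℝ) L, deriv v x = ∫ t in (0:ℝ)..x, (μ * v t - ν * u t)
  J_int : ∀ x ∈ Icc (0:ℝ) L, deriv u x - χ * (u x * deriv v x / v x)
      = - ∫ t in (0:ℝ)..x, u t * (a - b * u t)
  J_nonneg : ∀ x ∈ Icc (0:ℝ) L, 0 ≤ deriv u x - χ * (u x * deriv v x / v x)
  balance : (∫ t in (0:ℝ)..L, u t * (a - b * u t)) = 0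

section mk

variable {χ a b μ ν L M : ℝ} {u v : ℝ → ℝ}

lemma mkPack (ha : 0 < a) (hb : 0 < b) (hμ : 0 < μ) (hν : 0 < ν) (hL : 0 < L) (hχ : 0 < χ)
    (hsol : IsStatSol χ a b μ ν L u v)
    (hmono : ∀ x ∈ Ioo (0:ℝ) L, deriv u x ≤ 0)
    (hM : u 0 ≤ M) (hM1 : 0 < M) :
    Pack χ a b μ ν L M u v := by
  obtain ⟨hu2, hv2, upos, vpos, equ, eqv, du0, duL, dv0, dvL⟩ := hsol
  have hcu : Continuous u := hu2.continuous
  have hcv : Continuous v := hv2.continuous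
  have hcdu : Continuous (deriv u) := hu2.continuous_deriv (by norm_num)
  have hcdv : Continuous (deriv v) := hv2.continuous_deriv (by norm_num)
  have hdu : Differentiable ℝ u := hu2.differentiable (by norm_num)
  have hdv : Differentiable ℝ v := hv2.differentiable (by norm_num)
  have hdu' : Differentiable ℝ (deriv u) := by
    have h2 : ContDiff ℝ ((1:ℕ) + 1) u := by exact_mod_cast hu2
    exact (contDiff_succ_iff_deriv.mp h2).2.2.differentiable (by norm_num)
  have hdv' : Differentiable ℝ (deriv v) := by
    have h2 : ContDiff ℝ ((1:ℕ) + 1) v := by exact_mod_cast hv2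
    exact (contDiff_succ_iff_deriv.mp h2).2.2.differentiable (by norm_num)
  have hIoosub : Ioo (0:ℝ) L ⊆ Icc 0 L := Ioo_subset_Icc_self
  have h0m : (0:ℝ) ∈ Icc (0:ℝ) L := ⟨le_refl _, hL.le⟩
  have hLm : L ∈ Icc (0:ℝ) L := ⟨hL.le, le_refl _⟩
  have hclos : closure (Ioo (0:ℝ) L) = Icc 0 L := closure_Ioo hL.ne
  have hmem : ∀ x ∈ Icc (0:ℝ) L, x = 0 ∨ x ∈ Ioo (0:ℝ) L ∨ x = L := by
    intro x hx
    rcases eq_or_lt_of_le hx.1 with h1 | h1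
    · exact Or.inl h1.symm
    rcases eq_or_lt_of_le hx.2 with h2 | h2
    · exact Or.inr (Or.inr h2)
    · exact Or.inr (Or.inl ⟨h1, h2⟩)
  have anti_u : AntitoneOn u (Icc 0 L) := by
    apply antitoneOn_of_deriv_nonpos (convex_Icc 0 L) hcu.continuousOn
      (fun x _ => (hdu x).differentiableWithinAt)
    rw [interior_Icc]; exact hmono
  have uM : ∀ x ∈ Icc (0:ℝ) L, u x ≤ M :=
    fun x hx => le_trans (anti_u h0m hx hx.1) hM
  -- FTC identity for deriv v
  have hWc : Continuous (fun t => μ * v t - ν * u t) :=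
    (continuous_const.mul hcv).sub (continuous_const.mul hcu)
  have dv_int : ∀ x ∈ Icc (0:ℝ) L, deriv v x = ∫ t in (0:ℝ)..x, (μ * v t - ν * u t) := by
    set G : ℝ → ℝ := fun x => deriv v x - ∫ t in (0:ℝ)..x, (μ * v t - ν * u t) with hG
    have hGc : Continuous G :=
      hcdv.sub (intervalIntegral.continuous_primitive (fun a b => hWc.intervalIntegrable a b) 0)
    have pair : ∀ x ∈ Ioo (0:ℝ) L, ∀ y ∈ Ioo (0:ℝ) L, G x = G y := by
      intro x hx y hy
      have hsub : uIcc y x ⊆ Ioo (0:ℝ) L := (ordConnected_Ioo).uIcc_subset hy hx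
      have key : ∀ t ∈ uIcc y x, HasDerivAt (deriv v) (μ * v t - ν * u t) t := by
        intro t ht
        have ht' : t ∈ Ioo (0:ℝ) L := hsub ht
        have h1 : HasDerivAt (deriv v) (deriv (deriv v) t) t := (hdv' t).hasDerivAt
        have h2 : deriv (deriv v) t = μ * v t - ν * u t := by
          have := eqv t ht'; linarith
        rwa [h2] at h1
      have hint := intervalIntegral.integral_eq_sub_of_hasDerivAt key (hWc.intervalIntegrable y x)
      have hsplit : (∫ t in (0:ℝ)..x, (μ * v t - ν * u t))
          - ∫ t in (0:ℝ)..y, (μ * v t - ν * u t) = ∫ t in y..x, (μ * v t - ν * u t) :=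
        intervalIntegral.integral_interval_sub_left (hWc.intervalIntegrable 0 x)
          (hWc.intervalIntegrable 0 y)
      simp only [hG]
      linarith [hint, hsplit]
    have hy₀ : L/2 ∈ Ioo (0:ℝ) L := ⟨by linarith, by linarith⟩
    have hG0 : G 0 = 0 := by simp [hG, dv0]
    have hGy₀ : G (L/2) = 0 := by
      have h00 : G 0 = G (L/2) :=
        eq_of_closure hGc.continuousAt (by rw [hclos]; exact h0m) (fun y hy => pair y hy _ hy₀)
      rw [← h00, hG0]
    have hIoo : ∀ x ∈ Ioo (0:ℝ) L, G x = 0 := fun x hx => (pair x hx _ hy₀).trans hGy₀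
    have hGL : G L = 0 := eq_of_closure hGc.continuousAt (by rw [hclos]; exact hLm) hIoo
    intro x hx
    have hx0 : G x = 0 := by
      rcases hmem x hx with h | h | h
      · rw [h]; exact hG0
      · exact hIoo x h
      · rw [h]; exact hGL
    simp only [hG] at hx0
    linarith [hx0]
  -- FTC identity for J
  have hφc : Continuous (fun t => u t * (a - b * u t)) :=
    hcu.mul (continuous_const.sub (continuous_const.mul hcu))
  have hPc : Continuous (fun x => ∫ t in (0:ℝ)..x, u t * (a - b * u t)) :=
    intervalIntegral.continuous_primitive (fun a b => hφc.intervalIntegrable a b) 0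
  have hJat : ∀ z ∈ Icc (0:ℝ) L,
      ContinuousAt (fun x => deriv u x - χ * (u x * deriv v x / v x)) z := by
    intro z hz
    exact hcdu.continuousAt.sub (continuousAt_const.mul
      (((hcu.continuousAt.mul hcdv.continuousAt)).div hcv.continuousAt (vpos z hz).ne'))
  have J_int : ∀ x ∈ Icc (0:ℝ) L, deriv u x - χ * (u x * deriv v x / v x)
      = - ∫ t in (0:ℝ)..x, u t * (a - b * u t) := by
    set G : ℝ → ℝ := fun x => (deriv u x - χ * (u x * deriv v x / v x))
      + ∫ t in (0:ℝ)..x, u t * (a - b * u t) with hG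
    have hGat : ∀ z ∈ Icc (0:ℝ) L, ContinuousAt G z :=
      fun z hz => (hJat z hz).add hPc.continuousAt
    have pair : ∀ x ∈ Ioo (0:ℝ) L, ∀ y ∈ Ioo (0:ℝ) L, G x = G y := by
      intro x hx y hy
      have hsub : uIcc y x ⊆ Ioo (0:ℝ) L := (ordConnected_Ioo).uIcc_subset hy hx
      have key : ∀ t ∈ uIcc y x, HasDerivAt
          (fun x => deriv u x - χ * (u x * deriv v x / v x)) (-(u t * (a - b * u t))) t := by
        intro t ht
        have ht' : t ∈ Ioo (0:ℝ) L := hsub ht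
        have hfl : DifferentiableAt ℝ (fun y => u y * deriv v y / v y) t :=
          ((hdu t).mul (hdv' t)).div (hdv t) (vpos t (hIoosub ht')).ne'
        have h1 : HasDerivAt (deriv u) (deriv (deriv u) t) t := (hdu' t).hasDerivAt
        have h2 : HasDerivAt (fun y => u y * deriv v y / v y)
            (deriv (fun y => u y * deriv v y / v y) t) t := hfl.hasDerivAt
        have h3 := h1.sub (h2.const_mul χ)
        have h4 : deriv (deriv u) t - χ * deriv (fun y => u y * deriv v y / v y) t
            = -(u t * (a - b * u t)) := by
          have := equ t ht'; linarith
        rwa [h4] at h3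
      have hint := intervalIntegral.integral_eq_sub_of_hasDerivAt key
        ((hφc.neg).intervalIntegrable y x)
      have hneg : (∫ t in y..x, -(u t * (a - b * u t)))
          = - ∫ t in y..x, (u t * (a - b * u t)) := intervalIntegral.integral_neg
      have hsplit : (∫ t in (0:ℝ)..x, u t * (a - b * u t))
          - ∫ t in (0:ℝ)..y, u t * (a - b * u t) = ∫ t in y..x, u t * (a - b * u t) :=
        intervalIntegral.integral_interval_sub_left (hφc.intervalIntegrable 0 x)
          (hφc.intervalIntegrable 0 y)
      simp only [hG]
      rw [hneg] at hint
      linarith [hint, hsplit]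
    have hy₀ : L/2 ∈ Ioo (0:ℝ) L := ⟨by linarith, by linarith⟩
    have hG0 : G 0 = 0 := by simp [hG, du0, dv0]
    have hGy₀ : G (L/2) = 0 := by
      have h00 : G 0 = G (L/2) :=
        eq_of_closure (hGat 0 h0m) (by rw [hclos]; exact h0m) (fun y hy => pair y hy _ hy₀)
      rw [← h00, hG0]
    have hIoo : ∀ x ∈ Ioo (0:ℝ) L, G x = 0 := fun x hx => (pair x hx _ hy₀).trans hGy₀
    have hGL : G L = 0 := eq_of_closure (hGat L hLm) (by rw [hclos]; exact hLm) hIoo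
    intro x hx
    have hx0 : G x = 0 := by
      rcases hmem x hx with h | h | h
      · rw [h]; exact hG0
      · exact hIoo x h
      · rw [h]; exact hGL
    simp only [hG] at hx0
    linarith [hx0]
  -- balance
  have balance : (∫ t in (0:ℝ)..L, u t * (a - b * u t)) = 0 := by
    have h1 := J_int L hLm
    rw [duL, dvL] at h1
    simp at h1
    linarith [h1]
  -- J nonneg
  have J_nonneg : ∀ x ∈ Icc (0:ℝ) L, 0 ≤ deriv u x - χ * (u x * deriv v x / v x) := by
    intro x hx
    rw [J_int x hx]
    have hF : (∫ t in (0:ℝ)..x, u t * (a - b * u t)) ≤ 0 := by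
      by_cases hcase : a / b ≤ u x
      · have hnp : ∀ t ∈ Icc (0:ℝ) x, u t * (a - b * u t) ≤ 0 := by
          intro t ht
          have htm : t ∈ Icc (0:ℝ) L := ⟨ht.1, le_trans ht.2 hx.2⟩
          have hut : u x ≤ u t := anti_u htm hx ht.2
          have hba : a ≤ b * u t := by
            rw [div_le_iff₀ hb] at hcase
            nlinarith
          have := (upos t htm).le
          nlinarith
        have hmono' := intervalIntegral.integral_mono_on (μ := volume) hx.1
          (hφc.intervalIntegrable 0 x)
          (intervalIntegrable_const (c := (0:ℝ)))
          hnp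
        simpa using hmono'
      · push_neg at hcase
        have hnn : ∀ t ∈ Icc x L, 0 ≤ u t * (a - b * u t) := by
          intro t ht
          have htm : t ∈ Icc (0:ℝ) L := ⟨le_trans hx.1 ht.1, ht.2⟩
          have hut : u t ≤ u x := anti_u hx htm ht.1
          have hba : b * u t ≤ a := by
            rw [lt_div_iff₀ hb] at hcase
            nlinarith
          have := (upos t htm).le
          nlinarith
        have h2 : 0 ≤ ∫ t in x..L, u t * (a - b * u t) :=
          intervalIntegral.integral_nonneg hx.2 hnn
        have h3 : (∫ t in (0:ℝ)..x, u t * (a - b * u t))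
            + ∫ t in x..L, u t * (a - b * u t) = ∫ t in (0:ℝ)..L, u t * (a - b * u t) :=
          intervalIntegral.integral_add_adjacent_intervals (hφc.intervalIntegrable 0 x)
            (hφc.intervalIntegrable x L)
        rw [balance] at h3
        linarith
    linarith
  -- deriv v ≤ 0
  have dv_nonpos : ∀ x ∈ Icc (0:ℝ) L, deriv v x ≤ 0 := by
    intro x hx
    rcases hmem x hx with h | h | h
    · rw [h, dv0]
    · have h1 := J_nonneg x hx
      have h2 := hmono x h
      have h3 : χ * (u x * deriv v x / v x) ≤ 0 := by linarith
      have hux := upos x hx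
      have hvx := vpos x hx
      by_contra hcon
      push_neg at hcon
      have : 0 < u x * deriv v x / v x := by positivity
      nlinarith
    · rw [h, dvL]
  have anti_v : AntitoneOn v (Icc 0 L) := by
    apply antitoneOn_of_deriv_nonpos (convex_Icc 0 L) hcv.continuousOn
      (fun x _ => (hdv x).differentiableWithinAt)
    rw [interior_Icc]
    exact fun x hx => dv_nonpos x (hIoosub hx)
  -- maximum principle for v
  have v0max : μ * v 0 ≤ ν * u 0 := by
    by_contra hcon
    push_neg at hcon
    have hW0 : 0 < μ * v 0 - ν * u 0 := by linarith
    have hev : ∀ᶠ t in 𝓝 (0:ℝ), 0 < μ * v t - ν * u t :=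
      (hWc.tendsto 0).eventually (eventually_gt_nhds hW0)
    obtain ⟨ρ, hρ, hball⟩ := Metric.eventually_nhds_iff.mp hev
    set r := min (ρ/2) L with hr
    have hr0 : 0 < r := lt_min (by linarith) hL
    have hrL : r ≤ L := min_le_right _ _
    have hrm : r ∈ Icc (0:ℝ) L := ⟨hr0.le, hrL⟩
    have hpos : 0 < ∫ t in (0:ℝ)..r, (μ * v t - ν * u t) := by
      apply intervalIntegral.intervalIntegral_pos_of_pos_on (hWc.intervalIntegrable 0 r)
      · intro t ht
        apply hball
        rw [Real.dist_eq, sub_zero, abs_of_pos ht.1]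
        calc t < r := ht.2
        _ ≤ ρ/2 := min_le_left _ _
        _ < ρ := by linarith
      · exact hr0
    have := dv_nonpos r hrm
    rw [dv_int r hrm] at this
    linarith
  have vM : ∀ x ∈ Icc (0:ℝ) L, μ * v x ≤ ν * M := by
    intro x hx
    have h1 : v x ≤ v 0 := anti_v h0m hx hx.1
    nlinarith [upos 0 h0m]
  exact ⟨hcu, hcv, hcdu, hcdv, hdu, hdv, upos, vpos, anti_u, anti_v, uM, hM1, vM,
    dv0, dvL, dv_nonpos, dv_int, J_int, J_nonneg, balance⟩

end mk
end Stmt17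

namespace Stmt17

section facts

variable {χ a b μ ν L M : ℝ} {u v : ℝ → ℝ}

lemma int_le_const {f : ℝ → ℝ} {s t C : ℝ} (hst : s ≤ t)
    (hf : IntervalIntegrable f volume s t)
    (h : ∀ r ∈ Icc s t, f r ≤ C) : (∫ r in s..t, f r) ≤ (t - s) * C := by
  have h2 := intervalIntegral.integral_mono_on (μ := volume) hst hf
    (intervalIntegrable_const (c := C)) h
  rwa [intervalIntegral.integral_const, smul_eq_mul] at h2

lemma const_le_int {f : ℝ → ℝ} {s t C : ℝ} (hst : s ≤ t)
    (hf : IntervalIntegrable f volume s t)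
    (h : ∀ r ∈ Icc s t, C ≤ f r) : (t - s) * C ≤ ∫ r in s..t, f r := by
  have h2 := intervalIntegral.integral_mono_on (μ := volume) hst
    (intervalIntegrable_const (c := C)) hf h
  rwa [intervalIntegral.integral_const, smul_eq_mul] at h2

/-- The second-order information about `v`, in integrated "segment" form. -/
lemma seg (P : Pack χ a b μ ν L M u v) {s t : ℝ} (hs : s ∈ Icc (0:ℝ) L)
    (ht : t ∈ Icc (0:ℝ) L) :
    ν * ∫ r in s..t, u r = μ * (∫ r in s..t, v r) - (deriv v t - deriv v s) := by
  have hWc : Continuous (fun r => μ * v r - ν * u r) :=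
    (continuous_const.mul P.hcv).sub (continuous_const.mul P.hcu)
  have h1 : deriv v t - deriv v s = ∫ r in s..t, (μ * v r - ν * u r) := by
    rw [P.dv_int t ht, P.dv_int s hs]
    exact intervalIntegral.integral_interval_sub_left (hWc.intervalIntegrable 0 t)
      (hWc.intervalIntegrable 0 s)
  have h2 : (∫ r in s..t, (μ * v r - ν * u r))
      = μ * (∫ r in s..t, v r) - ν * ∫ r in s..t, u r := by
    rw [intervalIntegral.integral_sub (f := fun r => μ * v r) (g := fun r => ν * u r)
      ((continuous_const.mul P.hcv).intervalIntegrable s t)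
      ((continuous_const.mul P.hcu).intervalIntegrable s t),
      intervalIntegral.integral_const_mul, intervalIntegral.integral_const_mul]
  linarith

/-- Fundamental theorem of calculus for `v`. -/
lemma vdiff (P : Pack χ a b μ ν L M u v) (s t : ℝ) :
    (∫ r in s..t, deriv v r) = v t - v s :=
  intervalIntegral.integral_eq_sub_of_hasDerivAt (fun r _ => (P.hdv r).hasDerivAt)
    (P.hcdv.intervalIntegrable s t)

/-- Lipschitz bound for `deriv v`. -/
lemma lipdv (P : Pack χ a b μ ν L M u v) (hμ : 0 < μ) (hν : 0 < ν)
    {s t : ℝ} (hs : s ∈ Icc (0:ℝ) L) (ht : t ∈ Icc (0:ℝ) L) :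
    |deriv v t - deriv v s| ≤ 2*ν*M * |t - s| := by
  have hWc : Continuous (fun r => μ * v r - ν * u r) :=
    (continuous_const.mul P.hcv).sub (continuous_const.mul P.hcu)
  have h1 : deriv v t - deriv v s = ∫ r in s..t, (μ * v r - ν * u r) := by
    rw [P.dv_int t ht, P.dv_int s hs]
    exact intervalIntegral.integral_interval_sub_left (hWc.intervalIntegrable 0 t)
      (hWc.intervalIntegrable 0 s)
  rw [h1]
  have h2 := intervalIntegral.norm_integral_le_of_norm_le_const
    (C := 2*ν*M) (f := fun r => μ * v r - ν * u r) (a := s) (b := t) ?_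
  · simpa [Real.norm_eq_abs] using h2
  · intro r hr
    have hr' : r ∈ Icc (0:ℝ) L := by
      constructor
      · exact le_trans (le_min hs.1 ht.1) hr.1.le
      · exact le_trans hr.2 (max_le hs.2 ht.2)
    have e1 := P.vM r hr'
    have e2 := P.vpos r hr'
    have e3 := P.upos r hr'
    have e4 := P.uM r hr'
    have e5 : ν * u r ≤ ν * M := by nlinarith
    rw [Real.norm_eq_abs, abs_le]
    constructor
    · show -(2*ν*M) ≤ μ * v r - ν * u r
      nlinarith
    · show μ * v r - ν * u r ≤ 2*ν*M
      nlinarith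

/-- The key quantitative bound: `(-v')²  ≤ 4νM (v 0 - v α)` on `[0, α]`. -/
lemma gsq (P : Pack χ a b μ ν L M u v) (hμ : 0 < μ) (hν : 0 < ν)
    {α : ℝ} (hα : α ∈ Icc (0:ℝ) L) :
    ∀ x ∈ Icc (0:ℝ) α, (-deriv v x)^2 ≤ 4*ν*M*(v 0 - v α) := by
  have h0L : (0:ℝ) ≤ L := le_trans hα.1 hα.2
  have h0m : (0:ℝ) ∈ Icc (0:ℝ) L := ⟨le_refl _, h0L⟩
  have hΛ : 0 < 2*ν*M := by have := P.hM0; positivity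
  have int_g : (∫ r in (0:ℝ)..α, (- deriv v r)) = v 0 - v α := by
    rw [intervalIntegral.integral_neg, vdiff P 0 α]; ring
  intro x hx
  have hxL : x ∈ Icc (0:ℝ) L := ⟨hx.1, le_trans hx.2 hα.2⟩
  have hgx0 : 0 ≤ -deriv v x := by linarith [P.dv_nonpos x hxL]
  have hgxΛ : -deriv v x ≤ 2*ν*M * x := by
    have h2 := lipdv P hμ hν h0m hxL
    rw [P.dv0, sub_zero, sub_zero, abs_of_nonneg hx.1] at h2
    have h3 : -deriv v x ≤ |deriv v x| := neg_le_abs _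
    linarith
  set s := (-deriv v x) / (2*ν*M) with hsdef
  have hs0 : 0 ≤ s := by positivity
  have hsx : 0 ≤ x - s := by
    have : s ≤ x := by
      rw [hsdef, div_le_iff₀ hΛ]
      nlinarith
    linarith
  have key : ∀ t ∈ Icc (x - s) x, (-deriv v x) - (2*ν*M)*(x - t) ≤ -deriv v t := by
    intro t ht
    have htL : t ∈ Icc (0:ℝ) L := ⟨le_trans hsx ht.1, le_trans ht.2 hxL.2⟩
    have h2 := lipdv P hμ hν htL hxL
    rw [abs_of_nonneg (by linarith [ht.2] : (0:ℝ) ≤ x - t)] at h2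
    have h3 := (abs_le.mp h2).1
    linarith
  have hcont1 : Continuous (fun t : ℝ => (-deriv v x) - (2*ν*M)*(x - t)) :=
    continuous_const.sub (continuous_const.mul (continuous_const.sub continuous_id))
  have hint1 : (∫ t in (x-s)..x, ((-deriv v x) - (2*ν*M)*(x - t)))
      ≤ ∫ t in (x-s)..x, (-deriv v t) :=
    intervalIntegral.integral_mono_on (by linarith) (hcont1.intervalIntegrable _ _)
      ((P.hcdv.neg).intervalIntegrable _ _) key
  have hval : (∫ t in (x-s)..x, ((-deriv v x) - (2*ν*M)*(x - t)))
      = (-deriv v x) * s - (2*ν*M) * s^2 / 2 := by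
    have e1 : (fun t : ℝ => (-deriv v x) - (2*ν*M)*(x - t))
        = fun t : ℝ => ((-deriv v x) - (2*ν*M)*x) + (2*ν*M)*t := by
      funext t; ring
    have i1 : IntervalIntegrable (fun _ : ℝ => (-deriv v x) - 2*ν*M*x) volume (x-s) x :=
      intervalIntegrable_const
    have i2 : IntervalIntegrable (fun t : ℝ => 2*ν*M*t) volume (x-s) x :=
      (continuous_const.mul continuous_id).intervalIntegrable _ _
    rw [e1, intervalIntegral.integral_add i1 i2,
      intervalIntegral.integral_const, intervalIntegral.integral_const_mul, integral_id]
    simp only [smul_eq_mul]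
    ring
  have hint2 : (∫ t in (x-s)..x, (-deriv v t)) ≤ v 0 - v α := by
    have n1 : 0 ≤ ∫ t in (0:ℝ)..(x-s), (-deriv v t) := by
      apply intervalIntegral.integral_nonneg hsx
      intro t ht
      have : t ∈ Icc (0:ℝ) L := ⟨ht.1, le_trans ht.2 (by linarith [hxL.2])⟩
      linarith [P.dv_nonpos t this]
    have n2 : 0 ≤ ∫ t in x..α, (-deriv v t) := by
      apply intervalIntegral.integral_nonneg hx.2
      intro t ht
      have : t ∈ Icc (0:ℝ) L := ⟨le_trans hx.1 ht.1, le_trans ht.2 hα.2⟩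
      linarith [P.dv_nonpos t this]
    have hadd1 : (∫ t in (0:ℝ)..(x-s), (-deriv v t)) + ∫ t in (x-s)..x, (-deriv v t)
        = ∫ t in (0:ℝ)..x, (-deriv v t) :=
      intervalIntegral.integral_add_adjacent_intervals
        ((P.hcdv.neg).intervalIntegrable _ _) ((P.hcdv.neg).intervalIntegrable _ _)
    have hadd2 : (∫ t in (0:ℝ)..x, (-deriv v t)) + ∫ t in x..α, (-deriv v t)
        = ∫ t in (0:ℝ)..α, (-deriv v t) :=
      intervalIntegral.integral_add_adjacent_intervals
        ((P.hcdv.neg).intervalIntegrable _ _) ((P.hcdv.neg).intervalIntegrable _ _)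
    linarith [int_g]
  have hfin : (-deriv v x) * s - (2*ν*M) * s^2 / 2 ≤ v 0 - v α := by linarith
  have hval2 : (-deriv v x) * s - (2*ν*M) * s^2 / 2 = (-deriv v x)^2 / (2*(2*ν*M)) := by
    rw [hsdef]
    field_simp
    ring
  rw [hval2] at hfin
  rw [div_le_iff₀ (by positivity : (0:ℝ) < 2*(2*ν*M))] at hfin
  nlinarith [hfin]

/-- Quantitative bound on the drop of `v` over `[0, α]`, coming from the first equation
and `χ` large. -/
lemma logdrop (P : Pack χ a b μ ν L M u v) (ha : 0 < a) (hb : 0 < b) (hμ : 0 < μ)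
    (hν : 0 < ν) (hχ : 0 < χ) {α ε : ℝ}
    (hα : α ∈ Icc (0:ℝ) L) (hε : 0 < ε) (huα : ε ≤ u α) :
    v 0 - v α ≤ ((ν*M/μ) * (Real.log M - Real.log ε + L*(L*(b*M^2))/ε)) * χ⁻¹ := by
  have h0L : (0:ℝ) ≤ L := le_trans hα.1 hα.2
  have h0m : (0:ℝ) ∈ Icc (0:ℝ) L := ⟨le_refl _, h0L⟩
  have hIcc : Icc (0:ℝ) α ⊆ Icc (0:ℝ) L := Icc_subset_Icc (le_refl _) hα.2
  have huIcc : uIcc (0:ℝ) α = Icc (0:ℝ) α := uIcc_of_le hα.1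
  have hword : ∀ t ∈ Icc (0:ℝ) α, ε ≤ u t := by
    intro t ht
    exact le_trans huα (P.anti_u (hIcc ht) hα ht.2)
  -- derivative of the combination
  have hwd : ∀ t ∈ uIcc (0:ℝ) α,
      HasDerivAt (fun x => Real.log (u x) - χ * Real.log (v x))
        (deriv u t / u t - χ * (deriv v t / v t)) t := by
    intro t ht
    rw [huIcc] at ht
    have ht' : t ∈ Icc (0:ℝ) L := hIcc ht
    have h1 : HasDerivAt (fun x => Real.log (u x)) (deriv u t / u t) t :=
      ((P.hdu t).hasDerivAt).log (P.upos t ht').ne'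
    have h2 : HasDerivAt (fun x => Real.log (v x)) (deriv v t / v t) t :=
      ((P.hdv t).hasDerivAt).log (P.vpos t ht').ne'
    exact h1.sub (h2.const_mul χ)
  have hintg : ContinuousOn (fun t => deriv u t / u t - χ * (deriv v t / v t))
      (uIcc (0:ℝ) α) := by
    rw [huIcc]
    apply ContinuousOn.sub
    · exact P.hcdu.continuousOn.div P.hcu.continuousOn
        (fun t ht => (P.upos t (hIcc ht)).ne')
    · exact continuousOn_const.mul (P.hcdv.continuousOn.div P.hcv.continuousOn
        (fun t ht => (P.vpos t (hIcc ht)).ne'))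
  have hwint := intervalIntegral.integral_eq_sub_of_hasDerivAt hwd
    (hintg.intervalIntegrable)
  -- pointwise bounds on the integrand
  have hC0 : ∀ t ∈ Icc (0:ℝ) α, 0 ≤ deriv u t / u t - χ * (deriv v t / v t)
      ∧ deriv u t / u t - χ * (deriv v t / v t) ≤ (L*(b*M^2))/ε := by
    intro t ht
    have ht' : t ∈ Icc (0:ℝ) L := hIcc ht
    have hut := P.upos t ht'
    have hvt := P.vpos t ht'
    have heq : deriv u t / u t - χ * (deriv v t / v t)
        = (deriv u t - χ * (u t * deriv v t / v t)) / u t := by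
      field_simp
    have hJ0 := P.J_nonneg t ht'
    have hφc : Continuous (fun r => u r * (a - b * u r)) :=
      P.hcu.mul (continuous_const.sub (continuous_const.mul P.hcu))
    have hJle : deriv u t - χ * (u t * deriv v t / v t) ≤ L*(b*M^2) := by
      rw [P.J_int t ht']
      have h1 : -(∫ r in (0:ℝ)..t, u r * (a - b * u r))
          = ∫ r in (0:ℝ)..t, -(u r * (a - b * u r)) := intervalIntegral.integral_neg.symm
      rw [h1]
      have h2 : (∫ r in (0:ℝ)..t, -(u r * (a - b * u r))) ≤ (t - 0) * (b*M^2) := by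
        apply int_le_const ht.1 ((hφc.neg).intervalIntegrable _ _)
        intro r hr
        have hr' : r ∈ Icc (0:ℝ) L := ⟨hr.1, le_trans hr.2 ht'.2⟩
        have h4 := P.upos r hr'
        have h5 := P.uM r hr'
        have h6 : u r * u r ≤ M * M := mul_le_mul h5 h5 h4.le (le_trans h4.le h5)
        have h7 : 0 ≤ a * u r := mul_nonneg ha.le h4.le
        show -(u r * (a - b * u r)) ≤ b*M^2
        nlinarith
      have h3 : (t - 0) * (b*M^2) ≤ L*(b*M^2) := by
        have h8 : (0:ℝ) ≤ b*M^2 := by have := P.hM0; positivity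
        nlinarith [mul_le_mul_of_nonneg_right ht'.2 h8]
      linarith
    constructor
    · rw [heq]
      positivity
    · rw [heq]
      exact div_le_div₀ (by positivity) hJle hε (hword t ht)
  -- integral bounds
  have hup : (∫ t in (0:ℝ)..α, (deriv u t / u t - χ * (deriv v t / v t)))
      ≤ L * ((L*(b*M^2))/ε) := by
    have h2 : (∫ t in (0:ℝ)..α, (deriv u t / u t - χ * (deriv v t / v t)))
        ≤ (α - 0) * ((L*(b*M^2))/ε) :=
      int_le_const hα.1 hintg.intervalIntegrable (fun t ht => (hC0 t ht).2)
    have h3 : (α - 0) * ((L*(b*M^2))/ε) ≤ L * ((L*(b*M^2))/ε) := by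
      have hMon : 0 ≤ (L*(b*M^2))/ε := by
        have := P.hM0
        positivity
      nlinarith [mul_le_mul_of_nonneg_right hα.2 hMon]
    linarith
  have hlo : 0 ≤ ∫ t in (0:ℝ)..α, (deriv u t / u t - χ * (deriv v t / v t)) :=
    intervalIntegral.integral_nonneg hα.1 (fun t ht => (hC0 t ht).1)
  -- translate into log bounds
  set θ := Real.log (v 0) - Real.log (v α) with hθdef
  have hv0 := P.vpos 0 h0m
  have hvα := P.vpos α hα
  have hu0 := P.upos 0 h0m
  have huαpos : 0 < u α := lt_of_lt_of_le hε huα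
  have hθχ : χ * θ ≤ Real.log M - Real.log ε + L*((L*(b*M^2))/ε) := by
    have h1 : Real.log (u α) - χ * Real.log (v α) - (Real.log (u 0) - χ * Real.log (v 0))
        ≤ L*((L*(b*M^2))/ε) := by rw [← hwint]; exact hup
    have h2 : Real.log (u 0) ≤ Real.log M := Real.log_le_log hu0 (P.uM 0 h0m)
    have h3 : Real.log ε ≤ Real.log (u α) := Real.log_le_log hε huα
    simp only [hθdef]
    nlinarith [h1, h2, h3]
  have hθ0 : 0 ≤ θ := by
    have h1 : v α ≤ v 0 := P.anti_v h0m hα hα.1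
    simp only [hθdef]
    have := Real.log_le_log hvα h1
    linarith
  -- from log bound to linear bound
  have hexp : Real.exp (-θ) = v α / v 0 := by
    rw [hθdef, neg_sub, Real.exp_sub, Real.exp_log hvα, Real.exp_log hv0]
  have hkey : v 0 - v α ≤ θ * v 0 := by
    have h1 := Real.add_one_le_exp (-θ)
    rw [hexp] at h1
    have h2 : (-θ + 1) * v 0 ≤ (v α / v 0) * v 0 :=
      mul_le_mul_of_nonneg_right h1 hv0.le
    rw [div_mul_cancel₀ _ hv0.ne'] at h2
    nlinarith
  have hfin : θ * v 0 ≤ ((ν*M/μ) * (Real.log M - Real.log ε + L*(L*(b*M^2))/ε)) * χ⁻¹ := by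
    have hθle : θ ≤ (Real.log M - Real.log ε + L*(L*(b*M^2))/ε) * χ⁻¹ := by
      rw [← div_eq_mul_inv]
      rw [le_div_iff₀ hχ]
      calc θ * χ = χ * θ := by ring
      _ ≤ Real.log M - Real.log ε + L*((L*(b*M^2))/ε) := hθχ
      _ = Real.log M - Real.log ε + L*(L*(b*M^2))/ε := by ring
    have hv0le : μ * v 0 ≤ ν * M := P.vM 0 h0m
    have hv0le' : v 0 ≤ ν * M / μ := by
      rw [le_div_iff₀ hμ]
      linarith
    calc θ * v 0 ≤ ((Real.log M - Real.log ε + L*(L*(b*M^2))/ε) * χ⁻¹) * (ν*M/μ) := by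
          apply mul_le_mul hθle hv0le' hv0.le
          have : 0 ≤ θ * χ⁻¹ := by positivity
          nlinarith [hθ0, inv_pos.mpr hχ]
    _ = ((ν*M/μ) * (Real.log M - Real.log ε + L*(L*(b*M^2))/ε)) * χ⁻¹ := by ring
  exact le_trans hkey hfin

end facts
end Stmt17

namespace Stmt17

section core

variable {χ a b μ ν L M : ℝ} {u v : ℝ → ℝ}

lemma cancel_pos {ν X Y : ℝ} (hν : 0 < ν) (h : ν * X ≤ ν * Y) : X ≤ Y :=
  le_of_mul_le_mul_left h hν

set_option maxHeartbeats 1600000 in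
/-- Main "flatness of v / averaging" consequences on `[0, α]`. -/
lemma core (P : Pack χ a b μ ν L M u v) (ha : 0 < a) (hb : 0 < b) (hμ : 0 < μ) (hν : 0 < ν)
    {α ε h e Δbar θbar : ℝ}
    (hα : α ∈ Icc (0:ℝ) L) (hh : 0 < h) (hh4 : 4*h ≤ α)
    (hε : 0 < ε) (huα : ε ≤ u α)
    (hθ : ∀ x ∈ Icc (0:ℝ) α, - deriv v x ≤ θbar)
    (hΔ : v 0 - v α ≤ Δbar) (hΔ0 : 0 ≤ Δbar) (hθ0 : 0 ≤ θbar)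
    (he : μ*Δbar + θbar/h ≤ ν*e) (he4 : 4*e ≤ ε) :
    (∀ x ∈ Icc h α, u x ≤ μ*(v 0)/ν + e) ∧
    (∀ x ∈ Icc (0:ℝ) (α - h), μ*(v 0)/ν - e ≤ u x) ∧
    (ε - e ≤ μ*(v 0)/ν) ∧
    (a ≤ b*(μ*(v 0)/ν + e) ∨
      (α - 2*h)*(μ*(v 0)/ν - e)*(a - b*(μ*(v 0)/ν + e)) ≤ b*M^2*h) := by
  have h0L : (0:ℝ) ≤ L := le_trans hα.1 hα.2
  have h0m : (0:ℝ) ∈ Icc (0:ℝ) L := ⟨le_refl _, h0L⟩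
  have he0 : 0 ≤ e := by
    have h1 : 0 ≤ μ*Δbar + θbar/h := by positivity
    nlinarith
  have hθh : θbar ≤ h*(ν*e) - h*(μ*Δbar) := by
    have h1 : θbar/h ≤ ν*e - μ*Δbar := by linarith
    rw [div_le_iff₀ hh] at h1
    nlinarith
  have hμΔ : 0 ≤ h*(μ*Δbar) := by positivity
  -- upper bound for u on [h, α]
  have up : ∀ x ∈ Icc h α, u x ≤ μ*(v 0)/ν + e := by
    intro x hx
    have hx0 : 0 ≤ x := le_trans hh.le hx.1
    have hxL : x ∈ Icc (0:ℝ) L := ⟨hx0, le_trans hx.2 hα.2⟩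
    have hxhL : x - h ∈ Icc (0:ℝ) L := ⟨by linarith [hx.1], by linarith [hxL.2]⟩
    have hseg := seg P hxhL hxL
    have hu1 : (x - (x-h)) * u x ≤ ∫ r in (x-h)..x, u r := by
      apply const_le_int (by linarith) (P.hcu.intervalIntegrable _ _)
      intro r hr
      exact P.anti_u ⟨le_trans hxhL.1 hr.1, le_trans hr.2 hxL.2⟩ hxL hr.2
    have hv1 : (∫ r in (x-h)..x, v r) ≤ (x - (x-h)) * v 0 := by
      apply int_le_const (by linarith) (P.hcv.intervalIntegrable _ _)
      intro r hr
      exact P.anti_v h0m ⟨le_trans hxhL.1 hr.1, le_trans hr.2 hxL.2⟩ (le_trans hxhL.1 hr.1)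
    have hd1 : -(deriv v x - deriv v (x-h)) ≤ θbar := by
      have t1 := hθ x ⟨hx0, hx.2⟩
      have t2 := P.dv_nonpos (x-h) hxhL
      linarith
    have m1 : ν * ((x - (x-h)) * u x) ≤ ν * ∫ r in (x-h)..x, u r :=
      mul_le_mul_of_nonneg_left hu1 hν.le
    have m2 : μ * (∫ r in (x-h)..x, v r) ≤ μ * ((x - (x-h)) * v 0) :=
      mul_le_mul_of_nonneg_left hv1 hμ.le
    have e2 : ν * ((x - (x-h)) * u x) = ν * (h * u x) := by ring
    have e3 : μ * ((x - (x-h)) * v 0) = μ * (h * v 0) := by ring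
    have hcomb : ν * (h * u x) ≤ μ * (h * v 0) + θbar := by linarith
    have h3 : ν * (h * u x) ≤ ν * (h * (μ*(v 0)/ν + e)) := by
      have e4 : ν * (h * (μ*(v 0)/ν + e)) = μ*(h * v 0) + h*(ν*e) := by
        field_simp
      linarith
    have h5 : h * u x ≤ h * (μ*(v 0)/ν + e) := cancel_pos hν h3
    have h6 : h * u x = h * u x := rfl
    nlinarith [h5]
  -- lower bound for u on [0, α - h]
  have lo : ∀ x ∈ Icc (0:ℝ) (α - h), μ*(v 0)/ν - e ≤ u x := by
    intro x hx
    have hxL : x ∈ Icc (0:ℝ) L := ⟨hx.1, by linarith [hx.2, hα.2]⟩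
    have hxhL : x + h ∈ Icc (0:ℝ) L := ⟨by linarith [hx.1], by linarith [hx.2, hα.2]⟩
    have hxhα : x + h ≤ α := by linarith [hx.2]
    have hseg := seg P hxL hxhL
    have hu1 : (∫ r in x..(x+h), u r) ≤ ((x+h) - x) * u x := by
      apply int_le_const (by linarith) (P.hcu.intervalIntegrable _ _)
      intro r hr
      exact P.anti_u hxL ⟨le_trans hx.1 hr.1, le_trans hr.2 hxhL.2⟩ hr.1
    have hv1 : ((x+h) - x) * (v 0 - Δbar) ≤ ∫ r in x..(x+h), v r := by
      apply const_le_int (by linarith) (P.hcv.intervalIntegrable _ _)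
      intro r hr
      have hrα : r ≤ α := le_trans hr.2 hxhα
      have hrL : r ∈ Icc (0:ℝ) L := ⟨le_trans hx.1 hr.1, le_trans hrα hα.2⟩
      have := P.anti_v hrL hα hrα
      linarith
    have hd1 : -θbar ≤ -(deriv v (x+h) - deriv v x) := by
      have t1 := hθ x ⟨hx.1, by linarith [hx.2]⟩
      have t2 := P.dv_nonpos (x+h) hxhL
      linarith
    have m1 : ν * (∫ r in x..(x+h), u r) ≤ ν * (((x+h) - x) * u x) :=
      mul_le_mul_of_nonneg_left hu1 hν.le
    have m2 : μ * (((x+h) - x) * (v 0 - Δbar)) ≤ μ * ∫ r in x..(x+h), v r :=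
      mul_le_mul_of_nonneg_left hv1 hμ.le
    have e2 : ν * (((x+h) - x) * u x) = ν * (h * u x) := by ring
    have e3 : μ * (((x+h) - x) * (v 0 - Δbar)) = μ * (h * v 0) - h*(μ*Δbar) := by ring
    have hcomb : μ * (h * v 0) - h*(μ*Δbar) - θbar ≤ ν * (h * u x) := by linarith
    have h3 : ν * (h * (μ*(v 0)/ν - e)) ≤ ν * (h * u x) := by
      have e4 : ν * (h * (μ*(v 0)/ν - e)) = μ*(h * v 0) - h*(ν*e) := by
        field_simp
      linarith
    have h5 : h * (μ*(v 0)/ν - e) ≤ h * u x := cancel_pos hν h3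
    nlinarith [h5]
  refine ⟨up, lo, ?_, ?_⟩
  · have h1 := up α ⟨by linarith, le_refl _⟩
    linarith
  · -- balance dichotomy
    by_cases hAB : a ≤ b*(μ*(v 0)/ν + e)
    · exact Or.inl hAB
    push_neg at hAB
    refine Or.inr ?_
    have hφc : Continuous (fun t => u t * (a - b * u t)) :=
      P.hcu.mul (continuous_const.sub (continuous_const.mul P.hcu))
    have hint : ∀ s t : ℝ, IntervalIntegrable (fun t => u t * (a - b * u t)) volume s t :=
      fun s t => hφc.intervalIntegrable s t
    have hsplit : (∫ t in (0:ℝ)..h, u t * (a - b * u t))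
        + (∫ t in h..(α-h), u t * (a - b * u t))
        + (∫ t in (α-h)..L, u t * (a - b * u t)) = 0 := by
      have a1 : (∫ t in (0:ℝ)..h, u t * (a - b * u t))
          + (∫ t in h..(α-h), u t * (a - b * u t))
          = ∫ t in (0:ℝ)..(α-h), u t * (a - b * u t) :=
        intervalIntegral.integral_add_adjacent_intervals (hint _ _) (hint _ _)
      have a2 : (∫ t in (0:ℝ)..(α-h), u t * (a - b * u t))
          + (∫ t in (α-h)..L, u t * (a - b * u t))
          = ∫ t in (0:ℝ)..L, u t * (a - b * u t) :=
        intervalIntegral.integral_add_adjacent_intervals (hint _ _) (hint _ _)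
      rw [a1]
      rw [a2, P.balance]
    -- head piece
    have p1 : -(b*M^2) * h ≤ ∫ t in (0:ℝ)..h, u t * (a - b * u t) := by
      have := const_le_int (C := -(b*M^2)) hh.le (hint 0 h) ?_
      · linarith [this]
      intro r hr
      have hrL : r ∈ Icc (0:ℝ) L := ⟨hr.1, by linarith [hr.2, hα.2]⟩
      have h4 := P.upos r hrL
      have h5 := P.uM r hrL
      have h6 : u r * u r ≤ M * M := mul_le_mul h5 h5 h4.le (le_trans h4.le h5)
      have h7 : 0 ≤ a * u r := mul_nonneg ha.le h4.le
      nlinarith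
    -- middle piece
    have p2 : ((α - h) - h) * ((μ*(v 0)/ν - e)*(a - b*(μ*(v 0)/ν + e)))
        ≤ ∫ t in h..(α-h), u t * (a - b * u t) := by
      apply const_le_int (by linarith) (hint _ _)
      intro r hr
      have hr1 : r ∈ Icc h α := ⟨hr.1, by linarith [hr.2]⟩
      have hr2 : r ∈ Icc (0:ℝ) (α - h) := ⟨le_trans hh.le hr.1, hr.2⟩
      have b1 := up r hr1
      have b2 := lo r hr2
      have hκe : 0 ≤ μ*(v 0)/ν - e := by
        have h1 := up α ⟨by linarith, le_refl _⟩
        linarith [huα, he4, he0]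
      have hbu : b * u r ≤ b * (μ*(v 0)/ν + e) := mul_le_mul_of_nonneg_left b1 hb.le
      have c1 : (μ*(v 0)/ν - e) * (a - b*(μ*(v 0)/ν + e)) ≤ u r * (a - b*(μ*(v 0)/ν + e)) :=
        mul_le_mul_of_nonneg_right b2 (by linarith)
      have c2 : u r * (a - b*(μ*(v 0)/ν + e)) ≤ u r * (a - b*u r) := by
        apply mul_le_mul_of_nonneg_left _ (by linarith : (0:ℝ) ≤ u r)
        linarith
      linarith
    -- tail piece
    have p3 : 0 ≤ ∫ t in (α-h)..L, u t * (a - b * u t) := by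
      apply intervalIntegral.integral_nonneg (by linarith [hα.2])
      intro r hr
      have hαh : α - h ∈ Icc (0:ℝ) L := ⟨by linarith, by linarith [hα.2]⟩
      have hrL : r ∈ Icc (0:ℝ) L := ⟨le_trans hαh.1 hr.1, hr.2⟩
      have b1 : u r ≤ u (α - h) := P.anti_u hαh hrL hr.1
      have b2 := up (α-h) ⟨by linarith, by linarith⟩
      have h4 := P.upos r hrL
      have hbu : b * u r ≤ b * (μ*(v 0)/ν + e) :=
        mul_le_mul_of_nonneg_left (le_trans b1 b2) hb.le
      have hge : 0 ≤ a - b*u r := by linarith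
      exact mul_nonneg h4.le hge
    have e9 : ((α - h) - h) * ((μ*(v 0)/ν - e)*(a - b*(μ*(v 0)/ν + e)))
        = (α - 2*h)*(μ*(v 0)/ν - e)*(a - b*(μ*(v 0)/ν + e)) := by ring
    have e10 : -(b*M^2) * h = -(b*M^2*h) := by ring
    linarith [hsplit, p1, p2, p3]

end core
end Stmt17

namespace Stmt17

section masters

variable {χ a b μ ν L M : ℝ} {u v : ℝ → ℝ}

set_option maxHeartbeats 1600000 in
/-- Contradiction when `u` stays big at a point `α` beyond `c` (uses the cap on `[c,d]`). -/
lemma master1 (P : Pack χ a b μ ν L M u v) (ha : 0 < a) (hb : 0 < b) (hμ : 0 < μ)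
    (hν : 0 < ν) {α ε h e Δbar θbar c d δ : ℝ}
    (hα : α ∈ Icc (0:ℝ) L)
    (hh : 0 < h) (hh4 : 4*h ≤ α)
    (hε : 0 < ε) (huα : ε ≤ u α)
    (hθ : ∀ x ∈ Icc (0:ℝ) α, - deriv v x ≤ θbar)
    (hΔ : v 0 - v α ≤ Δbar) (hΔ0 : 0 ≤ Δbar) (hθ0 : 0 ≤ θbar)
    (he : μ*Δbar + θbar/h ≤ ν*e) (he4 : 4*e ≤ ε) (heδ : 4*e ≤ δ) (hδ : 0 < δ)
    (hch : h ≤ c) (hcα : c + 2*h ≤ α) (hcd : c ≤ d) (hdL : d ≤ L)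
    (cap : ∀ x ∈ Icc c d, u x ≤ a/b - δ)
    (hh8 : 8*M^2*h < α*ε*δ) : False := by
  obtain ⟨up, lo, kap, dich⟩ := core P ha hb hμ hν hα hh hh4 hε huα hθ hΔ hΔ0 hθ0 he he4
  have he0 : 0 ≤ e := by
    have h1 : 0 ≤ μ*Δbar + θbar/h := by positivity
    nlinarith
  have hc0 : 0 < c := lt_of_lt_of_le hh hch
  have hx₀c : c ≤ min (α - h) d := le_min (by linarith) hcd
  have hx₀d : min (α - h) d ≤ d := min_le_right _ _
  have hx₀αh : min (α - h) d ≤ α - h := min_le_left _ _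
  have hcap := cap (min (α - h) d) ⟨hx₀c, hx₀d⟩
  have hlo := lo (min (α - h) d) ⟨by linarith, hx₀αh⟩
  have hκcap : μ*(v 0)/ν ≤ a/b - δ + e := by linarith
  rcases dich with hAB | hright
  · have h1 : b*(μ*(v 0)/ν + e) ≤ b*(a/b - δ + 2*e) :=
      mul_le_mul_of_nonneg_left (by linarith) hb.le
    have h2 : b*(a/b - δ + 2*e) = a - b*δ + 2*(b*e) := by field_simp
    have h3 : b*(4*e) ≤ b*δ := mul_le_mul_of_nonneg_left heδ hb.le
    nlinarith [mul_pos hb hδ]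
  · have hf1 : ε/2 ≤ μ*(v 0)/ν - e := by linarith
    have hf2 : b*δ/2 ≤ a - b*(μ*(v 0)/ν + e) := by
      have h1 : b*(μ*(v 0)/ν + e) ≤ b*(a/b - δ + 2*e) :=
        mul_le_mul_of_nonneg_left (by linarith) hb.le
      have h2 : b*(a/b - δ + 2*e) = a - b*δ + 2*(b*e) := by field_simp
      have h3 : b*e ≤ b*(δ/4) := mul_le_mul_of_nonneg_left (by linarith) hb.le
      linarith
    have hf3 : α/2 ≤ α - 2*h := by linarith
    have q1 : (α/2)*(ε/2) ≤ (α-2*h)*(μ*(v 0)/ν - e) :=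
      mul_le_mul hf3 hf1 (by positivity) (by linarith)
    have q2 : (α/2)*(ε/2)*(b*δ/2) ≤ (α-2*h)*(μ*(v 0)/ν - e)*(a - b*(μ*(v 0)/ν + e)) := by
      apply mul_le_mul q1 hf2 (by positivity) _
      have : 0 ≤ μ*(v 0)/ν - e := by linarith
      have : 0 ≤ α - 2*h := by linarith
      positivity
    have hfin : (α/2)*(ε/2)*(b*δ/2) ≤ b*M^2*h := le_trans q2 hright
    have e1 : (α/2)*(ε/2)*(b*δ/2) = b*(α*ε*δ/8) := by ring
    have e2 : b*M^2*h = b*(M^2*h) := by ring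
    have h5 : b*(α*ε*δ/8) ≤ b*(M^2*h) := by linarith
    have h6 : α*ε*δ/8 ≤ M^2*h := le_of_mul_le_mul_left h5 hb
    linarith

set_option maxHeartbeats 1600000 in
/-- Contradiction when `u` stays big at `α ≤ c` while it collapses at `ᾱ` just
to the right of `α`. -/
lemma master2 (P : Pack χ a b μ ν L M u v) (ha : 0 < a) (hb : 0 < b) (hμ : 0 < μ)
    (hν : 0 < ν) {α ᾱ ε ε' h e Δbar θbar c : ℝ}
    (hα : α ∈ Icc (0:ℝ) L) (hαᾱ : α ≤ ᾱ) (hᾱL : ᾱ ≤ L)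
    (hh : 0 < h) (hh4 : 4*h ≤ α)
    (hε : 0 < ε) (huα : ε ≤ u α)
    (hθ : ∀ x ∈ Icc (0:ℝ) α, - deriv v x ≤ θbar)
    (hΔ : v 0 - v α ≤ Δbar) (hΔ0 : 0 ≤ Δbar) (hθ0 : 0 ≤ θbar)
    (he : μ*Δbar + θbar/h ≤ ν*e) (he4 : 4*e ≤ ε)
    (he8 : 8*(b*e) ≤ a) (hh32 : 32*(b*(M^2*h)) ≤ a*(α*ε))
    (hε' : 0 ≤ ε') (huᾱ : u ᾱ ≤ ε')
    (hαc : α ≤ c) (hcL : c < L)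
    (hbig : θbar + μ*L*Δbar + μ*(L*L)*(θbar + ν*((ᾱ-α)*M + L*ε'))
        + ν*((ᾱ-α)*M + L*ε') < (L-c)*(ν*(3*a/(4*b)))) : False := by
  obtain ⟨up, lo, kap, dich⟩ := core P ha hb hμ hν hα hh hh4 hε huα hθ hΔ hΔ0 hθ0 he he4
  have he0 : 0 ≤ e := by
    have h1 : 0 ≤ μ*Δbar + θbar/h := by positivity
    nlinarith
  have h0L : (0:ℝ) ≤ L := le_trans hα.1 hα.2
  have hLm : L ∈ Icc (0:ℝ) L := ⟨h0L, le_refl _⟩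
  have hᾱm : ᾱ ∈ Icc (0:ℝ) L := ⟨le_trans hα.1 hαᾱ, hᾱL⟩
  -- Step (i): κ ≥ 3a/(4b), via the logistic balance
  have case1 : a ≤ b*(μ*(v 0)/ν + e) → 3*a/(4*b) ≤ μ*(v 0)/ν := by
    intro hAB
    have e1 : b*(μ*(v 0)/ν + e) = b*(μ*(v 0)/ν) + b*e := by ring
    have h4 : b * (3*a/(4*b)) ≤ b * (μ*(v 0)/ν) := by
      have e2 : b * (3*a/(4*b)) = 3*a/4 := by field_simp
      linarith
    exact le_of_mul_le_mul_left h4 hb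
  have hκ0 : 3*a/(4*b) ≤ μ*(v 0)/ν := by
    rcases dich with hAB | hright
    · exact case1 hAB
    by_cases hAB2 : a ≤ b*(μ*(v 0)/ν + e)
    · exact case1 hAB2
    push_neg at hAB2
    have hf1 : ε/2 ≤ μ*(v 0)/ν - e := by linarith
    have hf3 : α/2 ≤ α - 2*h := by linarith
    have q1 : (α/2)*(ε/2) ≤ (α-2*h)*(μ*(v 0)/ν - e) :=
      mul_le_mul hf3 hf1 (by positivity) (by linarith)
    have q2 := mul_le_mul_of_nonneg_right q1 (by linarith : (0:ℝ) ≤ a - b*(μ*(v 0)/ν + e))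
    have hq : (α/2)*(ε/2)*(a - b*(μ*(v 0)/ν + e)) ≤ b*(M^2*h) := by
      have e3 : (α-2*h)*(μ*(v 0)/ν - e)*(a - b*(μ*(v 0)/ν + e))
          = (α-2*h)*(μ*(v 0)/ν - e)*(a - b*(μ*(v 0)/ν + e)) := rfl
      nlinarith [hright]
    have hα0 : 0 < α := by linarith
    have h5 : (α*ε)*(a - b*(μ*(v 0)/ν + e)) ≤ (α*ε)*(a/8) := by nlinarith [hq, hh32]
    have h6 : a - b*(μ*(v 0)/ν + e) ≤ a/8 := le_of_mul_le_mul_left h5 (by positivity)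
    have e1 : b*(μ*(v 0)/ν + e) = b*(μ*(v 0)/ν) + b*e := by ring
    have h4 : b * (3*a/(4*b)) ≤ b * (μ*(v 0)/ν) := by
      have e2 : b * (3*a/(4*b)) = 3*a/4 := by field_simp
      linarith
    exact le_of_mul_le_mul_left h4 hb
  -- Step (ii): tail mass of u is small
  have hA : (∫ r in α..L, u r) ≤ (ᾱ-α)*M + L*ε' := by
    have s1 : (∫ r in α..ᾱ, u r) ≤ (ᾱ - α)*M := by
      apply int_le_const hαᾱ (P.hcu.intervalIntegrable _ _)
      intro r hr
      exact P.uM r ⟨le_trans hα.1 hr.1, le_trans hr.2 hᾱL⟩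
    have s2 : (∫ r in ᾱ..L, u r) ≤ (L - ᾱ)*ε' := by
      apply int_le_const hᾱL (P.hcu.intervalIntegrable _ _)
      intro r hr
      exact le_trans (P.anti_u hᾱm ⟨le_trans hᾱm.1 hr.1, hr.2⟩ hr.1) huᾱ
    have s3 : (∫ r in α..ᾱ, u r) + (∫ r in ᾱ..L, u r) = ∫ r in α..L, u r :=
      intervalIntegral.integral_add_adjacent_intervals (P.hcu.intervalIntegrable _ _)
        (P.hcu.intervalIntegrable _ _)
    have s4 : (L-ᾱ)*ε' ≤ L*ε' := mul_le_mul_of_nonneg_right (by linarith [hᾱm.1]) hε'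
    linarith
  -- Step (iii): -v' stays small on [α, L]
  have hG : ∀ x ∈ Icc α L, -deriv v x ≤ θbar + ν*((ᾱ-α)*M + L*ε') := by
    intro x hx
    have hxL : x ∈ Icc (0:ℝ) L := ⟨le_trans hα.1 hx.1, hx.2⟩
    have hseg := seg P hα hxL
    have hvint : 0 ≤ ∫ r in α..x, v r :=
      intervalIntegral.integral_nonneg hx.1
        (fun r hr => (P.vpos r ⟨le_trans hα.1 hr.1, le_trans hr.2 hxL.2⟩).le)
    have hux : (∫ r in α..x, u r) ≤ ∫ r in α..L, u r := by
      have hadd : (∫ r in α..x, u r) + (∫ r in x..L, u r) = ∫ r in α..L, u r :=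
        intervalIntegral.integral_add_adjacent_intervals (P.hcu.intervalIntegrable _ _)
          (P.hcu.intervalIntegrable _ _)
      have hxt : 0 ≤ ∫ r in x..L, u r :=
        intervalIntegral.integral_nonneg hx.2
          (fun r hr => (P.upos r ⟨le_trans hxL.1 hr.1, hr.2⟩).le)
      linarith
    have hθα := hθ α ⟨hα.1, le_refl _⟩
    have q3 : ν * ∫ r in α..x, u r ≤ ν * ((ᾱ-α)*M + L*ε') :=
      mul_le_mul_of_nonneg_left (le_trans hux hA) hν.le
    have q4 : 0 ≤ μ * ∫ r in α..x, v r := mul_nonneg hμ.le hvint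
    linarith [hseg, hθα]
  have hG0 : 0 ≤ θbar + ν*((ᾱ-α)*M + L*ε') := by
    have t1 : 0 ≤ (ᾱ-α)*M + L*ε' :=
      add_nonneg (mul_nonneg (by linarith) P.hM0.le) (mul_nonneg h0L hε')
    nlinarith [mul_nonneg hν.le t1]
  -- Step (iv): v L is not too small
  have hvL : v 0 - Δbar - L*(θbar + ν*((ᾱ-α)*M + L*ε')) ≤ v L := by
    have d1 : v α - v L = ∫ r in α..L, (-deriv v r) := by
      rw [intervalIntegral.integral_neg, vdiff P α L]; ring
    have d2 : (∫ r in α..L, (-deriv v r)) ≤ (L - α)*(θbar + ν*((ᾱ-α)*M + L*ε')) :=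
      int_le_const hα.2 ((P.hcdv.neg).intervalIntegrable _ _) (fun r hr => hG r hr)
    have d3 : (L-α)*(θbar + ν*((ᾱ-α)*M + L*ε')) ≤ L*(θbar + ν*((ᾱ-α)*M + L*ε')) :=
      mul_le_mul_of_nonneg_right (by linarith [hα.1]) hG0
    linarith [hΔ]
  -- Step (v): lower bound on ∫ v over [α, L]
  have hVv : (L - α)*(v L) ≤ ∫ r in α..L, v r := by
    apply const_le_int hα.2 (P.hcv.intervalIntegrable _ _)
    intro r hr
    exact P.anti_v ⟨le_trans hα.1 hr.1, hr.2⟩ hLm hr.2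
  -- final combination
  have hfin : -deriv v α ≤ θbar := hθ α ⟨hα.1, le_refl _⟩
  have hseg2 := seg P hα hLm
  rw [P.dvL] at hseg2
  have q1 : μ*((L-α)*(v L)) ≤ μ*(∫ r in α..L, v r) := mul_le_mul_of_nonneg_left hVv hμ.le
  have q2 : (μ*(L-α))*(v 0 - Δbar - L*(θbar + ν*((ᾱ-α)*M + L*ε'))) ≤ (μ*(L-α))*(v L) :=
    mul_le_mul_of_nonneg_left hvL (mul_nonneg hμ.le (by linarith [hα.2]))
  have q3 : ν*(∫ r in α..L, u r) ≤ ν*((ᾱ-α)*M + L*ε') := mul_le_mul_of_nonneg_left hA hν.le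
  have q6 : (L-c)*(ν*(3*a/(4*b))) ≤ (L-α)*(ν*(μ*(v 0)/ν)) := by
    apply mul_le_mul (by linarith : L-c ≤ L-α) (mul_le_mul_of_nonneg_left hκ0 hν.le)
      (by positivity) (by linarith [hα.2])
  have q7 : (L-α)*(ν*(μ*(v 0)/ν)) = μ*(L-α)*(v 0) := by field_simp
  have q8 : μ*(L-α)*Δbar ≤ μ*L*Δbar := by
    have t1 : μ*(L-α) ≤ μ*L := mul_le_mul_of_nonneg_left (by linarith [hα.1]) hμ.le
    exact mul_le_mul_of_nonneg_right t1 hΔ0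
  have q9 : (μ*(L-α))*(L*(θbar + ν*((ᾱ-α)*M + L*ε')))
      ≤ μ*(L*L)*(θbar + ν*((ᾱ-α)*M + L*ε')) := by
    have t1 : 0 ≤ μ*L*(θbar + ν*((ᾱ-α)*M + L*ε')) := mul_nonneg (mul_nonneg hμ.le h0L) hG0
    nlinarith [mul_le_mul_of_nonneg_left (show L - α ≤ L by linarith [hα.1]) t1]
  nlinarith [q1, q2, q3, q6, q7, q8, q9, hfin, hseg2, hbig]

end masters
end Stmt17

namespace Stmt17

lemma tend_inv {χ : ℕ → ℝ} (hχ : Tendsto χ atTop atTop) (C : ℝ) :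
    Tendsto (fun n => C * (χ n)⁻¹) atTop (𝓝 0) := by
  have h1 : Tendsto (fun n => (χ n)⁻¹) atTop (𝓝 0) := hχ.inv_tendsto_atTop
  simpa using h1.const_mul C

lemma tendsqrt {g : ℕ → ℝ} (hg : Tendsto g atTop (𝓝 0)) :
    Tendsto (fun n => Real.sqrt (g n)) atTop (𝓝 0) := by
  have h1 := (Real.continuous_sqrt.tendsto 0).comp hg
  simpa [Function.comp_def] using h1

end Stmt17

open Stmt17 in
set_option maxHeartbeats 4000000 in
theorem stmt_17 (a b μ ν L : ℝ) (ha : 0 < a) (hb : 0 < b)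
    (hμ : 0 < μ) (hν : 0 < ν) (hL : 0 < L)
    (χ : ℕ → ℝ) (hχpos : ∀ n, 0 < χ n) (hχ : Tendsto χ atTop atTop)
    (u v : ℕ → ℝ → ℝ)
    (hsol : ∀ n, IsStatSol (χ n) a b μ ν L (u n) (v n))
    (hnc : ∀ n, NonConst L (u n))
    (hmono : ∀ n, ∀ x ∈ Ioo (0 : ℝ) L, deriv (u n) x ≤ 0)
    (hbig : a / b < Filter.liminf (fun n => u n 0) atTop)
    (hbdd : Filter.IsBoundedUnder (· ≤ ·) atTop (fun n => u n 0))
    (c d : ℝ) (hc : 0 < c) (hcd : c < d) (hdL : d < L)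
    (hsmall : Filter.limsup (fun n => sSup (u n '' Icc c d)) atTop < a / b) :
    ∀ K : Set ℝ, IsCompact K → K ⊆ Ioo (0 : ℝ) L →
      TendstoUniformlyOn (fun n => u n) (fun _ => (0 : ℝ)) atTop K := by
  classical
  have anti : ∀ n, AntitoneOn (u n) (Icc 0 L) := by
    intro n
    have hu2 := (hsol n).1
    apply antitoneOn_of_deriv_nonpos (convex_Icc 0 L) hu2.continuous.continuousOn
      (fun x _ => ((hu2.differentiable (by norm_num)) x).differentiableWithinAt)
    rw [interior_Icc]; exact hmono n
  have upos : ∀ n, ∀ x ∈ Icc (0:ℝ) L, 0 < u n x := fun n => (hsol n).2.2.1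
  have hcu : ∀ n, Continuous (u n) := fun n => (hsol n).1.continuous
  -- uniform bound M
  obtain ⟨M₀, hM₀⟩ := hbdd
  rw [Filter.eventually_map] at hM₀
  set M := max M₀ 1 with hMdef
  have hM1 : (0:ℝ) < M := lt_of_lt_of_le one_pos (le_max_right _ _)
  have hMev : ∀ᶠ n in atTop, u n 0 ≤ M := hM₀.mono fun n hn => le_trans hn (le_max_left _ _)
  -- the cap on [c, d]
  have hab : 0 < a / b := by positivity
  set δ := (a/b - Filter.limsup (fun n => sSup (u n '' Icc c d)) atTop)/2 with hδdef
  have hδ : 0 < δ := by rw [hδdef]; linarith [hsmall]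
  have hIcccd : Icc c d ⊆ Icc (0:ℝ) L := Icc_subset_Icc hc.le hdL.le
  have hSbd : Filter.IsBoundedUnder (· ≤ ·) atTop (fun n => sSup (u n '' Icc c d)) := by
    refine ⟨M, ?_⟩
    rw [Filter.eventually_map]
    filter_upwards [hMev] with n hn
    apply Real.sSup_le _ hM1.le
    rintro y ⟨x, hx, rfl⟩
    exact le_trans (anti n (left_mem_Icc.mpr hL.le) (hIcccd hx) (hIcccd hx).1) hn
  have capev : ∀ᶠ n in atTop, ∀ x ∈ Icc c d, u n x ≤ a/b - δ := by
    have h1 : ∀ᶠ n in atTop, sSup (u n '' Icc c d)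
        < Filter.limsup (fun n => sSup (u n '' Icc c d)) atTop + δ :=
      Filter.eventually_lt_of_limsup_lt (by rw [hδdef]; linarith [hsmall]) hSbd
    filter_upwards [h1] with n hn x hx
    have h2 : u n x ≤ sSup (u n '' Icc c d) :=
      le_csSup (isCompact_Icc.bddAbove_image ((hcu n).continuousOn)) (mem_image_of_mem _ hx)
    have h3 : Filter.limsup (fun n => sSup (u n '' Icc c d)) atTop + δ = a/b - δ := by
      rw [hδdef]; ring
    linarith
  -- extraction of frequent largeness from non-convergence
  have freq_of_not : ∀ α ∈ Icc (0:ℝ) L, ¬ Tendsto (fun n => u n α) atTop (𝓝 0) →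
      ∃ ε > 0, ∃ᶠ n in atTop, ε ≤ u n α := by
    intro α hα hT
    by_contra hcon
    push_neg at hcon
    apply hT
    rw [Metric.tendsto_atTop]
    intro ε hε
    have h2 := hcon ε hε
    rw [Filter.eventually_atTop] at h2
    obtain ⟨N, hN⟩ := h2
    refine ⟨N, fun n hn => ?_⟩
    have h3 := hN n hn
    rw [Real.dist_eq, sub_zero, abs_of_pos (upos n α hα)]
    exact h3
  -- STEP 1 : collapse to the right of c
  have step1 : ∀ α, α ∈ Ioo c L → Tendsto (fun n => u n α) atTop (𝓝 0) := by
    intro α hαIoo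
    by_contra hT
    have hα0 : 0 < α := lt_trans hc hαIoo.1
    have hαIcc : α ∈ Icc (0:ℝ) L := ⟨hα0.le, hαIoo.2.le⟩
    obtain ⟨ε, hε, hfreq⟩ := freq_of_not α hαIcc hT
    set h := min (min (α/4) c) (min ((α - c)/2) (α*ε*δ/(16*M^2))) with hhdef
    have hh : 0 < h := by
      apply lt_min (lt_min (by positivity) hc) (lt_min (by linarith [hαIoo.1]) (by positivity))
    have hhα4 : h ≤ α/4 := le_trans (min_le_left _ _) (min_le_left _ _)
    have hhc : h ≤ c := le_trans (min_le_left _ _) (min_le_right _ _)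
    have hhαc : h ≤ (α - c)/2 := le_trans (min_le_right _ _) (min_le_left _ _)
    have hh16 : h ≤ α*ε*δ/(16*M^2) := le_trans (min_le_right _ _) (min_le_right _ _)
    set et := min (ε/4) (δ/4) with hetdef
    have het : 0 < et := lt_min (by positivity) (by positivity)
    set Cd := (ν*M/μ) * (Real.log M - Real.log ε + L*(L*(b*M^2))/ε) with hCd
    have hev1 : ∀ᶠ n in atTop,
        (μ*(Cd*(χ n)⁻¹) + Real.sqrt (4*ν*M*(Cd*(χ n)⁻¹))/h)/ν < et := by
      have a1 : Tendsto (fun n => Cd*(χ n)⁻¹) atTop (𝓝 0) := tend_inv hχ Cd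
      have a2 : Tendsto (fun n => μ*(Cd*(χ n)⁻¹)) atTop (𝓝 0) := by
        simpa using a1.const_mul μ
      have a3 : Tendsto (fun n => 4*ν*M*(Cd*(χ n)⁻¹)) atTop (𝓝 0) := by
        simpa using a1.const_mul (4*ν*M)
      have a4 := tendsqrt a3
      have a5 := a4.div_const h
      have a6 := (a2.add a5).div_const ν
      have a7 : Tendsto (fun n =>
          (μ*(Cd*(χ n)⁻¹) + Real.sqrt (4*ν*M*(Cd*(χ n)⁻¹))/h)/ν) atTop (𝓝 0) := by
        simpa using a6
      exact a7.eventually_lt_const het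
    obtain ⟨n, hn1, hn2, hn3, hn4⟩ := (hfreq.and_eventually (hMev.and (capev.and hev1))).exists
    have P := mkPack ha hb hμ hν hL (hχpos n) (hsol n) (hmono n) hn2 hM1
    have hΔle : v n 0 - v n α ≤ Cd*(χ n)⁻¹ := by
      have h1 := logdrop P ha hb hμ hν (hχpos n) hαIcc hε hn1
      rw [hCd]
      exact h1
    have hΔ0' : 0 ≤ Cd*(χ n)⁻¹ := by
      have h1 : v n α ≤ v n 0 := P.anti_v (left_mem_Icc.mpr hL.le) hαIcc hα0.le
      linarith
    have hθle : ∀ x ∈ Icc (0:ℝ) α, -deriv (v n) x ≤ Real.sqrt (4*ν*M*(Cd*(χ n)⁻¹)) := by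
      intro x hx
      have g1 := gsq P hμ hν hαIcc x hx
      have g0 : (0:ℝ) ≤ 4*ν*M := by positivity
      have g2 : (-deriv (v n) x)^2 ≤ 4*ν*M*(Cd*(χ n)⁻¹) := by
        linarith [mul_le_mul_of_nonneg_left hΔle g0]
      have g3 : 0 ≤ -deriv (v n) x := by
        linarith [P.dv_nonpos x ⟨hx.1, le_trans hx.2 hαIcc.2⟩]
      calc -deriv (v n) x = Real.sqrt ((-deriv (v n) x)^2) := (Real.sqrt_sq g3).symm
      _ ≤ Real.sqrt (4*ν*M*(Cd*(χ n)⁻¹)) := Real.sqrt_le_sqrt g2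
    have he' : μ*(Cd*(χ n)⁻¹) + Real.sqrt (4*ν*M*(Cd*(χ n)⁻¹))/h ≤ ν*et := by
      rw [div_lt_iff₀ hν] at hn4
      linarith [hn4]
    have hh8 : 8*M^2*h < α*ε*δ := by
      rw [le_div_iff₀ (by positivity : (0:ℝ) < 16*M^2)] at hh16
      have h9 : 0 < α*ε*δ := by positivity
      linarith
    exact master1 P ha hb hμ hν hαIcc hh (by linarith) hε hn1 hθle hΔle hΔ0'
      (Real.sqrt_nonneg _) he' (by rw [hetdef]; linarith [min_le_left (ε/4) (δ/4)])
      (by rw [hetdef]; linarith [min_le_right (ε/4) (δ/4)]) hδ hhc (by linarith)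
      hcd.le hdL.le hn3 hh8
  -- monotone transfer and reduction to pointwise convergence
  suffices hpt : ∀ α ∈ Ioo (0:ℝ) L, Tendsto (fun n => u n α) atTop (𝓝 0) by
    intro K hK hKsub
    rcases K.eq_empty_or_nonempty with rfl | hKne
    · rw [Metric.tendstoUniformlyOn_iff]
      intro ε hε
      filter_upwards with n x hx
      exact absurd hx (notMem_empty x)
    · have hαK : sInf K ∈ K := hK.sInf_mem hKne
      have hαIoo := hKsub hαK
      have hT := hpt (sInf K) hαIoo
      rw [Metric.tendstoUniformlyOn_iff]
      intro ε hε
      have hev : ∀ᶠ n in atTop, u n (sInf K) < ε := hT.eventually_lt_const hε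
      filter_upwards [hev] with n hn x hx
      have hxIoo := hKsub hx
      have hxIcc : x ∈ Icc (0:ℝ) L := ⟨hxIoo.1.le, hxIoo.2.le⟩
      have hαIcc : sInf K ∈ Icc (0:ℝ) L := ⟨hαIoo.1.le, hαIoo.2.le⟩
      have hαx : sInf K ≤ x := csInf_le hK.bddBelow hx
      have h2 : u n x ≤ u n (sInf K) := anti n hαIcc hxIcc hαx
      have h3 : 0 < u n x := upos n x hxIcc
      rw [Real.dist_eq, zero_sub, abs_neg, abs_of_pos h3]
      linarith
  -- pointwise convergence everywhere on (0, L)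
  intro α₀ hα₀
  by_contra hTbad
  set N := {x : ℝ | x ∈ Ioo (0:ℝ) L ∧ ¬ Tendsto (fun n => u n x) atTop (𝓝 0)} with hNdef
  have hα₀N : α₀ ∈ N := ⟨hα₀, hTbad⟩
  have hNsub : ∀ x ∈ N, x ≤ c := by
    intro x hx
    by_contra hxc
    push_neg at hxc
    exact hx.2 (step1 x ⟨hxc, hx.1.2⟩)
  have hNbdd : BddAbove N := ⟨c, fun x hx => hNsub x hx⟩
  have htpos : 0 < sSup N := lt_of_lt_of_le hα₀.1 (le_csSup hNbdd hα₀N)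
  have htc : sSup N ≤ c := csSup_le ⟨α₀, hα₀N⟩ hNsub
  have hcL : c < L := lt_trans hcd hdL
  have htL : sSup N < L := lt_of_le_of_lt htc hcL
  have hright : ∀ y, sSup N < y → y < L → Tendsto (fun n => u n y) atTop (𝓝 0) := by
    intro y hy hyL
    by_contra hTy
    have hyN : y ∈ N := ⟨⟨lt_trans htpos hy, hyL⟩, hTy⟩
    linarith [le_csSup hNbdd hyN]
  -- budget constants
  set R := (L-c)*(ν*(3*a/(4*b))) with hRdef
  have hR0 : 0 < R := by
    apply mul_pos (by linarith) (by positivity)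
  set τ := min (R/5) (R/(10*(μ*(L*L)))) with hτdef
  have hτ0 : 0 < τ := lt_min (by positivity) (by positivity)
  have hτR5 : τ ≤ R/5 := min_le_left _ _
  have hτRQ : τ ≤ R/(10*(μ*(L*L))) := min_le_right _ _
  set γ := min ((sSup N)/2) (min ((L - sSup N)/2) (τ/(8*ν*M+1))) with hγdef
  have hγ0 : 0 < γ := by
    apply lt_min (by linarith) (lt_min (by linarith) (by positivity))
  have hγ2 : γ ≤ (L - sSup N)/2 := le_trans (min_le_right _ _) (min_le_left _ _)
  have hγ3 : γ ≤ τ/(8*ν*M+1) := le_trans (min_le_right _ _) (min_le_right _ _)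
  set ε' := τ/(4*(ν*L)+4) with hε'def
  have hε'0 : 0 < ε' := by rw [hε'def]; positivity
  -- pick the bad point α close below sSup N
  obtain ⟨α, hαN, hαgt⟩ := exists_lt_of_lt_csSup ⟨α₀, hα₀N⟩
    (show sSup N - γ < sSup N by linarith)
  have hαle : α ≤ sSup N := le_csSup hNbdd hαN
  have hαIoo : α ∈ Ioo (0:ℝ) L := hαN.1
  have hαIcc : α ∈ Icc (0:ℝ) L := ⟨hαIoo.1.le, hαIoo.2.le⟩
  have hαc : α ≤ c := le_trans hαle htc
  -- the good point just above sSup N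
  have hᾱL : sSup N + γ < L := by linarith [hγ2]
  have hTᾱ : Tendsto (fun n => u n (sSup N + γ)) atTop (𝓝 0) :=
    hright _ (by linarith) hᾱL
  obtain ⟨ε, hε, hfreq⟩ := freq_of_not α hαIcc hαN.2
  -- choice of h
  set h := min (α/4) (a*α*ε/(32*b*M^2)) with hhdef
  have hα0 : 0 < α := hαIoo.1
  have hh : 0 < h := lt_min (by positivity) (by positivity)
  have hhα4 : h ≤ α/4 := min_le_left _ _
  have hh32' : h ≤ a*α*ε/(32*b*M^2) := min_le_right _ _
  set et := min (ε/4) (a/(8*b)) with hetdef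
  have het : 0 < et := lt_min (by positivity) (by positivity)
  set Cd := (ν*M/μ) * (Real.log M - Real.log ε + L*(L*(b*M^2))/ε) with hCd
  -- eventual facts
  have hev1 : ∀ᶠ n in atTop,
      (μ*(Cd*(χ n)⁻¹) + Real.sqrt (4*ν*M*(Cd*(χ n)⁻¹))/h)/ν < et := by
    have a1 : Tendsto (fun n => Cd*(χ n)⁻¹) atTop (𝓝 0) := tend_inv hχ Cd
    have a2 : Tendsto (fun n => μ*(Cd*(χ n)⁻¹)) atTop (𝓝 0) := by
      simpa using a1.const_mul μ
    have a3 : Tendsto (fun n => 4*ν*M*(Cd*(χ n)⁻¹)) atTop (𝓝 0) := by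
      simpa using a1.const_mul (4*ν*M)
    have a4 := (tendsqrt a3).div_const h
    have a6 := (a2.add a4).div_const ν
    have a7 : Tendsto (fun n =>
        (μ*(Cd*(χ n)⁻¹) + Real.sqrt (4*ν*M*(Cd*(χ n)⁻¹))/h)/ν) atTop (𝓝 0) := by
      simpa using a6
    exact a7.eventually_lt_const het
  have hevθ : ∀ᶠ n in atTop, Real.sqrt (4*ν*M*(Cd*(χ n)⁻¹)) < τ/2 := by
    have a3 : Tendsto (fun n => 4*ν*M*(Cd*(χ n)⁻¹)) atTop (𝓝 0) := by
      simpa using (tend_inv hχ Cd).const_mul (4*ν*M)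
    exact (tendsqrt a3).eventually_lt_const (by positivity)
  have hevΔ : ∀ᶠ n in atTop, μ*L*(Cd*(χ n)⁻¹) < R/5 := by
    have a1 : Tendsto (fun n => μ*L*(Cd*(χ n)⁻¹)) atTop (𝓝 0) := by
      simpa using (tend_inv hχ Cd).const_mul (μ*L)
    exact a1.eventually_lt_const (by positivity)
  have hevᾱ : ∀ᶠ n in atTop, u n (sSup N + γ) < ε' := hTᾱ.eventually_lt_const hε'0
  obtain ⟨n, hn1, hn2, hn4, hnθ, hnΔ, hnᾱ⟩ :=
    (hfreq.and_eventually (hMev.and (hev1.and (hevθ.and (hevΔ.and hevᾱ))))).exists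
  have P := mkPack ha hb hμ hν hL (hχpos n) (hsol n) (hmono n) hn2 hM1
  have hΔle : v n 0 - v n α ≤ Cd*(χ n)⁻¹ := by
    have h1 := logdrop P ha hb hμ hν (hχpos n) hαIcc hε hn1
    rw [hCd]
    exact h1
  have hΔ0' : 0 ≤ Cd*(χ n)⁻¹ := by
    have h1 : v n α ≤ v n 0 := P.anti_v (left_mem_Icc.mpr hL.le) hαIcc hα0.le
    linarith
  have hθle : ∀ x ∈ Icc (0:ℝ) α, -deriv (v n) x ≤ Real.sqrt (4*ν*M*(Cd*(χ n)⁻¹)) := by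
    intro x hx
    have g1 := gsq P hμ hν hαIcc x hx
    have g0 : (0:ℝ) ≤ 4*ν*M := by positivity
    have g2 : (-deriv (v n) x)^2 ≤ 4*ν*M*(Cd*(χ n)⁻¹) := by
      linarith [mul_le_mul_of_nonneg_left hΔle g0]
    have g3 : 0 ≤ -deriv (v n) x := by
      linarith [P.dv_nonpos x ⟨hx.1, le_trans hx.2 hαIcc.2⟩]
    calc -deriv (v n) x = Real.sqrt ((-deriv (v n) x)^2) := (Real.sqrt_sq g3).symm
    _ ≤ Real.sqrt (4*ν*M*(Cd*(χ n)⁻¹)) := Real.sqrt_le_sqrt g2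
  have he' : μ*(Cd*(χ n)⁻¹) + Real.sqrt (4*ν*M*(Cd*(χ n)⁻¹))/h ≤ ν*et := by
    rw [div_lt_iff₀ hν] at hn4
    linarith [hn4]
  have hh32 : 32*(b*(M^2*h)) ≤ a*(α*ε) := by
    rw [le_div_iff₀ (by positivity : (0:ℝ) < 32*b*M^2)] at hh32'
    linarith [hh32']
  -- the numerical budget inequality for master2
  have hX : ν*((sSup N + γ - α)*M + L*ε') < τ/2 := by
    have hdist : sSup N + γ - α < 2*γ := by linarith only [hαgt]
    have b1 : ν*((sSup N + γ - α)*M) < τ/4 := by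
      have c1 : sSup N + γ - α < 2*(τ/(8*ν*M+1)) := by linarith only [hdist, hγ3]
      have c2 : ν*((sSup N + γ - α)*M) < ν*((2*(τ/(8*ν*M+1)))*M) :=
        mul_lt_mul_of_pos_left (mul_lt_mul_of_pos_right c1 hM1) hν
      have e1 : ν*((2*(τ/(8*ν*M+1)))*M) = (2*ν*M*τ)/(8*ν*M+1) := by ring
      have c3 : (2*ν*M*τ)/(8*ν*M+1) ≤ τ/4 := by
        rw [div_le_div_iff₀ (by positivity : (0:ℝ) < 8*ν*M+1) (by norm_num : (0:ℝ) < 4)]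
        linarith only [hτ0]
      rw [e1] at c2
      linarith only [c2, c3]
    have b2 : ν*(L*ε') ≤ τ/4 := by
      have e2 : ν*(L*ε') = (ν*L*τ)/(4*(ν*L)+4) := by rw [hε'def]; ring
      have c4 : (ν*L*τ)/(4*(ν*L)+4) ≤ τ/4 := by
        rw [div_le_div_iff₀ (by positivity : (0:ℝ) < 4*(ν*L)+4) (by norm_num : (0:ℝ) < 4)]
        linarith only [hτ0]
      rw [e2]
      exact c4
    linarith only [b1, b2]
  have hQX : μ*(L*L)*(Real.sqrt (4*ν*M*(Cd*(χ n)⁻¹)) + ν*((sSup N + γ - α)*M + L*ε'))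
      < R/10 := by
    have q1 : Real.sqrt (4*ν*M*(Cd*(χ n)⁻¹)) + ν*((sSup N + γ - α)*M + L*ε') < τ := by
      linarith only [hnθ, hX]
    have q2 : μ*(L*L)*(Real.sqrt (4*ν*M*(Cd*(χ n)⁻¹)) + ν*((sSup N + γ - α)*M + L*ε'))
        < μ*(L*L)*τ := mul_lt_mul_of_pos_left q1 (by positivity)
    have q3 : μ*(L*L)*τ ≤ μ*(L*L)*(R/(10*(μ*(L*L)))) :=
      mul_le_mul_of_nonneg_left hτRQ (by positivity)
    have q4 : μ*(L*L)*(R/(10*(μ*(L*L)))) = R/10 := by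
      field_simp
    linarith only [q2, q3, q4]
  have hbignum : Real.sqrt (4*ν*M*(Cd*(χ n)⁻¹)) + μ*L*(Cd*(χ n)⁻¹)
      + μ*(L*L)*(Real.sqrt (4*ν*M*(Cd*(χ n)⁻¹)) + ν*((sSup N + γ - α)*M + L*ε'))
      + ν*((sSup N + γ - α)*M + L*ε') < (L-c)*(ν*(3*a/(4*b))) := by
    rw [← hRdef]
    linarith only [hnθ, hnΔ, hQX, hX, hτR5, hR0]
  exact master2 P ha hb hμ hν hαIcc (by linarith only [hαle, hγ0] : α ≤ sSup N + γ)
    hᾱL.le hh (by linarith only [hhα4]) hε hn1 hθle hΔle hΔ0' (Real.sqrt_nonneg _) he'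
    (by rw [hetdef]; linarith only [min_le_left (ε/4) (a/(8*b))])
    (by
      have h9 : b * et ≤ b * (a/(8*b)) := by
        rw [hetdef]
        exact mul_le_mul_of_nonneg_left (min_le_right _ _) hb.le
      have e5 : b*(a/(8*b)) = a/8 := by field_simp
      linarith only [h9, e5])
    hh32 hε'0.le hnᾱ.le hαc hcL hbignum
end
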